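/- arXiv:2603.15465 — 5 statements merged into one kernel-verified Lean document; each statement's English description precedes it below -/
import Mathlib

section
/- A query plan P for an acyclic conjunctive query has width 1 if and only if there exists a join tree T of the query that induces P. -/
/-- A binary query plan: leaves are base relations, internal nodes are joins. -/
inductive Plan (ι : Type) : Type where
  | leaf : ι → Plan ι
  | node : Plan ι → Plan ι → Plan ι

namespace Plan

variable {ι : Type} [DecidableEq ι]

/-- The set of relations joined in (the subtree rooted at) a plan node. -/
def rels : Plan ι → Finset ι
  | .leaf i => {i}
  | .node l r => l.rels ∪ r.rels

/-- All nodes (subplans) of a plan. -/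
def subplans : Plan ι → List (Plan ι)
  | .leaf i => [.leaf i]
  | .node l r => .node l r :: (l.subplans ++ r.subplans)

/-- The list of leaf relations of a plan. -/
def leaves : Plan ι → List ι
  | .leaf i => [i]
  | .node l r => l.leaves ++ r.leaves

end Plan

variable {ι A : Type} [DecidableEq ι] [DecidableEq A]

/-- The attributes occurring in a set of relations, given a schema. -/
def attrs (sch : ι → Finset A) (S : Finset ι) : Finset A := S.biUnion sch

/-- The interface `I(p)` of a plan node `p`. -/
def interface (sch : ι → Finset A) (all : Finset ι) (p : Plan ι) : Finset A :=
  attrs sch p.rels ∩ attrs sch (all \ p.rels)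

/-- The width of a plan node. -/
noncomputable def nodeWidth (sch : ι → Finset A) (all : Finset ι) (p : Plan ι) : ℕ :=
  sInf {k | ∃ S ⊆ p.rels, S.card = k ∧ interface sch all p ⊆ attrs sch S}

/-- The width of a plan: the maximum width over all of its nodes. -/
noncomputable def planWidth (sch : ι → Finset A) (all : Finset ι) (P : Plan ι) : ℕ :=
  (P.subplans.map (nodeWidth sch all)).foldr max 0

/-- The connectedness condition for a tree on the relations, with attribute sets
given by the schema: for any two vertices, the intersection of their attribute
sets is contained in every vertex on the path between them. -/
def JoinTree (G : SimpleGraph ι) (sch : ι → Finset A) : Prop :=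
  G.IsTree ∧
    ∀ (p q : ι) (W : G.Walk p q), W.IsPath → ∀ s ∈ W.support, sch p ∩ sch q ⊆ sch s

/-- `x` lies in the subtree of the tree `G` (rooted at `r`) rooted at `p`:
every path from `x` to the root passes through `p`. -/
def inSubtree (G : SimpleGraph ι) (r p x : ι) : Prop :=
  ∀ W : G.Walk x r, W.IsPath → p ∈ W.support

/-- A query plan `P` is induced by the join tree `G` rooted at `r`:
(1) for every vertex `p` of the join tree there is a plan node whose induced
query (set of relations, hence join) is exactly the subtree of `p`; and
(2) for every internal plan node with children `u` and `v`, there are relations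
`s` in `u` and `t` in `v` covering the respective interfaces with `s` and `t`
adjacent in the join tree. -/
def Induces (G : SimpleGraph ι) (r : ι) (sch : ι → Finset A) (P : Plan ι) : Prop :=
  (∀ p : ι, ∃ q ∈ P.subplans, (↑(Plan.rels q) : Set ι) = {x | inSubtree G r p x}) ∧
  (∀ u v : Plan ι, Plan.node u v ∈ P.subplans →
    ∃ s ∈ u.rels, ∃ t ∈ v.rels,
      interface sch P.rels u ⊆ sch s ∧ interface sch P.rels v ⊆ sch t ∧ G.Adj s t)

set_option linter.unusedSectionVars false

namespace Plan
set_option linter.unusedSectionVars false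

theorem mem_subplans_self (q : Plan ι) : q ∈ q.subplans := by
  cases q <;> simp [subplans]

theorem mem_subplans_node {q l r : Plan ι} :
    q ∈ (Plan.node l r).subplans ↔ q = Plan.node l r ∨ q ∈ l.subplans ∨ q ∈ r.subplans := by
  simp [subplans]

theorem subplans_trans {q1 q2 q3 : Plan ι} (h12 : q1 ∈ q2.subplans) (h23 : q2 ∈ q3.subplans) :
    q1 ∈ q3.subplans := by
  induction q3 with
  | leaf i => simp [subplans] at h23 ⊢; subst h23; simpa [subplans] using h12
  | node l r ihl ihr =>
    rcases mem_subplans_node.1 h23 with rfl | h | h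
    · exact h12
    · exact mem_subplans_node.2 (Or.inr (Or.inl (ihl h)))
    · exact mem_subplans_node.2 (Or.inr (Or.inr (ihr h)))

theorem rels_subset {q1 q2 : Plan ι} (h : q1 ∈ q2.subplans) : q1.rels ⊆ q2.rels := by
  induction q2 with
  | leaf i => simp [subplans] at h; subst h; exact Finset.Subset.refl _
  | node l r ihl ihr =>
    rcases mem_subplans_node.1 h with rfl | h | h
    · exact Finset.Subset.refl _
    · exact (ihl h).trans (by simp [rels])
    · exact (ihr h).trans (by simp [rels])

theorem leaves_sublist {q1 q2 : Plan ι} (h : q1 ∈ q2.subplans) : q1.leaves.Sublist q2.leaves := by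
  induction q2 with
  | leaf i => simp [subplans] at h; subst h; exact List.Sublist.refl _
  | node l r ihl ihr =>
    rcases mem_subplans_node.1 h with rfl | h | h
    · exact List.Sublist.refl _
    · exact (ihl h).trans (List.sublist_append_left _ _)
    · exact (ihr h).trans (List.sublist_append_right _ _)

theorem leaves_length_pos (q : Plan ι) : 0 < q.leaves.length := by
  induction q with
  | leaf i => simp [leaves]
  | node l r ihl ihr => simp [leaves]; omega

theorem leaves_length_lt {q1 q2 : Plan ι} (h : q1 ∈ q2.subplans) :
    q1 = q2 ∨ q1.leaves.length < q2.leaves.length := by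
  induction q2 with
  | leaf i => simp [subplans] at h; exact Or.inl h
  | node l r ihl ihr =>
    rcases mem_subplans_node.1 h with rfl | h | h
    · exact Or.inl rfl
    · refine Or.inr ?_
      have := leaves_length_pos r
      rcases ihl h with rfl | hlt <;> simp [leaves] <;> omega
    · refine Or.inr ?_
      have := leaves_length_pos l
      rcases ihr h with rfl | hlt <;> simp [leaves] <;> omega

theorem subplans_antisymm {q1 q2 : Plan ι} (h12 : q1 ∈ q2.subplans) (h21 : q2 ∈ q1.subplans) :
    q1 = q2 := by
  rcases leaves_length_lt h12 with rfl | h1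
  · rfl
  · rcases leaves_length_lt h21 with rfl | h2
    · rfl
    · omega

theorem rels_eq_toFinset (q : Plan ι) : q.rels = q.leaves.toFinset := by
  induction q with
  | leaf i => simp [rels, leaves]
  | node l r ihl ihr => simp [rels, leaves, ihl, ihr]

theorem rels_nonempty (q : Plan ι) : q.rels.Nonempty := by
  induction q with
  | leaf i => simp [rels]
  | node l r ihl ihr => rw [rels]; exact ihl.mono (Finset.subset_union_left)

theorem disjoint_rels {l r : Plan ι} (h : (Plan.node l r).leaves.Nodup) :
    Disjoint l.rels r.rels := by
  simp only [leaves, List.nodup_append] at h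
  rw [rels_eq_toFinset, rels_eq_toFinset, Finset.disjoint_left]
  intro a hal har
  simp only [List.mem_toFinset] at hal har
  exact h.2.2 _ hal _ har rfl

theorem nodup_of_subplan {q P : Plan ι} (h : q ∈ P.subplans) (hn : P.leaves.Nodup) :
    q.leaves.Nodup := (leaves_sublist h).nodup hn

theorem leaf_mem_subplans {q : Plan ι} {x : ι} (h : x ∈ q.rels) : Plan.leaf x ∈ q.subplans := by
  induction q with
  | leaf i => simp [rels] at h; subst h; simp [subplans]
  | node l r ihl ihr =>
    simp only [rels, Finset.mem_union] at h
    rcases h with h | h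
    · exact mem_subplans_node.2 (Or.inr (Or.inl (ihl h)))
    · exact mem_subplans_node.2 (Or.inr (Or.inr (ihr h)))

theorem child_or_top {q P : Plan ι} (h : q ∈ P.subplans) :
    q = P ∨ ∃ u v, Plan.node u v ∈ P.subplans ∧ (q = u ∨ q = v) := by
  induction P with
  | leaf i => simp [subplans] at h; exact Or.inl h
  | node l r ihl ihr =>
    rcases mem_subplans_node.1 h with rfl | h | h
    · exact Or.inl rfl
    · rcases ihl h with hq | ⟨u, v, hm, hq⟩
      · exact Or.inr ⟨l, r, mem_subplans_self _, Or.inl hq⟩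
      · exact Or.inr ⟨u, v, mem_subplans_node.2 (Or.inr (Or.inl hm)), hq⟩
    · rcases ihr h with hq | ⟨u, v, hm, hq⟩
      · exact Or.inr ⟨l, r, mem_subplans_self _, Or.inr hq⟩
      · exact Or.inr ⟨u, v, mem_subplans_node.2 (Or.inr (Or.inr hm)), hq⟩

theorem laminar {P : Plan ι} (hn : P.leaves.Nodup) {q1 q2 : Plan ι}
    (h1 : q1 ∈ P.subplans) (h2 : q2 ∈ P.subplans) :
    Disjoint q1.rels q2.rels ∨ q1 ∈ q2.subplans ∨ q2 ∈ q1.subplans := by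
  induction P with
  | leaf i =>
    simp [subplans] at h1 h2; subst h1; subst h2
    exact Or.inr (Or.inl (mem_subplans_self _))
  | node l r ihl ihr =>
    have hnl : l.leaves.Nodup := nodup_of_subplan (q := l) (mem_subplans_node.2 (Or.inr (Or.inl (mem_subplans_self _)))) hn
    have hnr : r.leaves.Nodup := nodup_of_subplan (mem_subplans_node.2 (Or.inr (Or.inr (mem_subplans_self _)))) hn
    rcases mem_subplans_node.1 h1 with rfl | hl1 | hr1
    · exact Or.inr (Or.inr h2)
    · rcases mem_subplans_node.1 h2 with rfl | hl2 | hr2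
      · exact Or.inr (Or.inl h1)
      · exact ihl hnl hl1 hl2
      · exact Or.inl (Finset.disjoint_of_subset_left (rels_subset hl1)
          (Finset.disjoint_of_subset_right (rels_subset hr2) (disjoint_rels hn)))
    · rcases mem_subplans_node.1 h2 with rfl | hl2 | hr2
      · exact Or.inr (Or.inl h1)
      · exact Or.inl (Finset.disjoint_of_subset_left (rels_subset hr1)
          (Finset.disjoint_of_subset_right (rels_subset hl2) (disjoint_rels hn).symm))
      · exact ihr hnr hr1 hr2

end Plan

open Plan

section Constr

variable (sch : ι → Finset A) (all : Finset ι)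

theorem attrs_mono {S T : Finset ι} (h : S ⊆ T) : attrs sch S ⊆ attrs sch T := by
  intro a ha
  simp only [attrs, Finset.mem_biUnion] at ha ⊢
  obtain ⟨i, hi, hai⟩ := ha
  exact ⟨i, h hi, hai⟩

theorem sch_subset_attrs {S : Finset ι} {x : ι} (h : x ∈ S) : sch x ⊆ attrs sch S := by
  intro a ha
  simp only [attrs, Finset.mem_biUnion]
  exact ⟨x, h, ha⟩

/-- The guard vertex of a subplan. -/
def rho : Plan ι → ι
  | .leaf i => i
  | .node u v =>
      if interface sch all (Plan.node u v) ⊆ attrs sch u.rels then rho u else rho v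

theorem rho_mem (q : Plan ι) : rho sch all q ∈ q.rels := by
  induction q with
  | leaf i => simp [rho, rels]
  | node u v ihu ihv =>
    rw [rho]
    split
    · exact Finset.mem_union_left _ ihu
    · exact Finset.mem_union_right _ ihv

theorem rho_choice (u v : Plan ι) :
    rho sch all (Plan.node u v) = rho sch all u ∨ rho sch all (Plan.node u v) = rho sch all v := by
  rw [rho]; split
  · exact Or.inl rfl
  · exact Or.inr rfl

theorem interface_subset_rho {P : Plan ι}
    (hw : ∀ q ∈ P.subplans, ∃ s ∈ q.rels, interface sch all q ⊆ sch s)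
    {q : Plan ι} (hq : q ∈ P.subplans) : interface sch all q ⊆ sch (rho sch all q) := by
  induction q with
  | leaf i =>
    intro a ha
    simp only [interface, rels, Finset.mem_inter] at ha
    simpa [rho, attrs] using ha.1
  | node u v ihu ihv =>
    have hu : u ∈ P.subplans :=
      subplans_trans (mem_subplans_node.2 (Or.inr (Or.inl (mem_subplans_self u)))) hq
    have hv : v ∈ P.subplans :=
      subplans_trans (mem_subplans_node.2 (Or.inr (Or.inr (mem_subplans_self v)))) hq
    rw [rho]
    split
    · rename_i h
      refine subset_trans ?_ (ihu hu)
      intro a ha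
      have h1 : a ∈ attrs sch u.rels := h ha
      simp only [interface, Finset.mem_inter] at ha ⊢
      refine ⟨h1, ?_⟩
      refine attrs_mono sch ?_ ha.2
      exact Finset.sdiff_subset_sdiff (Finset.Subset.refl _) (by simp [rels])
    · rename_i h
      obtain ⟨s, hs, hcov⟩ := hw _ hq
      have hsv : s ∈ v.rels := by
        rcases Finset.mem_union.1 hs with h' | h'
        · exact absurd (hcov.trans (sch_subset_attrs sch h')) h
        · exact h'
      have h2 : interface sch all (Plan.node u v) ⊆ attrs sch v.rels :=
        hcov.trans (sch_subset_attrs sch hsv)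
      refine subset_trans ?_ (ihv hv)
      intro a ha
      have h1 : a ∈ attrs sch v.rels := h2 ha
      simp only [interface, Finset.mem_inter] at ha ⊢
      refine ⟨h1, ?_⟩
      refine attrs_mono sch ?_ ha.2
      exact Finset.sdiff_subset_sdiff (Finset.Subset.refl _) (by simp [rels])

/-- The join tree graph built from the plan. -/
def pg (P : Plan ι) : SimpleGraph ι :=
  SimpleGraph.fromRel fun x y =>
    ∃ u v, Plan.node u v ∈ P.subplans ∧ x = rho sch all u ∧ y = rho sch all v

theorem pg_adj {P : Plan ι} {x y : ι} :
    (pg sch all P).Adj x y ↔ x ≠ y ∧ ∃ u v, Plan.node u v ∈ P.subplans ∧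
      ((x = rho sch all u ∧ y = rho sch all v) ∨ (y = rho sch all u ∧ x = rho sch all v)) := by
  simp only [pg, SimpleGraph.fromRel_adj]
  constructor
  · rintro ⟨hne, ⟨u, v, hm, h1, h2⟩ | ⟨u, v, hm, h1, h2⟩⟩
    · exact ⟨hne, u, v, hm, Or.inl ⟨h1, h2⟩⟩
    · exact ⟨hne, u, v, hm, Or.inr ⟨h1, h2⟩⟩
  · rintro ⟨hne, u, v, hm, ⟨h1, h2⟩ | ⟨h1, h2⟩⟩
    · exact ⟨hne, Or.inl ⟨u, v, hm, h1, h2⟩⟩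
    · exact ⟨hne, Or.inr ⟨u, v, hm, h1, h2⟩⟩

theorem rho_eq_of_mem {q q' : Plan ι} (hn : q.leaves.Nodup) (h : q' ∈ q.subplans)
    (hmem : rho sch all q ∈ q'.rels) : rho sch all q = rho sch all q' := by
  induction q with
  | leaf i => simp [subplans] at h; subst h; rfl
  | node u v ihu ihv =>
    have hnu : u.leaves.Nodup :=
      nodup_of_subplan (mem_subplans_node.2 (Or.inr (Or.inl (mem_subplans_self u)))) hn
    have hnv : v.leaves.Nodup :=
      nodup_of_subplan (mem_subplans_node.2 (Or.inr (Or.inr (mem_subplans_self v)))) hn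
    rcases mem_subplans_node.1 h with rfl | h' | h'
    · rfl
    · rcases rho_choice sch all u v with he | he <;> rw [he] at hmem ⊢
      · exact ihu hnu h' hmem
      · exact absurd ((rels_subset h') hmem)
          (Finset.disjoint_right.1 (disjoint_rels hn) (rho_mem sch all v))
    · rcases rho_choice sch all u v with he | he <;> rw [he] at hmem ⊢
      · exact absurd ((rels_subset h') hmem)
          (Finset.disjoint_left.1 (disjoint_rels hn) (rho_mem sch all u))
      · exact ihv hnv h' hmem

end Constr

section Constr2

variable (sch : ι → Finset A) (all : Finset ι)

theorem nonempty_not_disjoint {c s t : Finset ι} (hcs : c ⊆ s) (hct : c ⊆ t)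
    (hc : c.Nonempty) (hd : Disjoint s t) : False := by
  obtain ⟨z, hz⟩ := hc
  exact (Finset.disjoint_left.1 hd (hcs hz)) (hct hz)

theorem two_parents_aux {P : Plan ι} (hn : P.leaves.Nodup) {u v a b c : Plan ι}
    (hq2 : Plan.node a b ∈ P.subplans)
    (hsub : Plan.node u v ∈ (Plan.node a b).subplans)
    (hc1 : c = u ∨ c = v) (hc2 : c = a ∨ c = b) : Plan.node u v = Plan.node a b := by
  have hdab : Disjoint a.rels b.rels := disjoint_rels (nodup_of_subplan hq2 hn)
  have hcuv : c ∈ (Plan.node u v).subplans := by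
    rcases hc1 with rfl | rfl
    · exact mem_subplans_node.2 (Or.inr (Or.inl (mem_subplans_self _)))
    · exact mem_subplans_node.2 (Or.inr (Or.inr (mem_subplans_self _)))
  have hLc : c.leaves.length < (Plan.node u v).leaves.length := by
    have h1 := leaves_length_pos u
    have h2 := leaves_length_pos v
    rcases hc1 with rfl | rfl <;> simp [leaves] <;> omega
  rcases mem_subplans_node.1 hsub with h | h | h
  · exact h
  · -- node u v ∈ subplans a
    have hL : (Plan.node u v).leaves.length ≤ a.leaves.length := by
      rcases leaves_length_lt h with h' | h'
      · rw [h']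
      · omega
    rcases hc2 with rfl | rfl
    · omega
    · exact absurd hdab (fun hd => nonempty_not_disjoint
        ((rels_subset hcuv).trans (rels_subset h)) (Finset.Subset.refl _)
        (rels_nonempty c) hd)
  · -- node u v ∈ subplans b
    have hL : (Plan.node u v).leaves.length ≤ b.leaves.length := by
      rcases leaves_length_lt h with h' | h'
      · rw [h']
      · omega
    rcases hc2 with rfl | rfl
    · exact absurd hdab (fun hd => nonempty_not_disjoint
        ((rels_subset hcuv).trans (rels_subset h)) (Finset.Subset.refl _)
        (rels_nonempty c) hd.symm)
    · omega

theorem two_parents {P : Plan ι} (hn : P.leaves.Nodup) {u v a b c : Plan ι}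
    (hq1 : Plan.node u v ∈ P.subplans) (hq2 : Plan.node a b ∈ P.subplans)
    (hc1 : c = u ∨ c = v) (hc2 : c = a ∨ c = b) : Plan.node u v = Plan.node a b := by
  have hcuv : c ∈ (Plan.node u v).subplans := by
    rcases hc1 with rfl | rfl
    · exact mem_subplans_node.2 (Or.inr (Or.inl (mem_subplans_self _)))
    · exact mem_subplans_node.2 (Or.inr (Or.inr (mem_subplans_self _)))
  have hcab : c ∈ (Plan.node a b).subplans := by
    rcases hc2 with rfl | rfl
    · exact mem_subplans_node.2 (Or.inr (Or.inl (mem_subplans_self _)))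
    · exact mem_subplans_node.2 (Or.inr (Or.inr (mem_subplans_self _)))
  rcases laminar hn hq1 hq2 with hd | h | h
  · exact absurd hd (fun hd => nonempty_not_disjoint (rels_subset hcuv) (rels_subset hcab)
      (rels_nonempty c) hd)
  · exact two_parents_aux hn hq2 h hc1 hc2
  · exact (two_parents_aux hn hq1 h hc2 hc1).symm

theorem ancestor {P : Plan ι} (hn : P.leaves.Nodup) {u v a c : Plan ι}
    (hq : Plan.node u v ∈ P.subplans) (ha : a ∈ P.subplans)
    (hcs : c = u ∨ c = v) (hc : c ∈ a.subplans) (hne : a ≠ c) :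
    Plan.node u v ∈ a.subplans := by
  have hduv : Disjoint u.rels v.rels := disjoint_rels (nodup_of_subplan hq hn)
  have hcuv : c ∈ (Plan.node u v).subplans := by
    rcases hcs with rfl | rfl
    · exact mem_subplans_node.2 (Or.inr (Or.inl (mem_subplans_self _)))
    · exact mem_subplans_node.2 (Or.inr (Or.inr (mem_subplans_self _)))
  rcases laminar hn hq ha with hd | h | h
  · exact absurd hd (fun hd => nonempty_not_disjoint (rels_subset hcuv)
      ((rels_subset hc)) (rels_nonempty c) hd)
  · exact h
  · rcases mem_subplans_node.1 h with rfl | h' | h'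
    · exact mem_subplans_self _
    · -- a ∈ subplans u
      rcases hcs with rfl | rfl
      · exact absurd (subplans_antisymm h' hc) hne
      · exact absurd hduv (fun hd => nonempty_not_disjoint
          ((rels_subset hc).trans (rels_subset h')) (Finset.Subset.refl _)
          (rels_nonempty c) hd)
    · -- a ∈ subplans v
      rcases hcs with rfl | rfl
      · exact absurd hduv (fun hd => nonempty_not_disjoint
          ((rels_subset hc).trans (rels_subset h')) (Finset.Subset.refl _)
          (rels_nonempty c) hd.symm)
      · exact absurd (subplans_antisymm h' hc) hne

end Constr2

section Bdry

variable (sch : ι → Finset A) (all : Finset ι)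

theorem boundary {P : Plan ι} (hn : P.leaves.Nodup) {u v c d : Plan ι}
    (hq : Plan.node u v ∈ P.subplans)
    (hcd : (c = u ∧ d = v) ∨ (c = v ∧ d = u))
    (hrho : rho sch all (Plan.node u v) ∉ c.rels)
    {x y : ι} (hadj : (pg sch all P).Adj x y) (hx : x ∈ c.rels) :
    y ∈ c.rels ∨ (x = rho sch all c ∧ y = rho sch all d) := by
  by_cases hy : y ∈ c.rels
  · exact Or.inl hy
  refine Or.inr ?_
  have hcs : c = u ∨ c = v := by
    rcases hcd with ⟨rfl, _⟩ | ⟨rfl, _⟩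
    · exact Or.inl rfl
    · exact Or.inr rfl
  have hcP : c ∈ P.subplans := by
    rcases hcs with rfl | rfl
    · exact subplans_trans (mem_subplans_node.2 (Or.inr (Or.inl (mem_subplans_self _)))) hq
    · exact subplans_trans (mem_subplans_node.2 (Or.inr (Or.inr (mem_subplans_self _)))) hq
  obtain ⟨hne, a, b, hab, hor⟩ := (pg_adj sch all).1 hadj
  have haP : a ∈ P.subplans :=
    subplans_trans (mem_subplans_node.2 (Or.inr (Or.inl (mem_subplans_self _)))) hab
  have hbP : b ∈ P.subplans :=
    subplans_trans (mem_subplans_node.2 (Or.inr (Or.inr (mem_subplans_self _)))) hab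
  have hdab : Disjoint a.rels b.rels := disjoint_rels (nodup_of_subplan hab hn)
  -- generic "s1 is the x-side" argument
  have key : ∀ s1 s2 : Plan ι, ((s1 = a ∧ s2 = b) ∨ (s1 = b ∧ s2 = a)) →
      x = rho sch all s1 → y = rho sch all s2 → c ∈ s1.subplans →
      x = rho sch all c ∧ y = rho sch all d := by
    intro s1 s2 hss hx1 hy2 hc1
    have hs1P : s1 ∈ P.subplans := by
      rcases hss with ⟨rfl, _⟩ | ⟨rfl, _⟩
      · exact haP
      · exact hbP
    have hn1 : s1.leaves.Nodup := nodup_of_subplan hs1P hn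
    have hx0 : rho sch all s1 ∈ c.rels := hx1 ▸ hx
    have hrr : rho sch all s1 = rho sch all c := rho_eq_of_mem sch all hn1 hc1 hx0
    by_cases hac : s1 = c
    · -- two parents
      have hc2 : c = a ∨ c = b := by
        rcases hss with ⟨h1, _⟩ | ⟨h1, _⟩
        · exact Or.inl (hac ▸ h1.symm ▸ rfl)
        · exact Or.inr (hac ▸ h1.symm ▸ rfl)
      have heq := two_parents hn hq hab hcs hc2
      injection heq with h1 h2
      subst h1; subst h2
      rcases hcd with ⟨rfl, rfl⟩ | ⟨rfl, rfl⟩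
      · -- c = a, d = b
        rcases hss with ⟨rfl, rfl⟩ | ⟨h1, h2⟩
        · exact ⟨hx1, hy2⟩
        · -- s1 = b, c = s1 means c = b; but c = a: contradiction
          exfalso
          exact nonempty_not_disjoint (Finset.Subset.refl _)
            (by rw [← hac, h1]) (rels_nonempty c) hdab
      · -- c = b, d = a
        rcases hss with ⟨h1, h2⟩ | ⟨rfl, rfl⟩
        · exfalso
          exact nonempty_not_disjoint (by rw [← hac, h1]) (Finset.Subset.refl _)
            (rels_nonempty c) hdab
        · exact ⟨hx1, hy2⟩
    · -- s1 strictly above c : contradiction with hrho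
      have hanc : Plan.node u v ∈ s1.subplans :=
        ancestor hn hq hs1P hcs hc1 hac
      have hcuv : c ∈ (Plan.node u v).subplans := by
        rcases hcs with rfl | rfl
        · exact mem_subplans_node.2 (Or.inr (Or.inl (mem_subplans_self _)))
        · exact mem_subplans_node.2 (Or.inr (Or.inr (mem_subplans_self _)))
      have h3 : rho sch all s1 ∈ (Plan.node u v).rels := (rels_subset hcuv) hx0
      have h4 : rho sch all s1 = rho sch all (Plan.node u v) :=
        rho_eq_of_mem sch all hn1 hanc h3
      exact absurd (h4 ▸ hx0) hrho
  rcases hor with ⟨hx1, hy2⟩ | ⟨hy2, hx1⟩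
  · -- x = rho a, y = rho b
    rcases laminar hn hab hcP with hd | h | h
    · exact absurd hd (fun hd => nonempty_not_disjoint
        (Finset.singleton_subset_iff.2 ((rels_subset (mem_subplans_node.2 (Or.inr (Or.inl (mem_subplans_self a))))) (hx1 ▸ rho_mem sch all a)))
        (Finset.singleton_subset_iff.2 hx) (Finset.singleton_nonempty x) hd)
    · exact absurd ((rels_subset h) ((rels_subset (mem_subplans_node.2 (Or.inr (Or.inr (mem_subplans_self b))))) (hy2 ▸ rho_mem sch all b))) hy
    · rcases mem_subplans_node.1 h with rfl | h' | h'
      · exact absurd ((rels_subset (mem_subplans_node.2 (Or.inr (Or.inr (mem_subplans_self b))))) (hy2 ▸ rho_mem sch all b)) hy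
      · exact key a b (Or.inl ⟨rfl, rfl⟩) hx1 hy2 h'
      · exact absurd hdab (fun hd => nonempty_not_disjoint
          (Finset.singleton_subset_iff.2 (hx1 ▸ rho_mem sch all a))
          (Finset.singleton_subset_iff.2 ((rels_subset h') hx))
          (Finset.singleton_nonempty x) hd)
  · -- y = rho a, x = rho b
    rcases laminar hn hab hcP with hd | h | h
    · exact absurd hd (fun hd => nonempty_not_disjoint
        (Finset.singleton_subset_iff.2 ((rels_subset (mem_subplans_node.2 (Or.inr (Or.inr (mem_subplans_self b))))) (hx1 ▸ rho_mem sch all b)))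
        (Finset.singleton_subset_iff.2 hx) (Finset.singleton_nonempty x) hd)
    · exact absurd ((rels_subset h) ((rels_subset (mem_subplans_node.2 (Or.inr (Or.inl (mem_subplans_self a))))) (hy2 ▸ rho_mem sch all a))) hy
    · rcases mem_subplans_node.1 h with rfl | h' | h'
      · exact absurd ((rels_subset (mem_subplans_node.2 (Or.inr (Or.inl (mem_subplans_self a))))) (hy2 ▸ rho_mem sch all a)) hy
      · exact absurd hdab (fun hd => nonempty_not_disjoint
          (Finset.singleton_subset_iff.2 ((rels_subset h') hx))
          (Finset.singleton_subset_iff.2 (hx1 ▸ rho_mem sch all b))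
          (Finset.singleton_nonempty x) hd)
      · exact key b a (Or.inr ⟨rfl, rfl⟩) hx1 hy2 h'

end Bdry

section Walks

variable (sch : ι → Finset A) (all : Finset ι)

theorem walk_stay {H : SimpleGraph ι} {S : Finset ι}
    (hS : ∀ x y, H.Adj x y → x ∈ S → y ∈ S) {a b : ι} (W : H.Walk a b) (ha : a ∈ S) :
    b ∈ S := by
  induction W with
  | nil => exact ha
  | cons h p ih => exact ih (hS _ _ h ha)

theorem walk_exit {H : SimpleGraph ι} {S : Finset ι} {z : ι}
    (hS : ∀ x y, H.Adj x y → x ∈ S → y ∈ S ∨ x = z) {a b : ι} (W : H.Walk a b)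
    (ha : a ∈ S) (hb : b ∉ S) : z ∈ W.support := by
  induction W with
  | nil => exact absurd ha hb
  | @cons a c b h p ih =>
    rcases hS _ _ h ha with hc | rfl
    · rw [SimpleGraph.Walk.support_cons]
      exact List.mem_cons_of_mem _ (ih hc hb)
    · exact SimpleGraph.Walk.start_mem_support _

theorem pg_acyclic {P : Plan ι} (hn : P.leaves.Nodup) : (pg sch all P).IsAcyclic := by
  rw [SimpleGraph.isAcyclic_iff_forall_edge_isBridge]
  intro e he
  induction e with
  | _ x y =>
    rw [SimpleGraph.mem_edgeSet] at he
    rw [SimpleGraph.isBridge_iff]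
    refine ?_
    obtain ⟨hne, u, v, hab, hor⟩ := (pg_adj sch all).1 he
    -- pick the non-root side
    have hduv : Disjoint u.rels v.rels := disjoint_rels (nodup_of_subplan hab hn)
    -- a generic claim
    have main : ∀ c d : Plan ι, (c = u ∧ d = v) ∨ (c = v ∧ d = u) →
        rho sch all (Plan.node u v) ∉ c.rels →
        ¬ ((pg sch all P) \ SimpleGraph.fromEdgeSet {s(rho sch all c, rho sch all d)}).Reachable
          (rho sch all c) (rho sch all d) := by
      intro c d hcd hrho hreach
      obtain ⟨W⟩ := hreach
      have hstay : ∀ p q : ι,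
          ((pg sch all P) \ SimpleGraph.fromEdgeSet {s(rho sch all c, rho sch all d)}).Adj p q →
          p ∈ c.rels → q ∈ c.rels := by
        intro p q hpq hp
        rw [SimpleGraph.sdiff_adj] at hpq
        rcases boundary sch all hn hab hcd hrho hpq.1 hp with h | ⟨rfl, rfl⟩
        · exact h
        · exact absurd (by rw [SimpleGraph.fromEdgeSet_adj]; exact ⟨rfl, hpq.1.ne⟩) hpq.2
      have : rho sch all d ∈ c.rels := walk_stay hstay W (rho_mem sch all c)
      have hdc : Disjoint c.rels d.rels := by
        rcases hcd with ⟨rfl, rfl⟩ | ⟨rfl, rfl⟩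
        · exact hduv
        · exact hduv.symm
      exact (Finset.disjoint_right.1 hdc (rho_mem sch all d)) this
    rcases rho_choice sch all u v with hch | hch
    · -- root side u; non-root side v
      have hrho : rho sch all (Plan.node u v) ∉ v.rels := by
        rw [hch]
        exact Finset.disjoint_left.1 hduv (rho_mem sch all u)
      have hmain := main v u (Or.inr ⟨rfl, rfl⟩) hrho
      rcases hor with ⟨rfl, rfl⟩ | ⟨rfl, rfl⟩
      · intro hreach
        rw [Sym2.eq_swap] at hreach
        exact hmain (by rwa [SimpleGraph.reachable_comm] at hreach)
      · exact hmain
    · -- root side v; non-root side u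
      have hrho : rho sch all (Plan.node u v) ∉ u.rels := by
        rw [hch]
        exact Finset.disjoint_right.1 hduv (rho_mem sch all v)
      have hmain := main u v (Or.inl ⟨rfl, rfl⟩) hrho
      rcases hor with ⟨rfl, rfl⟩ | ⟨rfl, rfl⟩
      · exact hmain
      · intro hreach
        rw [Sym2.eq_swap] at hreach
        exact hmain (by rwa [SimpleGraph.reachable_comm] at hreach)

end Walks

section WTR

variable (sch : ι → Finset A) (all : Finset ι)

theorem wtr {P : Plan ι} (hn : P.leaves.Nodup)
    (hg : ∀ q ∈ P.subplans, interface sch all q ⊆ sch (rho sch all q)) :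
    ∀ q, q ∈ P.subplans → ∀ x ∈ q.rels,
      ∃ W : (pg sch all P).Walk x (rho sch all q), W.IsPath ∧
        (∀ s ∈ W.support, s ∈ q.rels ∧ ∃ q' ∈ q.subplans, x ∈ q'.rels ∧ s = rho sch all q') ∧
        (∀ a ∈ sch x, a ∈ attrs sch (all \ q.rels) → ∀ s ∈ W.support, a ∈ sch s) := by
  intro q
  induction q with
  | leaf i =>
    intro hq x hx
    simp only [Plan.rels, Finset.mem_singleton] at hx
    subst hx
    refine ⟨SimpleGraph.Walk.nil, SimpleGraph.Walk.IsPath.nil, ?_, ?_⟩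
    · intro s hs
      have hs : s = x := List.mem_singleton.1 hs
      rw [hs]
      exact ⟨by simp [Plan.rels], Plan.leaf x, mem_subplans_self _, by simp [Plan.rels], rfl⟩
    · intro a ha _ s hs
      have hs : s = x := List.mem_singleton.1 hs
      rw [hs]
      exact ha
  | node u v ihu ihv =>
    intro hq x hx
    have hu : u ∈ P.subplans :=
      subplans_trans (mem_subplans_node.2 (Or.inr (Or.inl (mem_subplans_self u)))) hq
    have hv : v ∈ P.subplans :=
      subplans_trans (mem_subplans_node.2 (Or.inr (Or.inr (mem_subplans_self v)))) hq
    have hduv : Disjoint u.rels v.rels := disjoint_rels (nodup_of_subplan hq hn)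
    have hsub_u : u.rels ⊆ (Plan.node u v).rels := by simp [Plan.rels]
    have hsub_v : v.rels ⊆ (Plan.node u v).rels := by simp [Plan.rels]
    have hsdiff_u : all \ (Plan.node u v).rels ⊆ all \ u.rels :=
      Finset.sdiff_subset_sdiff (Finset.Subset.refl _) hsub_u
    have hsdiff_v : all \ (Plan.node u v).rels ⊆ all \ v.rels :=
      Finset.sdiff_subset_sdiff (Finset.Subset.refl _) hsub_v
    -- a generic combination: root side c, other side e
    have main : ∀ c e : Plan ι,
        c ∈ (Plan.node u v).subplans → e ∈ (Plan.node u v).subplans →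
        c.rels ⊆ (Plan.node u v).rels → e.rels ⊆ (Plan.node u v).rels →
        Disjoint c.rels e.rels →
        (∀ x ∈ c.rels, ∃ W : (pg sch all P).Walk x (rho sch all c), W.IsPath ∧
          (∀ s ∈ W.support, s ∈ c.rels ∧ ∃ q' ∈ c.subplans, x ∈ q'.rels ∧ s = rho sch all q') ∧
          (∀ a ∈ sch x, a ∈ attrs sch (all \ c.rels) → ∀ s ∈ W.support, a ∈ sch s)) →
        (∀ x ∈ e.rels, ∃ W : (pg sch all P).Walk x (rho sch all e), W.IsPath ∧
          (∀ s ∈ W.support, s ∈ e.rels ∧ ∃ q' ∈ e.subplans, x ∈ q'.rels ∧ s = rho sch all q') ∧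
          (∀ a ∈ sch x, a ∈ attrs sch (all \ e.rels) → ∀ s ∈ W.support, a ∈ sch s)) →
        (pg sch all P).Adj (rho sch all e) (rho sch all c) →
        rho sch all (Plan.node u v) = rho sch all c →
        (x ∈ c.rels ∨ x ∈ e.rels) →
        ∃ W : (pg sch all P).Walk x (rho sch all (Plan.node u v)), W.IsPath ∧
          (∀ s ∈ W.support, s ∈ (Plan.node u v).rels ∧
            ∃ q' ∈ (Plan.node u v).subplans, x ∈ q'.rels ∧ s = rho sch all q') ∧
          (∀ a ∈ sch x, a ∈ attrs sch (all \ (Plan.node u v).rels) → ∀ s ∈ W.support, a ∈ sch s) := by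
      intro c e hmc hme hcsub hesub hdisj ihc ihe hadj hch hxm
      rw [hch]
      have hsdc : all \ (Plan.node u v).rels ⊆ all \ c.rels :=
        Finset.sdiff_subset_sdiff (Finset.Subset.refl _) hcsub
      have hsde : all \ (Plan.node u v).rels ⊆ all \ e.rels :=
        Finset.sdiff_subset_sdiff (Finset.Subset.refl _) hesub
      rcases hxm with hxc | hxe
      · obtain ⟨W, hWp, hWs, hWa⟩ := ihc x hxc
        refine ⟨W, hWp, ?_, ?_⟩
        · intro s hs
          obtain ⟨hs1, q', hq', hxq', hsq'⟩ := hWs s hs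
          exact ⟨hcsub hs1, q', subplans_trans hq' hmc, hxq', hsq'⟩
        · intro a ha1 ha2 s hs
          exact hWa a ha1 (attrs_mono sch hsdc ha2) s hs
      · obtain ⟨W, hWp, hWs, hWa⟩ := ihe x hxe
        refine ⟨W.concat hadj, ?_, ?_, ?_⟩
        · rw [SimpleGraph.Walk.isPath_def, SimpleGraph.Walk.support_concat,
            List.nodup_append]
          refine ⟨hWp.support_nodup, List.nodup_singleton _, ?_⟩
          intro s hs t hs' hst
          rw [List.mem_singleton] at hs'
          subst hs'; subst hst
          exact (Finset.disjoint_right.1 hdisj (hWs _ hs).1) (rho_mem sch all c)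
        · intro s hs
          rw [SimpleGraph.Walk.support_concat, List.mem_append,
            List.mem_singleton] at hs
          rcases hs with hs | rfl
          · obtain ⟨hs1, q', hq', hxq', hsq'⟩ := hWs s hs
            exact ⟨hesub hs1, q', subplans_trans hq' hme, hxq', hsq'⟩
          · exact ⟨hcsub (rho_mem sch all c), Plan.node u v, mem_subplans_self _,
              hesub hxe, hch.symm⟩
        · intro a ha1 ha2 s hs
          rw [SimpleGraph.Walk.support_concat, List.mem_append,
            List.mem_singleton] at hs
          rcases hs with hs | rfl
          · exact hWa a ha1 (attrs_mono sch hsde ha2) s hs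
          · have hint : a ∈ interface sch all (Plan.node u v) := by
              rw [interface, Finset.mem_inter]
              exact ⟨(sch_subset_attrs sch (hesub hxe)) ha1, ha2⟩
            have := (hg _ hq) hint
            rwa [hch] at this
    have hmemu : u ∈ (Plan.node u v).subplans :=
      mem_subplans_node.2 (Or.inr (Or.inl (mem_subplans_self u)))
    have hmemv : v ∈ (Plan.node u v).subplans :=
      mem_subplans_node.2 (Or.inr (Or.inr (mem_subplans_self v)))
    have hneuv : rho sch all u ≠ rho sch all v := by
      intro h
      exact Finset.disjoint_left.1 hduv (rho_mem sch all u) (h ▸ rho_mem sch all v)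
    have hxm := Finset.mem_union.1 hx
    rcases rho_choice sch all u v with hch | hch
    · refine main u v hmemu hmemv hsub_u hsub_v hduv (ihu hu) (ihv hv) ?_ hch hxm
      exact (pg_adj sch all).2 ⟨hneuv.symm, u, v, hq, Or.inr ⟨rfl, rfl⟩⟩
    · refine main v u hmemv hmemu hsub_v hsub_u hduv.symm (ihv hv) (ihu hu) ?_ hch hxm.symm
      exact (pg_adj sch all).2 ⟨hneuv, u, v, hq, Or.inl ⟨rfl, rfl⟩⟩

end WTR

section PB

variable (sch : ι → Finset A) (all : Finset ι)

theorem pb {P : Plan ι} (hn : P.leaves.Nodup) (hPall : P.rels ⊆ all)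
    (hg : ∀ q ∈ P.subplans, interface sch all q ⊆ sch (rho sch all q)) :
    ∀ q, q ∈ P.subplans → ∀ x ∈ q.rels, ∀ y ∈ q.rels,
      ∃ W : (pg sch all P).Walk x y, W.IsPath ∧
        ∀ a, a ∈ sch x → a ∈ sch y → ∀ s ∈ W.support, a ∈ sch s := by
  intro q
  induction q with
  | leaf i =>
    intro hq x hx y hy
    simp only [Plan.rels, Finset.mem_singleton] at hx hy
    rw [hx, ← hy] at *
    refine ⟨SimpleGraph.Walk.nil, SimpleGraph.Walk.IsPath.nil, ?_⟩
    intro a ha _ s hs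
    simp only [SimpleGraph.Walk.support_nil, List.mem_singleton] at hs
    rw [hs]
    exact ha
  | node u v ihu ihv =>
    intro hq x hx y hy
    have hu : u ∈ P.subplans :=
      subplans_trans (mem_subplans_node.2 (Or.inr (Or.inl (mem_subplans_self u)))) hq
    have hv : v ∈ P.subplans :=
      subplans_trans (mem_subplans_node.2 (Or.inr (Or.inr (mem_subplans_self v)))) hq
    have hduv : Disjoint u.rels v.rels := disjoint_rels (nodup_of_subplan hq hn)
    have hneuv : rho sch all u ≠ rho sch all v := by
      intro h
      exact Finset.disjoint_left.1 hduv (rho_mem sch all u) (h ▸ rho_mem sch all v)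
    have main : ∀ c e : Plan ι, c ∈ P.subplans → e ∈ P.subplans →
        Disjoint c.rels e.rels →
        (pg sch all P).Adj (rho sch all c) (rho sch all e) →
        x ∈ c.rels → y ∈ e.rels →
        ∃ W : (pg sch all P).Walk x y, W.IsPath ∧
          ∀ a, a ∈ sch x → a ∈ sch y → ∀ s ∈ W.support, a ∈ sch s := by
      intro c e hcP heP hdisj hadj hxc hye
      obtain ⟨Wx, hWxp, hWxs, hWxa⟩ := wtr sch all hn hg c hcP x hxc
      obtain ⟨Wy, hWyp, hWys, hWya⟩ := wtr sch all hn hg e heP y hye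
      refine ⟨Wx.append (SimpleGraph.Walk.cons hadj Wy.reverse), ?_, ?_⟩
      · rw [SimpleGraph.Walk.isPath_def, SimpleGraph.Walk.support_append,
          SimpleGraph.Walk.support_cons, List.tail_cons, SimpleGraph.Walk.support_reverse,
          List.nodup_append]
        refine ⟨hWxp.support_nodup, List.nodup_reverse.2 hWyp.support_nodup, ?_⟩
        intro s hs t hs' hst; subst hst
        rw [List.mem_reverse] at hs'
        exact Finset.disjoint_left.1 hdisj (hWxs s hs).1 (hWys s hs').1
      · intro a hax hay s hs
        rw [SimpleGraph.Walk.support_append, SimpleGraph.Walk.support_cons, List.tail_cons,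
          SimpleGraph.Walk.support_reverse, List.mem_append, List.mem_reverse] at hs
        have hyall : y ∈ all := hPall ((rels_subset heP) hye)
        have hxall : x ∈ all := hPall ((rels_subset hcP) hxc)
        rcases hs with hs | hs
        · refine hWxa a hax ?_ s hs
          rw [attrs, Finset.mem_biUnion]
          exact ⟨y, Finset.mem_sdiff.2 ⟨hyall, Finset.disjoint_right.1 hdisj hye⟩, hay⟩
        · refine hWya a hay ?_ s hs
          rw [attrs, Finset.mem_biUnion]
          exact ⟨x, Finset.mem_sdiff.2 ⟨hxall, Finset.disjoint_left.1 hdisj hxc⟩, hax⟩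
    rcases Finset.mem_union.1 hx with hxu | hxv <;> rcases Finset.mem_union.1 hy with hyu | hyv
    · exact ihu hu x hxu y hyu
    · exact main u v hu hv hduv
        ((pg_adj sch all).2 ⟨hneuv, u, v, hq, Or.inl ⟨rfl, rfl⟩⟩) hxu hyv
    · exact main v u hv hu hduv.symm
        ((pg_adj sch all).2 ⟨hneuv.symm, u, v, hq, Or.inr ⟨rfl, rfl⟩⟩) hxv hyu
    · exact ihv hv x hxv y hyv

end PB

section Glue

theorem le_foldr_max {l : List ℕ} {a : ℕ} (h : a ∈ l) : a ≤ l.foldr max 0 := by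
  induction l with
  | nil => simp at h
  | cons b t ih =>
    rcases List.mem_cons.1 h with rfl | h
    · exact le_max_left _ _
    · exact le_trans (ih h) (le_max_right _ _)

theorem foldr_max_le {l : List ℕ} {n : ℕ} (h : ∀ a ∈ l, a ≤ n) : l.foldr max 0 ≤ n := by
  induction l with
  | nil => simp
  | cons b t ih =>
    exact max_le (h b (List.mem_cons_self)) (ih (fun a ha => h a (List.mem_cons_of_mem _ ha)))

theorem list_exists_max {α : Type*} (f : α → ℕ) :
    ∀ l : List α, l ≠ [] → ∃ m ∈ l, ∀ b ∈ l, f b ≤ f m := by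
  intro l
  induction l with
  | nil => intro h; exact absurd rfl h
  | cons a t ih =>
    intro _
    rcases eq_or_ne t [] with rfl | ht
    · exact ⟨a, List.mem_cons_self, by simp⟩
    · obtain ⟨m, hm, hmax⟩ := ih ht
      rcases le_total (f a) (f m) with h | h
      · refine ⟨m, List.mem_cons_of_mem _ hm, ?_⟩
        intro b hb
        rcases List.mem_cons.1 hb with rfl | hb
        · exact h
        · exact hmax b hb
      · refine ⟨a, List.mem_cons_self, ?_⟩
        intro b hb
        rcases List.mem_cons.1 hb with rfl | hb
        · exact le_refl _
        · exact le_trans (hmax b hb) h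

theorem interface_subset_attrs (sch : ι → Finset A) (all : Finset ι) (q : Plan ι) :
    interface sch all q ⊆ attrs sch q.rels := by
  rw [interface]; exact Finset.inter_subset_left

theorem nodeWidth_le_one_iff {sch : ι → Finset A} {all : Finset ι} {q : Plan ι}
    (h : nodeWidth sch all q ≤ 1) : ∃ s ∈ q.rels, interface sch all q ⊆ sch s := by
  have hne : {k | ∃ S ⊆ q.rels, S.card = k ∧ interface sch all q ⊆ attrs sch S}.Nonempty :=
    ⟨q.rels.card, q.rels, Finset.Subset.refl _, rfl, interface_subset_attrs sch all q⟩
  obtain ⟨S, hS, hcard, hcov⟩ := Nat.sInf_mem hne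
  rw [nodeWidth] at h
  have hc1 : S.card ≤ 1 := le_trans (le_of_eq hcard) h
  rcases Nat.le_one_iff_eq_zero_or_eq_one.1 hc1 with h0 | h1
  · obtain ⟨s, hs⟩ := rels_nonempty q
    refine ⟨s, hs, ?_⟩
    rw [Finset.card_eq_zero] at h0
    subst h0
    intro a ha
    have := hcov ha
    simp [attrs] at this
  · obtain ⟨s, rfl⟩ := Finset.card_eq_one.1 h1
    refine ⟨s, hS (Finset.mem_singleton_self s), ?_⟩
    intro a ha
    have := hcov ha
    simpa [attrs] using this

end Glue

/-- A query plan `P` for an acyclic conjunctive query has width 1 if and only if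
there exists a join tree `T` of the query that induces `P`. -/
theorem stmt_4 [Fintype ι] (sch : ι → Finset A) (P : Plan ι)
    (hnodup : P.leaves.Nodup) (hall : P.rels = Finset.univ)
    (hacyclic : ∃ G : SimpleGraph ι, JoinTree G sch) :
    planWidth sch P.rels P ≤ 1 ↔
      ∃ (G : SimpleGraph ι) (r : ι), JoinTree G sch ∧ Induces G r sch P := by
  constructor
  · intro hw
    have hwq : ∀ q ∈ P.subplans, ∃ s ∈ q.rels, interface sch P.rels q ⊆ sch s := by
      intro q hq
      apply nodeWidth_le_one_iff
      exact le_trans (le_foldr_max (List.mem_map.2 ⟨q, hq, rfl⟩)) hw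
    have hg : ∀ q ∈ P.subplans, interface sch P.rels q ⊆ sch (rho sch P.rels q) :=
      fun q hq => interface_subset_rho sch P.rels hwq hq
    have hPmem := mem_subplans_self P
    have hacyc : (pg sch P.rels P).IsAcyclic := pg_acyclic sch P.rels hnodup
    have hmemall : ∀ x : ι, x ∈ P.rels := fun x => hall ▸ Finset.mem_univ x
    have hpb := pb sch P.rels hnodup (Finset.Subset.refl _) hg
    have hconn : (pg sch P.rels P).Connected := by
      rw [SimpleGraph.connected_iff]
      refine ⟨?_, ?_⟩
      · intro x y
        obtain ⟨W, _, _⟩ := hpb P hPmem x (hmemall x) y (hmemall y)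
        exact ⟨W⟩
      · obtain ⟨z, _⟩ := rels_nonempty P
        exact ⟨z⟩
    refine ⟨pg sch P.rels P, rho sch P.rels P, ⟨⟨hconn, hacyc⟩, ?_⟩, ?_, ?_⟩
    · -- connectedness (attribute) condition
      intro p q W hW s hs
      obtain ⟨W0, h0p, h0a⟩ := hpb P hPmem p (hmemall p) q (hmemall q)
      have hEq : W = W0 :=
        congrArg Subtype.val (hacyc.path_unique ⟨W, hW⟩ ⟨W0, h0p⟩)
      intro a ha
      rw [Finset.mem_inter] at ha
      exact h0a a ha.1 ha.2 s (hEq ▸ hs)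
    · -- Induces (1)
      intro p
      have hlne : Plan.leaf p ∈ P.subplans.filter (fun q => rho sch P.rels q = p) := by
        rw [List.mem_filter]
        exact ⟨leaf_mem_subplans (hmemall p), by simp [rho]⟩
      obtain ⟨m, hm, hmax⟩ := list_exists_max (fun q => q.leaves.length) _
        (List.ne_nil_of_mem hlne)
      rw [List.mem_filter] at hm
      obtain ⟨hmP, hrm'⟩ := hm
      have hrm : rho sch P.rels m = p := by simpa using hrm'
      have hmax' : ∀ q' ∈ P.subplans, rho sch P.rels q' = p →
          q'.leaves.length ≤ m.leaves.length := by
        intro q' hq' hrq'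
        exact hmax q' (List.mem_filter.2 ⟨hq', by simpa using hrq'⟩)
      refine ⟨m, hmP, ?_⟩
      ext x
      simp only [Finset.coe_sort_coe, Set.mem_setOf_eq, Finset.mem_coe]
      rcases eq_or_ne m P with rfl | hmne
      · constructor
        · intro _ W hW
          rw [← hrm]
          exact SimpleGraph.Walk.end_mem_support W
        · intro _
          exact hmemall x
      · obtain ⟨u', v', hpar, hside⟩ := (child_or_top hmP).resolve_left hmne
        have hnpar : (Plan.node u' v').leaves.Nodup := nodup_of_subplan hpar hnodup
        have hmside : m ∈ (Plan.node u' v').subplans := by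
          rcases hside with rfl | rfl
          · exact mem_subplans_node.2 (Or.inr (Or.inl (mem_subplans_self _)))
          · exact mem_subplans_node.2 (Or.inr (Or.inr (mem_subplans_self _)))
        have hlenm : m.leaves.length < (Plan.node u' v').leaves.length := by
          have h1 := leaves_length_pos u'
          have h2 := leaves_length_pos v'
          rcases hside with rfl | rfl <;> simp [Plan.leaves] <;> omega
        have hrnot : rho sch P.rels (Plan.node u' v') ∉ m.rels := by
          intro hmem
          have heq := rho_eq_of_mem sch P.rels hnpar hmside hmem
          have := hmax' _ hpar (heq.symm ▸ hrm)
          omega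
        have hrne : rho sch P.rels P ∉ m.rels := by
          intro hmem
          have heq := rho_eq_of_mem sch P.rels hnodup hmP hmem
          have h1 := hmax' P hPmem (heq.symm ▸ hrm)
          rcases leaves_length_lt hmP with rfl | h2
          · exact hmne rfl
          · omega
        constructor
        · intro hx W hW
          have hcd : (m = u' ∧ v' = v') ∨ (m = v' ∧ u' = u') := by
            rcases hside with rfl | rfl
            · exact Or.inl ⟨rfl, rfl⟩
            · exact Or.inr ⟨rfl, rfl⟩
          have hS : ∀ a b : ι, (pg sch P.rels P).Adj a b → a ∈ m.rels →
              b ∈ m.rels ∨ a = p := by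
            intro a b hadj ha
            rcases hside with rfl | rfl
            · rcases boundary sch P.rels hnodup hpar (Or.inl ⟨rfl, rfl⟩) hrnot hadj ha with
                h | ⟨h1, _⟩
              · exact Or.inl h
              · exact Or.inr (h1.trans hrm)
            · rcases boundary sch P.rels hnodup hpar (Or.inr ⟨rfl, rfl⟩) hrnot hadj ha with
                h | ⟨h1, _⟩
              · exact Or.inl h
              · exact Or.inr (h1.trans hrm)
          exact walk_exit hS W hx hrne
        · intro hins
          by_contra hx
          obtain ⟨W, hWp, hWs, _⟩ := wtr sch P.rels hnodup hg P hPmem x (hmemall x)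
          obtain ⟨_, q', hq', hxq', hsq'⟩ := hWs p (hins W hWp)
          rcases laminar hnodup hq' hmP with hd | h | h
          · have h1 : p ∈ q'.rels := by rw [hsq']; exact rho_mem sch P.rels q'
            have h2 : p ∈ m.rels := by rw [← hrm]; exact rho_mem sch P.rels m
            exact Finset.disjoint_left.1 hd h1 h2
          · exact hx ((rels_subset h) hxq')
          · have h1 := hmax' q' hq' hsq'.symm
            rcases leaves_length_lt h with rfl | h2
            · exact hx hxq'
            · omega
    · -- Induces (2)
      intro u v huv
      have hu : u ∈ P.subplans :=
        subplans_trans (mem_subplans_node.2 (Or.inr (Or.inl (mem_subplans_self u)))) huv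
      have hv : v ∈ P.subplans :=
        subplans_trans (mem_subplans_node.2 (Or.inr (Or.inr (mem_subplans_self v)))) huv
      have hduv : Disjoint u.rels v.rels := disjoint_rels (nodup_of_subplan huv hnodup)
      have hne : rho sch P.rels u ≠ rho sch P.rels v := by
        intro h
        exact Finset.disjoint_left.1 hduv (rho_mem sch P.rels u) (h ▸ rho_mem sch P.rels v)
      exact ⟨rho sch P.rels u, rho_mem sch P.rels u, rho sch P.rels v, rho_mem sch P.rels v,
        hg u hu, hg v hv, (pg_adj sch P.rels).2 ⟨hne, u, v, huv, Or.inl ⟨rfl, rfl⟩⟩⟩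
  · rintro ⟨G, r, _, hind⟩
    rw [planWidth]
    apply foldr_max_le
    intro a ha
    obtain ⟨q, hq, rfl⟩ := List.mem_map.1 ha
    rcases child_or_top hq with rfl | ⟨u, v, huv, hside⟩
    · refine le_trans (Nat.sInf_le ?_) (by norm_num : (0:ℕ) ≤ 1)
      refine ⟨∅, Finset.empty_subset _, Finset.card_empty, ?_⟩
      intro a ha
      rw [interface, Finset.mem_inter] at ha
      simp [attrs] at ha
    · obtain ⟨s, hs, t, ht, hcu, hcv, _⟩ := hind.2 u v huv
      rcases hside with rfl | rfl
      · refine Nat.sInf_le ⟨{s}, Finset.singleton_subset_iff.2 hs, Finset.card_singleton _, ?_⟩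
        intro a ha
        simpa [attrs] using hcu ha
      · refine Nat.sInf_le ⟨{t}, Finset.singleton_subset_iff.2 ht, Finset.card_singleton _, ?_⟩
        intro a ha
        simpa [attrs] using hcv ha
end

section
/- A conjunctive query Q admits a width-1 query plan if and only if Q is acyclic. -/
variable {ι A : Type} [DecidableEq ι] [DecidableEq A]

set_option linter.unusedSectionVars false

namespace Plan

variable {ι : Type} [DecidableEq ι]

lemma mem_leaves_iff (p : Plan ι) (x : ι) : x ∈ p.leaves ↔ x ∈ p.rels := by
  induction p with
  | leaf i => simp [leaves, rels]
  | node l r hl hr => simp [leaves, rels, hl, hr]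

lemma rels_nonempty_s5 (p : Plan ι) : p.rels.Nonempty := by
  induction p with
  | leaf i => exact ⟨i, by simp [rels]⟩
  | node l r hl _ => obtain ⟨x, hx⟩ := hl; exact ⟨x, by simp [rels]; exact Or.inl hx⟩

lemma self_mem_subplans (p : Plan ι) : p ∈ p.subplans := by
  cases p <;> simp [subplans]

end Plan

/-! ### attrs / width lemmas -/


lemma mem_attrs {sch : ι → Finset A} {S : Finset ι} {a : A} :
    a ∈ attrs sch S ↔ ∃ v ∈ S, a ∈ sch v := Finset.mem_biUnion

lemma attrs_singleton (sch : ι → Finset A) (g : ι) : attrs sch {g} = sch g := by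
  simp [attrs]

lemma foldr_max_le_s5 (L : List ℕ) (n : ℕ) : L.foldr max 0 ≤ n ↔ ∀ x ∈ L, x ≤ n := by
  induction L with
  | nil => simp
  | cons a L ih => simp [ih, Nat.max_le]

lemma exists_guard {sch : ι → Finset A} {all : Finset ι} {p : Plan ι}
    (h : nodeWidth sch all p ≤ 1) :
    ∃ g ∈ p.rels, interface sch all p ⊆ sch g := by
  have hne : {k | ∃ S ⊆ p.rels, S.card = k ∧ interface sch all p ⊆ attrs sch S}.Nonempty :=
    ⟨p.rels.card, p.rels, le_refl _, rfl, fun a ha => (Finset.mem_inter.1 ha).1⟩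
  have hmem := Nat.sInf_mem hne
  obtain ⟨S, hS, hcard, hcov⟩ := hmem
  have hle : S.card ≤ 1 := by rw [hcard]; exact h
  rcases Nat.le_one_iff_eq_zero_or_eq_one.1 hle with h' | h'
  · have : S = ∅ := Finset.card_eq_zero.1 h'
    obtain ⟨g, hg⟩ := p.rels_nonempty_s5
    exact ⟨g, hg, by rw [this] at hcov; intro a ha; exact absurd (hcov ha) (by simp [attrs])⟩
  · obtain ⟨g, hg⟩ := Finset.card_eq_one.1 h'
    refine ⟨g, ?_, ?_⟩
    · apply hS; rw [hg]; simp
    · rw [hg, attrs_singleton] at hcov; exact hcov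

lemma nodeWidth_le_one {sch : ι → Finset A} {all : Finset ι} {p : Plan ι}
    {g : ι} (hg : g ∈ p.rels) (hcov : interface sch all p ⊆ sch g) :
    nodeWidth sch all p ≤ 1 :=
  Nat.sInf_le ⟨{g}, by simpa using hg, Finset.card_singleton g, by rwa [attrs_singleton]⟩


open SimpleGraph

/-! ### Reachability within a set of vertices -/

def ReachIn (G : SimpleGraph ι) (t : Set ι) (u v : ι) : Prop :=
  ∃ W : G.Walk u v, ∀ x ∈ W.support, x ∈ t

namespace ReachIn

variable {G : SimpleGraph ι} {t : Set ι} {u v w : ι}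

lemma mem_left (h : ReachIn G t u v) : u ∈ t := by
  obtain ⟨W, hW⟩ := h; exact hW _ W.start_mem_support

lemma mem_right (h : ReachIn G t u v) : v ∈ t := by
  obtain ⟨W, hW⟩ := h; exact hW _ W.end_mem_support

lemma refl (h : u ∈ t) : ReachIn G t u u :=
  ⟨.nil, by simpa using h⟩

lemma symm (h : ReachIn G t u v) : ReachIn G t v u := by
  obtain ⟨W, hW⟩ := h
  exact ⟨W.reverse, fun x hx => hW x (by simpa [SimpleGraph.Walk.support_reverse] using hx)⟩

lemma trans (h : ReachIn G t u v) (h' : ReachIn G t v w) : ReachIn G t u w := by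
  obtain ⟨W, hW⟩ := h; obtain ⟨W', hW'⟩ := h'
  refine ⟨W.append W', fun x hx => ?_⟩
  rcases (SimpleGraph.Walk.mem_support_append_iff _ _).1 hx with h | h
  · exact hW x h
  · exact hW' x h

end ReachIn

lemma reachIn_of_mem_support {G : SimpleGraph ι} {t : Set ι} {u v x : ι}
    (W : G.Walk u v) (hW : ∀ y ∈ W.support, y ∈ t) (hx : x ∈ W.support) :
    ReachIn G t u x :=
  ⟨W.takeUntil x hx, fun y hy => hW y (W.support_takeUntil_subset hx hy)⟩

/-- From `ReachIn` we can extract a *path* whose support consists of vertices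
reachable (within `t`) from the start. -/
lemma reachIn_exists_path {G : SimpleGraph ι} {t : Set ι} {u v : ι}
    (h : ReachIn G t u v) :
    ∃ W : G.Walk u v, W.IsPath ∧ ∀ x ∈ W.support, x ∈ t ∧ ReachIn G t u x := by
  obtain ⟨W, hW⟩ := h
  refine ⟨W.bypass, W.bypass_isPath, fun x hx => ?_⟩
  have hx' : x ∈ W.support := W.support_bypass_subset hx
  exact ⟨hW x hx', reachIn_of_mem_support W hW hx'⟩

/-- Two distinct neighbours of `r` cannot both reach the same vertex avoiding `r`,
in an acyclic graph. -/
lemma no_two_roots {G : SimpleGraph ι} (hac : G.IsAcyclic) {t : Set ι} {r c c' x : ι}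
    (hrt : r ∉ t) (hc : G.Adj r c) (hc' : G.Adj r c') (hne : c ≠ c')
    (h1 : ReachIn G t c x) (h2 : ReachIn G t c' x) : False := by
  obtain ⟨q1, hq1, hq1s⟩ := reachIn_exists_path h1
  obtain ⟨q2, hq2, hq2s⟩ := reachIn_exists_path h2
  have hr1 : r ∉ q1.support := fun h => hrt (hq1s r h).1
  have hr2 : r ∉ q2.support := fun h => hrt (hq2s r h).1
  have hP1 : (SimpleGraph.Walk.cons hc q1).IsPath := by
    rw [SimpleGraph.Walk.cons_isPath_iff]; exact ⟨hq1, hr1⟩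
  have hP2 : (SimpleGraph.Walk.cons hc' q2).IsPath := by
    rw [SimpleGraph.Walk.cons_isPath_iff]; exact ⟨hq2, hr2⟩
  have := SimpleGraph.isAcyclic_iff_path_unique.1 hac ⟨_, hP1⟩ ⟨_, hP2⟩
  have hw : SimpleGraph.Walk.cons hc q1 = SimpleGraph.Walk.cons hc' q2 := by
    simpa using congrArg Subtype.val this
  have hsup := congrArg SimpleGraph.Walk.support hw
  rw [SimpleGraph.Walk.support_cons, SimpleGraph.Walk.support_cons,
    q1.support_eq_cons, q2.support_eq_cons] at hsup
  injection hsup with h1 h2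
  injection h2 with h3 _
  exact hne h3

/-- Coverage: every non-root vertex of a connected set lies in the subtree of
some neighbour of the root. -/
lemma coverage {G : SimpleGraph ι} {s : Finset ι} {r : ι} [DecidableEq ι]
    (hconn : ∀ u v, u ∈ s → v ∈ s → ReachIn G ↑s u v) (hr : r ∈ s)
    {v : ι} (hv : v ∈ s) (hvr : v ≠ r) :
    ∃ c, G.Adj r c ∧ ReachIn G ↑(s.erase r) c v := by
  obtain ⟨W2, hW2sup, hW2count⟩ :
      ∃ W2 : G.Walk r v, (∀ x ∈ W2.support, x ∈ (↑s : Set ι)) ∧ W2.support.count r = 1 := by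
    obtain ⟨W, hW⟩ := hconn v r hv hr
    have hrs : r ∈ W.support := W.end_mem_support
    refine ⟨(W.takeUntil r hrs).reverse, fun x hx => ?_, ?_⟩
    · rw [SimpleGraph.Walk.support_reverse, List.mem_reverse] at hx
      exact hW x (W.support_takeUntil_subset hrs hx)
    · rw [SimpleGraph.Walk.support_reverse, List.count_reverse]
      exact W.count_support_takeUntil_eq_one hrs
  cases W2 with
  | nil => exact absurd rfl hvr
  | cons h p =>
      refine ⟨_, h, p, fun x hx => ?_⟩
      have hxs : x ∈ (↑s : Set ι) := by
        apply hW2sup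
        rw [SimpleGraph.Walk.support_cons]
        exact List.mem_cons_of_mem _ hx
      have hxr : x ≠ r := by
        intro h'
        subst h'
        rw [SimpleGraph.Walk.support_cons, List.count_cons_self] at hW2count
        have : p.support.count x = 0 := by omega
        exact List.count_eq_zero.1 this hx
      simp only [Finset.coe_erase, Set.mem_diff, Set.mem_singleton_iff]
      exact ⟨hxs, hxr⟩

/-- Key lemma: an attribute shared between a vertex `v` of the subtree of `c`
and a vertex `w` outside that subtree belongs to both `sch c` and `sch r`. -/
lemma key_guard {G : SimpleGraph ι} {sch : ι → Finset A} (H : JoinTree G sch)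
    {s : Finset ι} {r : ι}
    (hconn : ∀ u v, u ∈ s → v ∈ s → ReachIn G ↑s u v)
    (hguard : ∀ a v w, v ∈ s → w ∉ s → a ∈ sch v → a ∈ sch w → a ∈ sch r)
    (hr : r ∈ s) {c v w : ι} {a : A}
    (hc : G.Adj r c)
    (hv : ReachIn G ↑(s.erase r) c v)
    (hw : ¬ ReachIn G ↑(s.erase r) c w)
    (ha : a ∈ sch v) (hb : a ∈ sch w) :
    a ∈ sch c ∧ a ∈ sch r := by
  have hac : G.IsAcyclic := ((SimpleGraph.isTree_iff _).mp H.1).2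
  obtain ⟨p1, hp1, hp1s⟩ := reachIn_exists_path hv.symm
  have hp1r : ∀ x ∈ p1.support, x ∈ (↑(s.erase r) : Set ι) ∧ ReachIn G ↑(s.erase r) c x :=
    fun x hx => ⟨(hp1s x hx).1, hv.trans (hp1s x hx).2⟩
  have hrp1 : r ∉ p1.support := fun h => by
    have := (hp1r r h).1; simp at this
  have hvs : v ∈ s := by
    have := hv.mem_right; simp only [Finset.coe_erase, Set.mem_diff] at this
    exact this.1
  -- short path: v ⟶ c ⟶ r
  have short : a ∈ sch r → a ∈ sch c := by
    intro har
    have hQ' : (p1.append (SimpleGraph.Walk.cons hc.symm SimpleGraph.Walk.nil)).IsPath := by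
      rw [SimpleGraph.Walk.isPath_def, SimpleGraph.Walk.support_append]
      simp only [SimpleGraph.Walk.support_cons, SimpleGraph.Walk.support_nil, List.tail_cons]
      exact List.Nodup.append hp1.support_nodup (List.nodup_singleton r)
        (fun x hx hx' => by
          simp only [List.mem_singleton] at hx'; subst hx'; exact hrp1 hx)
    have hcm : c ∈ (p1.append (SimpleGraph.Walk.cons hc.symm SimpleGraph.Walk.nil)).support := by
      rw [SimpleGraph.Walk.mem_support_append_iff]
      exact Or.inl p1.end_mem_support
    have := H.2 v r _ hQ' c hcm
    exact this (Finset.mem_inter.2 ⟨ha, har⟩)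
  by_cases hws : w ∈ s
  · by_cases hwr : w = r
    · subst hwr; exact ⟨short hb, hb⟩
    · -- main case: w in another subtree
      obtain ⟨c', hc', hrc'⟩ := coverage hconn hr hws hwr
      have hone : c' ≠ c := fun h => hw (h ▸ hrc')
      obtain ⟨p2, hp2, hp2s⟩ := reachIn_exists_path hrc'
      have hrp2 : r ∉ p2.support := fun h => by
        have := (hp2s r h).1; simp at this
      set Q := p1.append (SimpleGraph.Walk.cons hc.symm (SimpleGraph.Walk.cons hc' p2)) with hQdef
      have hQsup : Q.support = p1.support ++ (r :: p2.support) := by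
        rw [hQdef, SimpleGraph.Walk.support_append]
        simp [SimpleGraph.Walk.support_cons]
      have hQ : Q.IsPath := by
        rw [SimpleGraph.Walk.isPath_def, hQsup]
        refine List.Nodup.append hp1.support_nodup ?_ ?_
        · exact List.nodup_cons.2 ⟨hrp2, hp2.support_nodup⟩
        · intro x hx hx'
          rcases List.mem_cons.1 hx' with rfl | hx'
          · exact hrp1 hx
          · exact no_two_roots hac (by simp) hc hc' (Ne.symm hone)
              (hp1r x hx).2 (hp2s x hx').2
      have hcm : c ∈ Q.support := by
        rw [hQsup]; exact List.mem_append_left _ p1.end_mem_support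
      have hrm : r ∈ Q.support := by
        rw [hQsup]; exact List.mem_append_right _ List.mem_cons_self
      have h1 := H.2 v w Q hQ c hcm (Finset.mem_inter.2 ⟨ha, hb⟩)
      have h2 := H.2 v w Q hQ r hrm (Finset.mem_inter.2 ⟨ha, hb⟩)
      exact ⟨h1, h2⟩
  · have har : a ∈ sch r := hguard a v w hvs hws ha hb
    exact ⟨short har, har⟩

lemma tree_to_plan [Fintype ι] {G : SimpleGraph ι} {sch : ι → Finset A} (H : JoinTree G sch) :
    ∀ n (s : Finset ι), s.card ≤ n → ∀ r ∈ s,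
      (∀ u v, u ∈ s → v ∈ s → ReachIn G ↑s u v) →
      (∀ a v w, v ∈ s → w ∉ s → a ∈ sch v → a ∈ sch w → a ∈ sch r) →
      ∃ P : Plan ι, P.rels = s ∧ P.leaves.Nodup ∧
        ∀ q ∈ P.subplans, ∃ g ∈ q.rels, interface sch Finset.univ q ⊆ sch g := by
  intro n
  induction n with
  | zero =>
      intro s hs r hr _ _
      rw [Nat.le_zero, Finset.card_eq_zero] at hs
      exact absurd (hs ▸ hr) (Finset.notMem_empty r)
  | succ n ih =>
      intro s hcard r hr hconn hguard
      classical
      have hac : G.IsAcyclic := ((SimpleGraph.isTree_iff _).mp H.1).2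
      set S : ι → Finset ι :=
        fun c => (s.erase r).filter (fun x => ReachIn G ↑(s.erase r) c x) with hSdef
      have hmemS : ∀ c x, x ∈ S c ↔ ReachIn G ↑(s.erase r) c x := by
        intro c x
        simp only [hSdef, Finset.mem_filter]
        exact ⟨fun h => h.2, fun h => ⟨by exact_mod_cast h.mem_right, h⟩⟩
      have hrnotin : (r : ι) ∉ (↑(s.erase r) : Set ι) := by simp
      -- facts about children
      have hchild : ∀ c, c ∈ s → G.Adj r c →
          c ∈ S c ∧ (S c).card ≤ n ∧
          (∀ u v, u ∈ S c → v ∈ S c → ReachIn G ↑(S c) u v) ∧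
          (∀ a x w, x ∈ S c → w ∉ S c → a ∈ sch x → a ∈ sch w → a ∈ sch c) := by
        intro c hcs hadj
        have hcSc : c ∈ S c := by
          rw [hmemS]
          exact ReachIn.refl (by simp only [Finset.coe_erase, Set.mem_diff,
            Set.mem_singleton_iff]; exact ⟨hcs, hadj.ne.symm⟩)
        refine ⟨hcSc, ?_, ?_, ?_⟩
        · calc (S c).card ≤ (s.erase r).card := Finset.card_le_card (Finset.filter_subset _ _)
            _ = s.card - 1 := Finset.card_erase_of_mem hr
            _ ≤ n := by omega
        · intro u v hu hv
          have hRu : ReachIn G ↑(s.erase r) c u := (hmemS c u).1 hu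
          have hRv : ReachIn G ↑(s.erase r) c v := (hmemS c v).1 hv
          obtain ⟨W1, _, hW1s⟩ := reachIn_exists_path hRu.symm
          obtain ⟨W2, _, hW2s⟩ := reachIn_exists_path hRv
          refine ⟨W1.append W2, fun x hx => ?_⟩
          rw [Finset.mem_coe, hmemS]
          rcases (SimpleGraph.Walk.mem_support_append_iff _ _).1 hx with h | h
          · exact hRu.trans (hW1s x h).2
          · exact (hW2s x h).2
        · intro a x w hx hw hax haw
          exact (key_guard H hconn hguard hr hadj ((hmemS c x).1 hx)
            (fun hRw => hw ((hmemS c w).2 hRw)) hax haw).1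
      -- membership in folded unions
      have hUmem : ∀ (L : List ι) (x : ι),
          x ∈ L.foldr (fun c acc => S c ∪ acc) ∅ ↔ ∃ c' ∈ L, x ∈ S c' := by
        intro L
        induction L with
        | nil => simp
        | cons c L ihL => intro x; simp [ihL]
      -- disjointness of subtrees
      have hdisj : ∀ c c', c ∈ s → G.Adj r c → G.Adj r c' → c ≠ c' →
          ∀ x, x ∈ S c → x ∈ S c' → False := by
        intro c c' _ h1 h2 hne x hx hx'
        exact no_two_roots hac hrnotin h1 h2 hne ((hmemS c x).1 hx) ((hmemS c' x).1 hx')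
      have hSr : ∀ c, r ∉ S c := by
        intro c hmem
        exact hrnotin (((hmemS c r).1 hmem).mem_right)
      -- inner recursion over a list of children
      have inner : ∀ L : List ι, L.Nodup → (∀ c ∈ L, c ∈ s ∧ G.Adj r c) →
          ∃ P : Plan ι, P.rels = insert r (L.foldr (fun c acc => S c ∪ acc) ∅) ∧
            P.leaves.Nodup ∧
            (∀ q ∈ P.subplans, ∃ g ∈ q.rels, interface sch Finset.univ q ⊆ sch g) := by
        intro L
        induction L with
        | nil =>
            intro _ _
            refine ⟨Plan.leaf r, by simp [Plan.rels], by simp [Plan.leaves], ?_⟩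
            intro q hq
            simp only [Plan.subplans, List.mem_singleton] at hq
            subst hq
            refine ⟨r, by simp [Plan.rels], fun a ha => ?_⟩
            have := (Finset.mem_inter.1 ha).1
            rwa [show (Plan.leaf r : Plan ι).rels = {r} from rfl, attrs_singleton] at this
        | cons c L ihL =>
            intro hnd hmem
            have hc := hmem c List.mem_cons_self
            obtain ⟨hcS, hcardS, hconnS, hguardS⟩ := hchild c hc.1 hc.2
            obtain ⟨P', hP'rels, hP'nd, hP'g⟩ := ihL (List.nodup_cons.1 hnd).2
              (fun c' hc' => hmem c' (List.mem_cons_of_mem _ hc'))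
            obtain ⟨Pc, hPcrels, hPcnd, hPcg⟩ := ih (S c) hcardS c hcS hconnS hguardS
            have hcnotL : c ∉ L := (List.nodup_cons.1 hnd).1
            -- rels of the union members
            have hrelschar : ∀ x, x ∈ (Plan.node P' Pc).rels ↔
                x = r ∨ x ∈ S c ∨ ∃ c' ∈ L, x ∈ S c' := by
              intro x
              show x ∈ P'.rels ∪ Pc.rels ↔ _
              constructor
              · intro h
                rcases Finset.mem_union.1 h with h | h
                · rw [hP'rels, Finset.mem_insert, hUmem] at h
                  rcases h with rfl | ⟨c', h1, h2⟩
                  · exact Or.inl rfl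
                  · exact Or.inr (Or.inr ⟨c', h1, h2⟩)
                · exact Or.inr (Or.inl (hPcrels ▸ h))
              · rintro (rfl | h | ⟨c', h1, h2⟩)
                · exact Finset.mem_union.2 (Or.inl
                    (by rw [hP'rels]; exact Finset.mem_insert_self _ _))
                · exact Finset.mem_union.2 (Or.inr (by rw [hPcrels]; exact h))
                · exact Finset.mem_union.2 (Or.inl
                    (by rw [hP'rels, Finset.mem_insert, hUmem]; exact Or.inr ⟨c', h1, h2⟩))
            refine ⟨Plan.node P' Pc, ?_, ?_, ?_⟩
            · ext x
              rw [hrelschar, Finset.mem_insert, hUmem]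
              simp only [List.mem_cons]
              constructor
              · rintro (rfl | h | ⟨c', h1, h2⟩)
                · exact Or.inl rfl
                · exact Or.inr ⟨c, Or.inl rfl, h⟩
                · exact Or.inr ⟨c', Or.inr h1, h2⟩
              · rintro (rfl | ⟨c', (rfl | h1), h2⟩)
                · exact Or.inl rfl
                · exact Or.inr (Or.inl h2)
                · exact Or.inr (Or.inr ⟨c', h1, h2⟩)
            · show (P'.leaves ++ Pc.leaves).Nodup
              refine List.Nodup.append hP'nd hPcnd ?_
              intro x hx1 hx2
              have hx1' : x ∈ P'.rels := (Plan.mem_leaves_iff _ _).1 hx1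
              have hx2' : x ∈ Pc.rels := (Plan.mem_leaves_iff _ _).1 hx2
              rw [hPcrels] at hx2'
              rw [hP'rels, Finset.mem_insert, hUmem] at hx1'
              rcases hx1' with rfl | ⟨c', hc'L, hmc'⟩
              · exact hSr c hx2'
              · have hc' := hmem c' (List.mem_cons_of_mem _ hc'L)
                exact hdisj c' c hc'.1 hc'.2 hc.2 (fun h => hcnotL (h ▸ hc'L)) x hmc' hx2'
            · intro q hq
              rw [show (Plan.node P' Pc).subplans
                    = Plan.node P' Pc :: (P'.subplans ++ Pc.subplans) from rfl,
                List.mem_cons, List.mem_append] at hq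
              rcases hq with rfl | hq | hq
              · -- the new node: guard r
                refine ⟨r, (hrelschar r).2 (Or.inl rfl), fun a ha => ?_⟩
                obtain ⟨hal, har⟩ := Finset.mem_inter.1 ha
                obtain ⟨v, hvrels, hav⟩ := mem_attrs.1 hal
                obtain ⟨w, hwrels, haw⟩ := mem_attrs.1 har
                have hwnot : w ∉ (Plan.node P' Pc).rels :=
                  (Finset.mem_sdiff.1 hwrels).2
                rcases (hrelschar v).1 hvrels with rfl | hvS'
                · exact hav
                · obtain ⟨c₀, hc₀mem, hvS⟩ : ∃ c₀, (c₀ ∈ s ∧ G.Adj r c₀) ∧ v ∈ S c₀ := by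
                    rcases hvS' with h | ⟨c', hc'L, h⟩
                    · exact ⟨c, hc, h⟩
                    · exact ⟨c', hmem c' (List.mem_cons_of_mem _ hc'L), h⟩
                  have hwS : ¬ ReachIn G ↑(s.erase r) c₀ w := by
                    intro hRw
                    have hwS' : w ∈ S c₀ := (hmemS c₀ w).2 hRw
                    apply hwnot
                    rcases hvS' with h' | ⟨c', hc'L, h'⟩
                    · have hce : c₀ = c := by
                        by_contra hne
                        exact hdisj c₀ c hc₀mem.1 hc₀mem.2 hc.2 hne v hvS h'
                      exact (hrelschar w).2 (Or.inr (Or.inl (hce ▸ hwS')))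
                    · have hce : c₀ = c' := by
                        by_contra hne
                        exact hdisj c₀ c' hc₀mem.1 hc₀mem.2
                          (hmem c' (List.mem_cons_of_mem _ hc'L)).2 hne v hvS h'
                      exact (hrelschar w).2 (Or.inr (Or.inr ⟨c', hc'L, hce ▸ hwS'⟩))
                  exact (key_guard H hconn hguard hr hc₀mem.2
                    ((hmemS c₀ v).1 hvS) hwS hav haw).2
              · exact hP'g q hq
              · exact hPcg q hq
      -- apply with the full list of children of r
      obtain ⟨P, hPrels, hPnd, hPg⟩ := inner (s.filter (fun c => G.Adj r c)).toList
        (Finset.nodup_toList _)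
        (fun c hcmem => by
          rw [Finset.mem_toList, Finset.mem_filter] at hcmem
          exact hcmem)
      refine ⟨P, ?_, hPnd, hPg⟩
      rw [hPrels]
      ext x
      rw [Finset.mem_insert, hUmem]
      constructor
      · rintro (rfl | ⟨c', _, hx⟩)
        · exact hr
        · have := ((hmemS c' x).1 hx).mem_right
          simp only [Finset.coe_erase, Set.mem_diff] at this
          exact this.1
      · intro hx
        rcases eq_or_ne x r with rfl | hxr
        · exact Or.inl rfl
        · obtain ⟨c, hadj, hRx⟩ := coverage hconn hr hx hxr
          have hcs : c ∈ s := by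
            have := hRx.mem_left
            simp only [Finset.coe_erase, Set.mem_diff] at this
            exact this.1
          exact Or.inr ⟨c, by rw [Finset.mem_toList, Finset.mem_filter]; exact ⟨hcs, hadj⟩,
            (hmemS c x).2 hRx⟩

/-! ### Helpers for the plan → tree direction -/

lemma walk_closed {G : SimpleGraph ι} {X : Set ι}
    (hX : ∀ a b, G.Adj a b → a ∈ X → b ∈ X) {u v : ι} (W : G.Walk u v) :
    u ∈ X → ∀ s ∈ W.support, s ∈ X := by
  induction W with
  | nil =>
      intro hu s hs
      rw [SimpleGraph.Walk.support_nil, List.mem_singleton] at hs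
      subst hs; exact hu
  | cons h p ih =>
      intro hu s hs
      rw [SimpleGraph.Walk.support_cons, List.mem_cons] at hs
      rcases hs with rfl | hs
      · exact hu
      · exact ih (hX _ _ h hu) s hs

lemma reach_closed {G : SimpleGraph ι} {X : Set ι}
    (hX : ∀ a b, G.Adj a b → a ∈ X → b ∈ X) {u v : ι}
    (h : G.Reachable u v) (hu : u ∈ X) : v ∈ X := by
  obtain ⟨W⟩ := h
  exact walk_closed hX W hu v W.end_mem_support

lemma support_mapLe {G G' : SimpleGraph ι} (h : G ≤ G') {u v : ι} (W : G.Walk u v) :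
    (W.mapLe h).support = W.support := by
  show (W.map _).support = W.support
  rw [SimpleGraph.Walk.support_map]
  have : ⇑(SimpleGraph.Hom.ofLE h) = id := rfl
  rw [this, List.map_id]

/-- Gluing two paths on disjoint vertex sets across a bridging edge. -/
lemma cross_path {G1 G2 Gb : SimpleGraph ι} (h1 : G1 ≤ Gb) (h2 : G2 ≤ Gb)
    {L R : Finset ι} (hdisj : ∀ z, z ∈ L → z ∈ R → False)
    {g1 g2 x y : ι} (hadj : Gb.Adj g1 g2)
    (W1 : G1.Walk x g1) (W2 : G2.Walk g2 y) (hp1 : W1.IsPath) (hp2 : W2.IsPath)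
    (hs1 : ∀ z ∈ W1.support, z ∈ L) (hs2 : ∀ z ∈ W2.support, z ∈ R) :
    ∃ W : Gb.Walk x y, W.IsPath ∧ W.support = W1.support ++ W2.support := by
  refine ⟨(W1.mapLe h1).append (SimpleGraph.Walk.cons hadj (W2.mapLe h2)), ?_, ?_⟩
  · rw [SimpleGraph.Walk.isPath_def, SimpleGraph.Walk.support_append,
      SimpleGraph.Walk.support_cons, List.tail_cons, support_mapLe, support_mapLe]
    exact List.Nodup.append hp1.support_nodup hp2.support_nodup
      (fun z hz hz' => hdisj z (hs1 z hz) (hs2 z hz'))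
  · rw [SimpleGraph.Walk.support_append, SimpleGraph.Walk.support_cons, List.tail_cons,
      support_mapLe, support_mapLe]

/-- A bridge of one side remains a bridge after joining the two sides by an edge. -/
lemma bridge_preserved {Gl Gr : SimpleGraph ι} {L R : Finset ι} {gl gr u v : ι}
    (hconfL : ∀ a b, Gl.Adj a b → a ∈ L ∧ b ∈ L)
    (hconfR : ∀ a b, Gr.Adj a b → a ∈ R ∧ b ∈ R)
    (hdisj : ∀ x, x ∈ L → x ∈ R → False)
    (hgl : gl ∈ L) (hgr : gr ∈ R)
    (hbr : ¬ (Gl \ SimpleGraph.fromEdgeSet {s(u,v)}).Reachable u v)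
    (huv : Gl.Adj u v) :
    ¬ ((Gl ⊔ Gr ⊔ SimpleGraph.edge gl gr) \ SimpleGraph.fromEdgeSet {s(u,v)}).Reachable u v := by
  intro hreach
  set X : Set ι :=
    {x | (Gl \ SimpleGraph.fromEdgeSet {s(u,v)}).Reachable u x} ∪
    {x | x ∈ R ∧ (Gl \ SimpleGraph.fromEdgeSet {s(u,v)}).Reachable u gl} with hXdef
  have hGlconf : ∀ a b, (Gl \ SimpleGraph.fromEdgeSet {s(u,v)}).Adj a b → a ∈ L ∧ b ∈ L :=
    fun a b hab => hconfL a b ((SimpleGraph.sdiff_adj _ _ _ _).1 hab).1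
  have hus : u ∈ L := (hconfL u v huv).1
  have hreachL : ∀ x, (Gl \ SimpleGraph.fromEdgeSet {s(u,v)}).Reachable u x → x ∈ L := by
    intro x hx
    exact reach_closed (X := (↑L : Set ι)) (fun a b hab ha => (hGlconf a b hab).2) hx hus
  have hclosed : ∀ a b, ((Gl ⊔ Gr ⊔ SimpleGraph.edge gl gr) \
      SimpleGraph.fromEdgeSet {s(u,v)}).Adj a b → a ∈ X → b ∈ X := by
    intro a b hab ha
    obtain ⟨hadj, hne⟩ := (SimpleGraph.sdiff_adj _ _ _ _).1 hab
    rcases (SimpleGraph.sup_adj _ _ _ _).1 hadj with hadj' | hedge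
    · rcases (SimpleGraph.sup_adj _ _ _ _).1 hadj' with hGl | hGr
      · -- an edge of Gl
        have hab' : (Gl \ SimpleGraph.fromEdgeSet {s(u,v)}).Adj a b :=
          (SimpleGraph.sdiff_adj _ _ _ _).2 ⟨hGl, hne⟩
        rcases ha with ha | ha
        · exact Or.inl (ha.trans hab'.reachable)
        · exact absurd (hconfL a b hGl).1 (fun h => hdisj a h ha.1)
      · -- an edge of Gr
        rcases ha with ha | ha
        · exact absurd (hreachL a ha) (fun h => hdisj a h (hconfR a b hGr).1)
        · exact Or.inr ⟨(hconfR a b hGr).2, ha.2⟩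
    · -- the bridging edge
      rw [SimpleGraph.edge_adj] at hedge
      obtain ⟨ha1, hb1⟩ | ⟨ha1, hb1⟩ := hedge.1
      · rcases ha with ha | ha
        · exact Or.inr ⟨by rw [hb1]; exact hgr, by rw [← ha1]; exact ha⟩
        · exact absurd (show a ∈ L by rw [ha1]; exact hgl) (fun h => hdisj a h ha.1)
      · rcases ha with ha | ha
        · exact absurd (hreachL a ha) (fun h => hdisj a h (by rw [ha1]; exact hgr))
        · exact Or.inl (by rw [hb1]; exact ha.2)
  have hvX : v ∈ X := reach_closed hclosed hreach (Or.inl (SimpleGraph.Reachable.refl u))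
  rcases hvX with hv | hv
  · exact hbr hv
  · exact hdisj v (hconfL u v huv).2 hv.1

lemma plan_to_tree [Fintype ι] (sch : ι → Finset A) :
    ∀ P : Plan ι, P.leaves.Nodup →
    (∀ q ∈ P.subplans, ∃ g ∈ q.rels, interface sch Finset.univ q ⊆ sch g) →
    ∃ G : SimpleGraph ι,
      (∀ u v, G.Adj u v → u ∈ P.rels ∧ v ∈ P.rels) ∧
      (∀ u v, u ∈ P.rels → v ∈ P.rels → G.Reachable u v) ∧
      G.IsAcyclic ∧
      (∀ p q, p ∈ P.rels → q ∈ P.rels → ∀ (W : G.Walk p q), W.IsPath →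
        ∀ x ∈ W.support, sch p ∩ sch q ⊆ sch x) ∧
      (∀ g, g ∈ P.rels → interface sch Finset.univ P ⊆ sch g →
        ∀ p, p ∈ P.rels → ∀ a, a ∈ sch p → a ∈ attrs sch (Finset.univ \ P.rels) →
          ∀ (W : G.Walk p g), W.IsPath → ∀ x ∈ W.support, a ∈ sch x) := by
  intro P
  induction P with
  | leaf i =>
      intro _ _
      refine ⟨⊥, ?_, ?_, ?_, ?_, ?_⟩
      · intro u v h; exact absurd h (by simp)
      · intro u v hu hv
        have hu' : u = i := by simpa [Plan.rels] using hu
        have hv' : v = i := by simpa [Plan.rels] using hv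
        subst hu'; subst hv'
        exact SimpleGraph.Reachable.refl _
      · exact SimpleGraph.isAcyclic_bot
      · intro p q hp hq W hW x hx
        cases W with
        | nil =>
            rw [SimpleGraph.Walk.support_nil, List.mem_singleton] at hx
            subst hx
            exact Finset.inter_subset_left
        | cons h _ => exact absurd h (by simp)
      · intro g hgm hcov p hp a hap haout W hW x hx
        cases W with
        | nil =>
            rw [SimpleGraph.Walk.support_nil, List.mem_singleton] at hx
            subst hx; exact hap
        | cons h _ => exact absurd h (by simp)
  | node l r ihl ihr =>
      intro hnd hg
      have hndlr : l.leaves.Nodup ∧ r.leaves.Nodup ∧ ∀ x ∈ l.leaves, x ∉ r.leaves := by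
        have h0 : (l.leaves ++ r.leaves).Nodup := hnd
        rw [List.nodup_append] at h0
        exact ⟨h0.1, h0.2.1, fun x hx hx' => h0.2.2 x hx x hx' rfl⟩
      have hdisj : ∀ x, x ∈ l.rels → x ∈ r.rels → False := fun x hx hx' =>
        hndlr.2.2 x ((Plan.mem_leaves_iff _ _).2 hx) ((Plan.mem_leaves_iff _ _).2 hx')
      have hsubl : ∀ q ∈ l.subplans, q ∈ (Plan.node l r).subplans := fun q hq =>
        List.mem_cons_of_mem _ (List.mem_append_left _ hq)
      have hsubr : ∀ q ∈ r.subplans, q ∈ (Plan.node l r).subplans := fun q hq =>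
        List.mem_cons_of_mem _ (List.mem_append_right _ hq)
      obtain ⟨Gl, hconfL, hreachL, hacL, hiL, hiiL⟩ := ihl hndlr.1 (fun q hq => hg q (hsubl q hq))
      obtain ⟨Gr, hconfR, hreachR, hacR, hiR, hiiR⟩ := ihr hndlr.2.1 (fun q hq => hg q (hsubr q hq))
      obtain ⟨gl, hglm, hglc⟩ := hg l (hsubl l l.self_mem_subplans)
      obtain ⟨gr, hgrm, hgrc⟩ := hg r (hsubr r r.self_mem_subplans)
      have hglgr : gl ≠ gr := fun h => hdisj gl hglm (h ▸ hgrm)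
      set Gb := Gl ⊔ Gr ⊔ SimpleGraph.edge gl gr with hGb
      have hle1 : Gl ≤ Gb := le_trans le_sup_left le_sup_left
      have hle2 : Gr ≤ Gb := le_trans le_sup_right le_sup_left
      have hadjglgr : Gb.Adj gl gr := by
        apply (SimpleGraph.sup_adj _ _ _ _).2
        right
        rw [SimpleGraph.edge_adj]
        exact ⟨Or.inl ⟨rfl, rfl⟩, hglgr⟩
      have hmem : ∀ x, x ∈ (Plan.node l r).rels ↔ x ∈ l.rels ∨ x ∈ r.rels :=
        fun x => Finset.mem_union
      have hconfB : ∀ u v, Gb.Adj u v →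
          u ∈ (Plan.node l r).rels ∧ v ∈ (Plan.node l r).rels := by
        intro u v h
        rcases (SimpleGraph.sup_adj _ _ _ _).1 h with h' | h'
        · rcases (SimpleGraph.sup_adj _ _ _ _).1 h' with h'' | h''
          · exact ⟨(hmem u).2 (Or.inl (hconfL u v h'').1), (hmem v).2 (Or.inl (hconfL u v h'').2)⟩
          · exact ⟨(hmem u).2 (Or.inr (hconfR u v h'').1), (hmem v).2 (Or.inr (hconfR u v h'').2)⟩
        · rw [SimpleGraph.edge_adj] at h'
          obtain ⟨h1, h2⟩ | ⟨h1, h2⟩ := h'.1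
          · exact ⟨(hmem u).2 (Or.inl (by rw [h1]; exact hglm)),
              (hmem v).2 (Or.inr (by rw [h2]; exact hgrm))⟩
          · exact ⟨(hmem u).2 (Or.inr (by rw [h1]; exact hgrm)),
              (hmem v).2 (Or.inl (by rw [h2]; exact hglm))⟩
      have hreachB : ∀ u v, u ∈ (Plan.node l r).rels → v ∈ (Plan.node l r).rels →
          Gb.Reachable u v := by
        have h1 : ∀ u, u ∈ (Plan.node l r).rels → Gb.Reachable u gl := by
          intro u hu
          rcases (hmem u).1 hu with h | h
          · exact (hreachL u gl h hglm).mono hle1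
          · exact ((hreachR u gr h hgrm).mono hle2).trans hadjglgr.reachable.symm
        intro u v hu hv
        exact (h1 u hu).trans (h1 v hv).symm
      have hacB : Gb.IsAcyclic := by
        rw [SimpleGraph.isAcyclic_iff_forall_adj_isBridge]
        intro u v huv
        rw [SimpleGraph.isBridge_iff]
        rcases (SimpleGraph.sup_adj _ _ _ _).1 huv with h' | h'
        · rcases (SimpleGraph.sup_adj _ _ _ _).1 h' with h'' | h''
          · have hbr : ¬(Gl \ SimpleGraph.fromEdgeSet {s(u,v)}).Reachable u v :=
              ((SimpleGraph.isBridge_iff).1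
                ((SimpleGraph.isAcyclic_iff_forall_adj_isBridge).1 hacL h''))
            exact bridge_preserved hconfL hconfR hdisj hglm hgrm hbr h''
          · have hbr : ¬(Gr \ SimpleGraph.fromEdgeSet {s(u,v)}).Reachable u v :=
              ((SimpleGraph.isBridge_iff).1
                ((SimpleGraph.isAcyclic_iff_forall_adj_isBridge).1 hacR h''))
            have hswap : Gb = Gr ⊔ Gl ⊔ SimpleGraph.edge gr gl := by
              rw [hGb, sup_comm Gl Gr]
              congr 1
              show SimpleGraph.fromEdgeSet {s(gl,gr)} = SimpleGraph.fromEdgeSet {s(gr,gl)}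
              rw [Sym2.eq_swap]
            rw [hswap]
            exact bridge_preserved hconfR hconfL (fun x hx hx' => hdisj x hx' hx)
              hgrm hglm hbr h''
        · rw [SimpleGraph.edge_adj] at h'
          have hkey : ¬(Gb \ SimpleGraph.fromEdgeSet {s(gl,gr)}).Reachable gl gr := by
            intro hre
            have hclosed : ∀ a b, (Gb \ SimpleGraph.fromEdgeSet {s(gl,gr)}).Adj a b →
                a ∈ (↑l.rels : Set ι) → b ∈ (↑l.rels : Set ι) := by
              intro a b hab ha
              obtain ⟨hadj', hne⟩ := (SimpleGraph.sdiff_adj _ _ _ _).1 hab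
              rcases (SimpleGraph.sup_adj _ _ _ _).1 hadj' with h'' | h''
              · rcases (SimpleGraph.sup_adj _ _ _ _).1 h'' with h3 | h3
                · exact (hconfL a b h3).2
                · exact absurd (hconfR a b h3).1 (fun h4 => hdisj a ha h4)
              · exact absurd h'' hne
            have : gr ∈ (↑l.rels : Set ι) := reach_closed hclosed hre hglm
            exact hdisj gr this hgrm
          obtain ⟨h1, h2⟩ | ⟨h1, h2⟩ := h'.1
          · rw [h1, h2]; exact hkey
          · rw [h1, h2]
            intro hre
            apply hkey
            rw [Sym2.eq_swap]
            exact hre.symm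
      have pathL : ∀ x y, x ∈ l.rels → y ∈ l.rels →
          ∃ W : Gl.Walk x y, W.IsPath ∧ ∀ z ∈ W.support, z ∈ l.rels := by
        intro x y hx hy
        obtain ⟨W⟩ := hreachL x y hx hy
        exact ⟨W.bypass, W.bypass_isPath, fun z hz =>
          walk_closed (X := (↑l.rels : Set ι)) (fun a b hab ha => (hconfL a b hab).2)
            W hx z (W.support_bypass_subset hz)⟩
      have pathR : ∀ x y, x ∈ r.rels → y ∈ r.rels →
          ∃ W : Gr.Walk x y, W.IsPath ∧ ∀ z ∈ W.support, z ∈ r.rels := by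
        intro x y hx hy
        obtain ⟨W⟩ := hreachR x y hx hy
        exact ⟨W.bypass, W.bypass_isPath, fun z hz =>
          walk_closed (X := (↑r.rels : Set ι)) (fun a b hab ha => (hconfR a b hab).2)
            W hx z (W.support_bypass_subset hz)⟩
      have huniq : ∀ (x y : ι) (W W' : Gb.Walk x y), W.IsPath → W'.IsPath →
          W.support = W'.support := by
        intro x y W W' h h'
        have := SimpleGraph.isAcyclic_iff_path_unique.1 hacB ⟨W, h⟩ ⟨W', h'⟩
        exact congrArg SimpleGraph.Walk.support (congrArg Subtype.val this)
      have houtl : ∀ a, a ∈ attrs sch (Finset.univ \ (Plan.node l r).rels) →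
          a ∈ attrs sch (Finset.univ \ l.rels) := by
        intro a ha
        obtain ⟨w, hw, haw⟩ := mem_attrs.1 ha
        exact mem_attrs.2 ⟨w, Finset.mem_sdiff.2 ⟨Finset.mem_univ _,
          fun h => (Finset.mem_sdiff.1 hw).2 ((hmem w).2 (Or.inl h))⟩, haw⟩
      have houtr : ∀ a, a ∈ attrs sch (Finset.univ \ (Plan.node l r).rels) →
          a ∈ attrs sch (Finset.univ \ r.rels) := by
        intro a ha
        obtain ⟨w, hw, haw⟩ := mem_attrs.1 ha
        exact mem_attrs.2 ⟨w, Finset.mem_sdiff.2 ⟨Finset.mem_univ _,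
          fun h => (Finset.mem_sdiff.1 hw).2 ((hmem w).2 (Or.inr h))⟩, haw⟩
      refine ⟨Gb, hconfB, hreachB, hacB, ?_, ?_⟩
      · -- condition (i)
        intro p q hp hq W hW x hx a ha
        obtain ⟨hap, haq⟩ := Finset.mem_inter.1 ha
        rcases (hmem p).1 hp with hpl | hpr <;> rcases (hmem q).1 hq with hql | hqr
        · -- both in l
          obtain ⟨W0, hW0, _⟩ := pathL p q hpl hql
          have hx' : x ∈ W0.support := by
            have := huniq p q W (W0.mapLe hle1) hW (hW0.mapLe hle1)
            rw [this, support_mapLe] at hx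
            exact hx
          exact hiL p q hpl hql W0 hW0 x hx' (Finset.mem_inter.2 ⟨hap, haq⟩)
        · -- p ∈ l, q ∈ r
          obtain ⟨W1, hW1, hW1s⟩ := pathL p gl hpl hglm
          obtain ⟨W2, hW2, hW2s⟩ := pathR gr q hgrm hqr
          obtain ⟨Wc, hWc, hWcs⟩ := cross_path hle1 hle2 hdisj hadjglgr W1 W2 hW1 hW2 hW1s hW2s
          have hx' : x ∈ W1.support ∨ x ∈ W2.support := by
            have := huniq p q W Wc hW hWc
            rw [this, hWcs] at hx
            exact List.mem_append.1 hx
          rcases hx' with hx' | hx'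
          · exact hiiL gl hglm hglc p hpl a hap
              (mem_attrs.2 ⟨q, Finset.mem_sdiff.2 ⟨Finset.mem_univ _,
                fun h => hdisj q h hqr⟩, haq⟩) W1 hW1 x hx'
          · exact hiiR gr hgrm hgrc q hqr a haq
              (mem_attrs.2 ⟨p, Finset.mem_sdiff.2 ⟨Finset.mem_univ _,
                fun h => hdisj p hpl h⟩, hap⟩) W2.reverse hW2.reverse x
              (by rw [SimpleGraph.Walk.support_reverse]; exact List.mem_reverse.2 hx')
        · -- p ∈ r, q ∈ l
          obtain ⟨W1, hW1, hW1s⟩ := pathR p gr hpr hgrm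
          obtain ⟨W2, hW2, hW2s⟩ := pathL gl q hglm hql
          obtain ⟨Wc, hWc, hWcs⟩ := cross_path hle2 hle1 (fun z hz hz' => hdisj z hz' hz)
            hadjglgr.symm W1 W2 hW1 hW2 hW1s hW2s
          have hx' : x ∈ W1.support ∨ x ∈ W2.support := by
            have := huniq p q W Wc hW hWc
            rw [this, hWcs] at hx
            exact List.mem_append.1 hx
          rcases hx' with hx' | hx'
          · exact hiiR gr hgrm hgrc p hpr a hap
              (mem_attrs.2 ⟨q, Finset.mem_sdiff.2 ⟨Finset.mem_univ _,
                fun h => hdisj q hql h⟩, haq⟩) W1 hW1 x hx'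
          · exact hiiL gl hglm hglc q hql a haq
              (mem_attrs.2 ⟨p, Finset.mem_sdiff.2 ⟨Finset.mem_univ _,
                fun h => hdisj p h hpr⟩, hap⟩) W2.reverse hW2.reverse x
              (by rw [SimpleGraph.Walk.support_reverse]; exact List.mem_reverse.2 hx')
        · -- both in r
          obtain ⟨W0, hW0, _⟩ := pathR p q hpr hqr
          have hx' : x ∈ W0.support := by
            have := huniq p q W (W0.mapLe hle2) hW (hW0.mapLe hle2)
            rw [this, support_mapLe] at hx
            exact hx
          exact hiR p q hpr hqr W0 hW0 x hx' (Finset.mem_inter.2 ⟨hap, haq⟩)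
      · -- condition (ii)
        intro g hgm hgcov p hp a hap haout W hW x hx
        have hag : a ∈ sch g := hgcov (Finset.mem_inter.2 ⟨mem_attrs.2 ⟨p, hp, hap⟩, haout⟩)
        rcases (hmem p).1 hp with hpl | hpr <;> rcases (hmem g).1 hgm with hgl' | hgr'
        · -- both in l
          obtain ⟨W0, hW0, _⟩ := pathL p g hpl hgl'
          have hx' : x ∈ W0.support := by
            have := huniq p g W (W0.mapLe hle1) hW (hW0.mapLe hle1)
            rw [this, support_mapLe] at hx
            exact hx
          exact hiL p g hpl hgl' W0 hW0 x hx' (Finset.mem_inter.2 ⟨hap, hag⟩)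
        · -- p ∈ l, g ∈ r
          obtain ⟨W1, hW1, hW1s⟩ := pathL p gl hpl hglm
          obtain ⟨W3, hW3, hW3s⟩ := pathR gr g hgrm hgr'
          obtain ⟨Wc, hWc, hWcs⟩ := cross_path hle1 hle2 hdisj hadjglgr W1 W3 hW1 hW3 hW1s hW3s
          have hx' : x ∈ W1.support ∨ x ∈ W3.support := by
            have := huniq p g W Wc hW hWc
            rw [this, hWcs] at hx
            exact List.mem_append.1 hx
          rcases hx' with hx' | hx'
          · exact hiiL gl hglm hglc p hpl a hap (houtl a haout) W1 hW1 x hx'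
          · exact hiiR gr hgrm hgrc g hgr' a hag (houtr a haout) W3.reverse hW3.reverse x
              (by rw [SimpleGraph.Walk.support_reverse]; exact List.mem_reverse.2 hx')
        · -- p ∈ r, g ∈ l
          obtain ⟨W1, hW1, hW1s⟩ := pathR p gr hpr hgrm
          obtain ⟨W3, hW3, hW3s⟩ := pathL gl g hglm hgl'
          obtain ⟨Wc, hWc, hWcs⟩ := cross_path hle2 hle1 (fun z hz hz' => hdisj z hz' hz)
            hadjglgr.symm W1 W3 hW1 hW3 hW1s hW3s
          have hx' : x ∈ W1.support ∨ x ∈ W3.support := by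
            have := huniq p g W Wc hW hWc
            rw [this, hWcs] at hx
            exact List.mem_append.1 hx
          rcases hx' with hx' | hx'
          · exact hiiR gr hgrm hgrc p hpr a hap (houtr a haout) W1 hW1 x hx'
          · exact hiiL gl hglm hglc g hgl' a hag (houtl a haout) W3.reverse hW3.reverse x
              (by rw [SimpleGraph.Walk.support_reverse]; exact List.mem_reverse.2 hx')
        · -- both in r
          obtain ⟨W0, hW0, _⟩ := pathR p g hpr hgr'
          have hx' : x ∈ W0.support := by
            have := huniq p g W (W0.mapLe hle2) hW (hW0.mapLe hle2)
            rw [this, support_mapLe] at hx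
            exact hx
          exact hiR p g hpr hgr' W0 hW0 x hx' (Finset.mem_inter.2 ⟨hap, hag⟩)


/-- A conjunctive query admits a width-1 query plan if and only if it is acyclic
(i.e., it admits a join tree). -/
theorem stmt_5 [Fintype ι] [Nonempty ι] (sch : ι → Finset A) :
    (∃ P : Plan ι, P.leaves.Nodup ∧ P.rels = Finset.univ ∧
        planWidth sch P.rels P ≤ 1) ↔
      ∃ G : SimpleGraph ι, JoinTree G sch := by
  constructor
  · rintro ⟨P, hnd, hrels, hw⟩
    rw [hrels] at hw
    have hg : ∀ q ∈ P.subplans, ∃ g ∈ q.rels, interface sch Finset.univ q ⊆ sch g := by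
      intro q hq
      apply exists_guard
      exact (foldr_max_le_s5 _ 1).1 hw (nodeWidth sch Finset.univ q)
        (List.mem_map_of_mem hq)
    obtain ⟨G, hconf, hreach, hac, hi, _⟩ := plan_to_tree sch P hnd hg
    refine ⟨G, (SimpleGraph.isTree_iff _).2 ⟨⟨fun u v => ?_⟩, hac⟩, ?_⟩
    · exact hreach u v (by rw [hrels]; exact Finset.mem_univ u)
        (by rw [hrels]; exact Finset.mem_univ v)
    · intro p q W hW x hx
      exact hi p q (by rw [hrels]; exact Finset.mem_univ p)
        (by rw [hrels]; exact Finset.mem_univ q) W hW x hx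
  · rintro ⟨G, H⟩
    have hconnU : ∀ u v : ι, u ∈ (Finset.univ : Finset ι) → v ∈ (Finset.univ : Finset ι) →
        ReachIn G ↑(Finset.univ : Finset ι) u v := by
      intro u v _ _
      obtain ⟨W⟩ := ((SimpleGraph.isTree_iff _).mp H.1).1.preconnected u v
      exact ⟨W, fun x _ => by simp⟩
    obtain ⟨P, hrels, hnd, hgu⟩ := tree_to_plan H (Fintype.card ι) Finset.univ
      (by rw [Finset.card_univ]) (Classical.arbitrary ι) (Finset.mem_univ _)
      hconnU (fun a v w _ hw _ _ => absurd (Finset.mem_univ w) hw)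
    refine ⟨P, hnd, hrels, ?_⟩
    rw [hrels]
    apply (foldr_max_le_s5 _ 1).2
    intro x hx
    obtain ⟨q, hq, rfl⟩ := List.mem_map.1 hx
    obtain ⟨g, hgm, hgc⟩ := hgu q hq
    exact nodeWidth_le_one hgm hgc
end

section
/- Let H be an acyclic hypergraph. If S = {e_1, ..., e_n} (n ≥ 2) is a set of distinct ears of H such that o(e_1, H) = ... = o(e_n, H) = o, then the hypergraph H' with hyperedge set (E(H) \ S) ∪ {o} (and vertex set the union of its hyperedges) is acyclic. -/
variable {A : Type*} [DecidableEq A]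

/-- The overlap `o(e, H)` of a hyperedge `e` with the remaining hyperedges of
the hypergraph with hyperedge set `E`. -/
def overlap (E : Finset (Finset A)) (e : Finset A) : Finset A :=
  e ∩ (E.erase e).sup id

/-- A hyperedge `e` of `E` is an ear if some other hyperedge contains its
overlap with the remaining hyperedges, or if it is the only hyperedge. -/
def IsEar (E : Finset (Finset A)) (e : Finset A) : Prop :=
  e ∈ E ∧ ((∃ e' ∈ E, e' ≠ e ∧ overlap E e ⊆ e') ∨ E = {e})

/-- A hypergraph (given by its hyperedge set) is acyclic if it admits a join
tree. -/
def HGAcyclic (E : Finset (Finset A)) : Prop :=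
  ∃ G : SimpleGraph {f // f ∈ E}, G.IsTree ∧
    ∀ (p q : {f // f ∈ E}) (W : G.Walk p q), W.IsPath →
      ∀ s ∈ W.support, (p : Finset A) ∩ (q : Finset A) ⊆ (s : Finset A)

namespace Stmt7

open SimpleGraph


variable {A : Type*} [DecidableEq A]

/-- membership predicate for kept vertices -/
def Dmem (S : Finset (Finset A)) (o : Finset A) {E : Finset (Finset A)}
    (u : {f // f ∈ E}) : Prop := u.1 ∉ S ∧ u.1 ≠ o

/-- the induced "forest" graph on kept vertices -/
def GD (S : Finset (Finset A)) (o : Finset A) {E : Finset (Finset A)}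
    (G : SimpleGraph {f // f ∈ E}) : SimpleGraph {f // f ∈ E} where
  Adj u v := G.Adj u v ∧ Dmem S o u ∧ Dmem S o v
  symm := ⟨fun u v h => ⟨h.1.symm, h.2.2, h.2.1⟩⟩
  loopless := ⟨fun u h => G.irrefl h.1⟩

lemma GD_adj_iff (S : Finset (Finset A)) (o : Finset A) {E : Finset (Finset A)}
    {G : SimpleGraph {f // f ∈ E}} {u v : {f // f ∈ E}} :
    (GD S o G).Adj u v ↔ G.Adj u v ∧ Dmem S o u ∧ Dmem S o v := Iff.rfl

lemma GD_le (S : Finset (Finset A)) (o : Finset A) {E : Finset (Finset A)}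
    (G : SimpleGraph {f // f ∈ E}) : GD S o G ≤ G := fun _ _ h => h.1

lemma ho_mem_E' (E S : Finset (Finset A)) (o : Finset A) :
    o ∈ (E \ S) ∪ ({o} : Finset (Finset A)) :=
  Finset.mem_union_right _ (Finset.mem_singleton_self o)

lemma mem_E_of_ne {E S : Finset (Finset A)} {o : Finset A}
    (x : {f // f ∈ (E \ S) ∪ ({o} : Finset (Finset A))}) (hx : x.1 ≠ o) :
    x.1 ∈ E ∧ x.1 ∉ S := by
  have := x.2
  rcases Finset.mem_union.1 this with h | h
  · exact ⟨(Finset.mem_sdiff.1 h).1, (Finset.mem_sdiff.1 h).2⟩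
  · exact absurd (Finset.mem_singleton.1 h) hx

/-- map from new vertices to old vertices -/
def psi {E S : Finset (Finset A)} {o : Finset A} (v₀ : {f // f ∈ E})
    (x : {f // f ∈ (E \ S) ∪ ({o} : Finset (Finset A))}) : {f // f ∈ E} :=
  if h : x.1 ∈ E then ⟨x.1, h⟩ else v₀

/-- map from old vertices to new vertices -/
def phi {E : Finset (Finset A)} (S : Finset (Finset A)) (o : Finset A)
    (u : {f // f ∈ E}) : {f // f ∈ (E \ S) ∪ ({o} : Finset (Finset A))} :=
  if h : u.1 ∈ (E \ S) ∪ ({o} : Finset (Finset A)) then ⟨u.1, h⟩ else ⟨o, ho_mem_E' E S o⟩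

lemma psi_val {E S : Finset (Finset A)} {o : Finset A} (v₀ : {f // f ∈ E})
    (x : {f // f ∈ (E \ S) ∪ ({o} : Finset (Finset A))}) (hx : x.1 ≠ o) :
    (psi v₀ x).1 = x.1 := by
  have h := (mem_E_of_ne x hx).1
  simp [psi, h]

lemma Dmem_psi {E S : Finset (Finset A)} {o : Finset A} (v₀ : {f // f ∈ E})
    (x : {f // f ∈ (E \ S) ∪ ({o} : Finset (Finset A))}) (hx : x.1 ≠ o) :
    Dmem S o (psi v₀ x) := by
  have h := mem_E_of_ne x hx
  constructor
  · rw [psi_val v₀ x hx]; exact h.2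
  · rw [psi_val v₀ x hx]; exact hx

lemma phi_psi {E S : Finset (Finset A)} {o : Finset A} (v₀ : {f // f ∈ E})
    (x : {f // f ∈ (E \ S) ∪ ({o} : Finset (Finset A))}) (hx : x.1 ≠ o) :
    phi S o (psi v₀ x) = x :=
  Subtype.ext (by rw [phi, dif_pos (by rw [psi_val v₀ x hx]; exact x.2)]; exact psi_val v₀ x hx)

lemma mem_E'_of_Dmem {E S : Finset (Finset A)} {o : Finset A} {u : {f // f ∈ E}}
    (hu : Dmem S o u) : u.1 ∈ (E \ S) ∪ ({o} : Finset (Finset A)) :=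
  Finset.mem_union_left _ (Finset.mem_sdiff.2 ⟨u.2, hu.1⟩)

lemma phi_val {E S : Finset (Finset A)} {o : Finset A} {u : {f // f ∈ E}}
    (hu : Dmem S o u) : (phi S o u).1 = u.1 := by
  rw [phi, dif_pos (mem_E'_of_Dmem hu)]

lemma psi_phi {E S : Finset (Finset A)} {o : Finset A} (v₀ : {f // f ∈ E})
    {u : {f // f ∈ E}} (hu : Dmem S o u) : psi v₀ (phi S o u) = u := by
  apply Subtype.ext
  rw [psi_val v₀ _ (by rw [phi_val hu]; exact hu.2), phi_val hu]

lemma psi_inj {E S : Finset (Finset A)} {o : Finset A} (v₀ : {f // f ∈ E})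
    {x y : {f // f ∈ (E \ S) ∪ ({o} : Finset (Finset A))}} (hx : x.1 ≠ o) (hy : y.1 ≠ o)
    (h : psi v₀ x = psi v₀ y) : x = y := by
  apply Subtype.ext
  rw [← psi_val v₀ x hx, ← psi_val v₀ y hy, h]


-- generic walk lemmas
variable {V : Type*} {G : SimpleGraph V}

lemma walk_eq_of_support_eq : ∀ {u v : V} (W₁ W₂ : G.Walk u v),
    W₁.support = W₂.support → W₁ = W₂ := by
  intro u v W₁
  induction W₁ with
  | nil =>
    intro W₂ h
    cases W₂ with
    | nil => rfl
    | cons h₂ W₂' =>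
      simp only [Walk.support_nil, Walk.support_cons] at h
      exact absurd h.symm (by simp [Walk.support_ne_nil])
  | cons h₁ W₁' ih =>
    intro W₂ h
    cases W₂ with
    | nil =>
      simp only [Walk.support_nil, Walk.support_cons] at h
      exact absurd h (by simp [Walk.support_ne_nil])
    | cons h₂ W₂' =>
      simp only [Walk.support_cons, List.cons.injEq] at h
      obtain ⟨-, h⟩ := h
      have h' := h
      rw [W₁'.support_eq_cons, W₂'.support_eq_cons, List.cons.injEq] at h'
      obtain ⟨hv, -⟩ := h'
      subst hv
      rw [ih W₂' h]

lemma path_self_nil {u : V} (W : G.Walk u u) (h : W.IsPath) : W = Walk.nil := by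
  cases W with
  | nil => rfl
  | cons h₁ W' =>
    rw [Walk.cons_isPath_iff] at h
    exact absurd (Walk.end_mem_support W') h.2

lemma reverse_inj {u v : V} (W₁ W₂ : G.Walk u v) (h : W₁.reverse = W₂.reverse) : W₁ = W₂ := by
  have := congrArg Walk.reverse h
  simpa using this


section Main

variable {E S : Finset (Finset A)} {o : Finset A}

/-- every support vertex of a GD-walk is in D -/
lemma GD_walk_support {G : SimpleGraph {f // f ∈ E}} :
    ∀ {u v : {f // f ∈ E}} (W : (GD S o G).Walk u v), Dmem S o u →
      ∀ s ∈ W.support, Dmem S o s := by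
  intro u v W
  induction W with
  | nil => intro hu s hs; rw [Walk.support_nil, List.mem_singleton] at hs; subst hs; exact hu
  | cons h W' ih =>
    intro hu s hs
    rw [Walk.support_cons, List.mem_cons] at hs
    rcases hs with rfl | hs
    · exact hu
    · exact ih h.2.2 s hs

/-- a G-walk all of whose vertices are in D is a GD-walk (reachability form) -/
lemma allD_reach {G : SimpleGraph {f // f ∈ E}} :
    ∀ {u v : {f // f ∈ E}} (W : G.Walk u v), (∀ s ∈ W.support, Dmem S o s) →
      (GD S o G).Reachable u v := by
  intro u v W
  induction W with
  | nil => intro _; exact Reachable.refl _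
  | cons h W' ih =>
    intro hall
    have hu : Dmem S o _ := hall _ (Walk.start_mem_support _)
    have hx : Dmem S o _ := hall _ (by rw [Walk.support_cons]; exact List.mem_cons_of_mem _ (Walk.start_mem_support _))
    exact (Adj.reachable ((GD_adj_iff S o).2 ⟨h, hu, hx⟩)).trans (ih (fun s hs => hall s (by rw [Walk.support_cons]; exact List.mem_cons_of_mem _ hs)))

/-- boundary lemma: from a D-vertex one can reach (inside GD) a D-vertex adjacent to a non-D vertex -/
lemma boundary {G : SimpleGraph {f // f ∈ E}} :
    ∀ {u v : {f // f ∈ E}} (W : G.Walk u v), Dmem S o u → ¬ Dmem S o v →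
      ∃ a, (GD S o G).Reachable u a ∧ Dmem S o a ∧ ∃ w, G.Adj a w ∧ ¬ Dmem S o w := by
  intro u v W
  induction W with
  | nil => intro hu hv; exact absurd hu hv
  | @cons u x v h W' ih =>
    intro hu hv
    by_cases hx : Dmem S o x
    · obtain ⟨a, hr, ha, hw⟩ := ih hx hv
      exact ⟨a, (Adj.reachable ((GD_adj_iff S o).2 ⟨h, hu, hx⟩)).trans hr, ha, hw⟩
    · exact ⟨u, Reachable.refl _, hu, x, h, hx⟩

/-- property of a good attachment vertex for a component -/
def attP (G : SimpleGraph {f // f ∈ E}) (K : (GD S o G).ConnectedComponent)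
    (a : {f // f ∈ E}) : Prop :=
  (GD S o G).connectedComponentMk a = K ∧ Dmem S o a ∧
    ∃ w, G.Adj a w ∧ ¬ Dmem S o w

noncomputable def att (G : SimpleGraph {f // f ∈ E}) (v₀ : {f // f ∈ E})
    (K : (GD S o G).ConnectedComponent) : {f // f ∈ E} :=
  @dite _ (∃ a, attP G K a) (Classical.propDecidable _) (fun h => h.choose) (fun _ => v₀)

lemma att_spec {G : SimpleGraph {f // f ∈ E}} {v₀ u : {f // f ∈ E}}
    (hconn : G.Connected) (hv₀ : ¬ Dmem S o v₀) (hu : Dmem S o u) :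
    attP G ((GD S o G).connectedComponentMk u) (att G v₀ ((GD S o G).connectedComponentMk u)) := by
  have hex : ∃ a, attP G ((GD S o G).connectedComponentMk u) a := by
    obtain ⟨a, hr, ha, hw⟩ := boundary ((hconn.preconnected u v₀).some) hu hv₀
    exact ⟨a, (ConnectedComponent.sound hr).symm, ha, hw⟩
  rw [att, dif_pos hex]
  exact hex.choose_spec

/-- whether a new vertex is the chosen attachment of its component -/
def IsAtt (G : SimpleGraph {f // f ∈ E}) (v₀ : {f // f ∈ E})
    (x : {f // f ∈ (E \ S) ∪ ({o} : Finset (Finset A))}) : Prop :=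
  x.1 ≠ o ∧ att G v₀ ((GD S o G).connectedComponentMk (psi v₀ x)) = psi v₀ x

/-- the new graph -/
def G' (S' : Finset (Finset A)) (o' : Finset A) {E : Finset (Finset A)}
    (G : SimpleGraph {f // f ∈ E}) (v₀ : {f // f ∈ E}) :
    SimpleGraph {f // f ∈ (E \ S') ∪ ({o'} : Finset (Finset A))} where
  Adj x y := (x.1 ≠ o' ∧ y.1 ≠ o' ∧ G.Adj (psi v₀ x) (psi v₀ y))
    ∨ (x.1 = o' ∧ IsAtt G v₀ y) ∨ (y.1 = o' ∧ IsAtt G v₀ x)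
  symm := ⟨fun x y h => by
    rcases h with ⟨hx, hy, h⟩ | ⟨hx, hy⟩ | ⟨hx, hy⟩
    · exact Or.inl ⟨hy, hx, h.symm⟩
    · exact Or.inr (Or.inr ⟨hx, hy⟩)
    · exact Or.inr (Or.inl ⟨hx, hy⟩)⟩
  loopless := ⟨fun x h => by
    rcases h with ⟨hx, hy, h⟩ | ⟨hx, hy⟩ | ⟨hx, hy⟩
    · exact G.irrefl h
    · exact hy.1 hx
    · exact hy.1 hx⟩

lemma G'_adj_iff {G : SimpleGraph {f // f ∈ E}} {v₀ : {f // f ∈ E}}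
    {x y : {f // f ∈ (E \ S) ∪ ({o} : Finset (Finset A))}} :
    (G' S o G v₀).Adj x y ↔ (x.1 ≠ o ∧ y.1 ≠ o ∧ G.Adj (psi v₀ x) (psi v₀ y))
      ∨ (x.1 = o ∧ IsAtt G v₀ y) ∨ (y.1 = o ∧ IsAtt G v₀ x) := Iff.rfl


def vo (E S : Finset (Finset A)) (o : Finset A) :
    {f // f ∈ (E \ S) ∪ ({o} : Finset (Finset A))} := ⟨o, ho_mem_E' E S o⟩

lemma val_ne_o {p : {f // f ∈ (E \ S) ∪ ({o} : Finset (Finset A))}}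
    (h : p ≠ vo E S o) : p.1 ≠ o := fun ho => h (Subtype.ext ho)

lemma ne_vo {p : {f // f ∈ (E \ S) ∪ ({o} : Finset (Finset A))}}
    (h : p.1 ≠ o) : p ≠ vo E S o := fun he => h (congrArg Subtype.val he)

/-- transfer a walk of `G'` avoiding `o` to a walk of `GD` -/
lemma transfer {G : SimpleGraph {f // f ∈ E}} {v₀ : {f // f ∈ E}} :
    ∀ {x y : {f // f ∈ (E \ S) ∪ ({o} : Finset (Finset A))}} (W : (G' S o G v₀).Walk x y),
      (∀ s ∈ W.support, s.1 ≠ o) →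
      ∃ W₂ : (GD S o G).Walk (psi v₀ x) (psi v₀ y), W₂.support = W.support.map (psi v₀) := by
  intro x y W
  induction W with
  | nil => exact fun _ => ⟨Walk.nil, by simp⟩
  | @cons u z y hadj W' ih =>
    intro h
    have hu : u.1 ≠ o := h _ (Walk.start_mem_support _)
    have hz : z.1 ≠ o := h _ (by
      rw [Walk.support_cons]; exact List.mem_cons_of_mem _ (Walk.start_mem_support _))
    have hG : G.Adj (psi v₀ u) (psi v₀ z) := by
      rcases (G'_adj_iff).1 hadj with ⟨_, _, h⟩ | ⟨h1, _⟩ | ⟨h1, _⟩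
      · exact h
      · exact absurd h1 hu
      · exact absurd h1 hz
    obtain ⟨W₂, hW₂⟩ := ih (fun s hs => h s (by rw [Walk.support_cons]; exact List.mem_cons_of_mem _ hs))
    exact ⟨Walk.cons ((GD_adj_iff S o).2 ⟨hG, Dmem_psi v₀ u hu, Dmem_psi v₀ z hz⟩) W₂,
      by rw [Walk.support_cons, hW₂, Walk.support_cons, List.map_cons]⟩

lemma comp_eq {G : SimpleGraph {f // f ∈ E}} {v₀ : {f // f ∈ E}}
    {x y : {f // f ∈ (E \ S) ∪ ({o} : Finset (Finset A))}} (W : (G' S o G v₀).Walk x y)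
    (h : ∀ s ∈ W.support, s.1 ≠ o) :
    (GD S o G).connectedComponentMk (psi v₀ x) = (GD S o G).connectedComponentMk (psi v₀ y) :=
  ConnectedComponent.sound ⟨(transfer W h).choose⟩

/-- a `GD`-walk with nodup support gives a `G`-path with the same support -/
lemma toGpath {G : SimpleGraph {f // f ∈ E}} {u v : {f // f ∈ E}}
    (W₂ : (GD S o G).Walk u v) (hnd : W₂.support.Nodup) :
    ∃ Wg : G.Walk u v, Wg.support = W₂.support ∧ Wg.IsPath := by
  have hsup : (W₂.map (Hom.ofLE (GD_le S o G))).support = W₂.support := by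
    rw [Walk.support_map]
    have : List.map (⇑(Hom.ofLE (GD_le S o G))) W₂.support
        = List.map id W₂.support := List.map_congr_left fun a _ => rfl
    rw [this, List.map_id]
  exact ⟨W₂.map (Hom.ofLE (GD_le S o G)), hsup, by
    rw [Walk.isPath_def, hsup]; exact hnd⟩

lemma map_back {v₀ : {f // f ∈ E}}
    (l : List {f // f ∈ (E \ S) ∪ ({o} : Finset (Finset A))}) (h : ∀ s ∈ l, s.1 ≠ o) :
    (l.map (psi v₀)).map (phi S o) = l := by
  rw [List.map_map]
  have : l.map (phi S o ∘ psi v₀) = l.map id :=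
    List.map_congr_left (fun a ha => phi_psi v₀ a (h a ha))
  rw [this, List.map_id]

lemma psi_support_nodup {G : SimpleGraph {f // f ∈ E}} {v₀ : {f // f ∈ E}}
    {x y : {f // f ∈ (E \ S) ∪ ({o} : Finset (Finset A))}} {W : (G' S o G v₀).Walk x y}
    (hW : W.IsPath) (h : ∀ s ∈ W.support, s.1 ≠ o) :
    (W.support.map (psi v₀)).Nodup :=
  List.Nodup.map_on (fun a ha b hb hab => psi_inj v₀ (h a ha) (h b hb) hab)
    (Walk.isPath_def _ |>.1 hW)

lemma phi_hom {G : SimpleGraph {f // f ∈ E}} {v₀ : {f // f ∈ E}}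
    {u v : {f // f ∈ E}} (h : (GD S o G).Adj u v) :
    (G' S o G v₀).Adj (phi S o u) (phi S o v) := by
  obtain ⟨hG, hu, hv⟩ := (GD_adj_iff S o (G := G)).1 h
  refine (G'_adj_iff).2 (Or.inl ⟨?_, ?_, ?_⟩)
  · rw [phi_val hu]; exact hu.2
  · rw [phi_val hv]; exact hv.2
  · rw [psi_phi v₀ hu, psi_phi v₀ hv]; exact hG

lemma reach_vo {G : SimpleGraph {f // f ∈ E}} {v₀ : {f // f ∈ E}}
    (hconn : G.Connected) (hv₀ : ¬ Dmem S o v₀)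
    (x : {f // f ∈ (E \ S) ∪ ({o} : Finset (Finset A))}) :
    (G' S o G v₀).Reachable x (vo E S o) := by
  by_cases hx : x.1 = o
  · rw [show x = vo E S o from Subtype.ext hx]
  · have hu : Dmem S o (psi v₀ x) := Dmem_psi v₀ x hx
    set K := (GD S o G).connectedComponentMk (psi v₀ x) with hK
    have ha := att_spec (v₀ := v₀) hconn hv₀ hu
    rw [← hK] at ha
    have hr : (GD S o G).Reachable (psi v₀ x) (att G v₀ K) :=
      (ConnectedComponent.exact ha.1).symm
    have hr' : (G' S o G v₀).Reachable (phi S o (psi v₀ x)) (phi S o (att G v₀ K)) :=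
      hr.map (⟨phi S o, fun h => phi_hom h⟩ : GD S o G →g G' S o G v₀)
    rw [phi_psi v₀ x hx] at hr'
    refine hr'.trans (Adj.reachable ?_)
    refine (G'_adj_iff).2 (Or.inr (Or.inr ⟨rfl, ?_, ?_⟩))
    · rw [phi_val ha.2.1]; exact ha.2.1.2
    · rw [psi_phi v₀ ha.2.1, ha.1]

lemma G'_connected {G : SimpleGraph {f // f ∈ E}} {v₀ : {f // f ∈ E}}
    (hconn : G.Connected) (hv₀ : ¬ Dmem S o v₀) : (G' S o G v₀).Connected := by
  rw [connected_iff]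
  exact ⟨fun x y => (reach_vo hconn hv₀ x).trans (reach_vo hconn hv₀ y).symm,
    ⟨vo E S o⟩⟩

lemma destruct {G : SimpleGraph {f // f ∈ E}} {v₀ : {f // f ∈ E}}
    {y : {f // f ∈ (E \ S) ∪ ({o} : Finset (Finset A))}}
    (P : (G' S o G v₀).Walk (vo E S o) y) (hP : P.IsPath) (hy : y ≠ vo E S o) :
    ∃ (x₁ : {f // f ∈ (E \ S) ∪ ({o} : Finset (Finset A))})
      (h₁ : (G' S o G v₀).Adj (vo E S o) x₁) (P' : (G' S o G v₀).Walk x₁ y),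
      P = Walk.cons h₁ P' ∧ IsAtt G v₀ x₁ ∧ P'.IsPath ∧ vo E S o ∉ P'.support := by
  obtain ⟨x₁, h₁, P', rfl⟩ := Walk.exists_eq_cons_of_ne (Ne.symm hy) P
  rw [Walk.cons_isPath_iff] at hP
  have hatt : IsAtt G v₀ x₁ := by
    rcases (G'_adj_iff).1 h₁ with ⟨h1, _, _⟩ | ⟨_, h2⟩ | ⟨_, h2⟩
    · exact absurd rfl h1
    · exact h2
    · exact absurd rfl h2.1
  exact ⟨x₁, h₁, P', rfl, hatt, hP.1, hP.2⟩

lemma avoid_of_not_mem {G : SimpleGraph {f // f ∈ E}} {v₀ : {f // f ∈ E}}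
    {x y : {f // f ∈ (E \ S) ∪ ({o} : Finset (Finset A))}} {W : (G' S o G v₀).Walk x y}
    (h : vo E S o ∉ W.support) : ∀ s ∈ W.support, s.1 ≠ o :=
  fun s hs hso => h (by rwa [show vo E S o = s from (Subtype.ext hso).symm])

section WithTree

variable {G : SimpleGraph {f // f ∈ E}} {v₀ : {f // f ∈ E}}
  (hT : G.IsTree)
  (hJ : ∀ (p q : {f // f ∈ E}) (W : G.Walk p q), W.IsPath →
      ∀ s ∈ W.support, (p : Finset A) ∩ (q : Finset A) ⊆ (s : Finset A))
  (hone : ∀ e ∈ S, o ⊆ e) (hv₀S : v₀.1 ∈ S)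

include hone in
lemma o_sub_of_not_Dmem {w : {f // f ∈ E}} (hw : ¬ Dmem S o w) : o ⊆ w.1 := by
  rw [Dmem, not_and_or, not_not, not_ne_iff] at hw
  rcases hw with hw | hw
  · exact hone _ hw
  · rw [hw]

include hT hJ hone hv₀S in
lemma subL : ∀ {y : {f // f ∈ (E \ S) ∪ ({o} : Finset (Finset A))}}
    (P : (G' S o G v₀).Walk (vo E S o) y), P.IsPath →
    ∀ s ∈ P.support, o ∩ y.1 ⊆ s.1 := by
  intro y P hP s hs
  have hv₀ : ¬ Dmem S o v₀ := fun h => h.1 hv₀S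
  by_cases hy : y = vo E S o
  · subst hy
    rw [path_self_nil P hP] at hs
    rw [Walk.support_nil, List.mem_singleton] at hs
    subst hs
    exact Finset.inter_subset_left
  · obtain ⟨x₁, h₁, P', rfl, hatt, hP', hvoP'⟩ := destruct P hP hy
    have hyo : y.1 ≠ o := val_ne_o hy
    have havoid := avoid_of_not_mem hvoP'
    -- the attachment vertex and its outside neighbor
    have hu : Dmem S o (psi v₀ x₁) := Dmem_psi v₀ x₁ hatt.1
    have hsp := att_spec (v₀ := v₀) hT.isConnected hv₀ hu
    rw [hatt.2] at hsp
    obtain ⟨-, -, w, hadj, hw⟩ := hsp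
    have how : o ⊆ w.1 := o_sub_of_not_Dmem hone hw
    -- transfer P' and build the G-path from w
    obtain ⟨W₂, hW₂⟩ := transfer P' havoid
    have hnd : W₂.support.Nodup := by rw [hW₂]; exact psi_support_nodup hP' havoid
    obtain ⟨Wg, hWsup, hWpath⟩ := toGpath W₂ hnd
    have hwni : w ∉ Wg.support := by
      rw [hWsup]
      exact fun hmem => hw (GD_walk_support W₂ hu w hmem)
    have hbig : (Walk.cons hadj.symm Wg).IsPath := hWpath.cons hwni
    have hJb := hJ w (psi v₀ y) (Walk.cons hadj.symm Wg) hbig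
    -- now distinguish where s is
    rw [Walk.support_cons, List.mem_cons] at hs
    rcases hs with rfl | hs
    · exact Finset.inter_subset_left
    · have hmem : psi v₀ s ∈ (Walk.cons hadj.symm Wg).support := by
        rw [Walk.support_cons]
        refine List.mem_cons_of_mem _ ?_
        rw [hWsup, hW₂]
        exact List.mem_map_of_mem hs
      have := hJb (psi v₀ s) hmem
      rw [psi_val v₀ s (havoid s hs)] at this
      refine subset_trans ?_ this
      rw [psi_val v₀ y hyo]
      exact Finset.inter_subset_inter how (le_refl _)

include hT hJ hone hv₀S in
lemma uniq_from_vo : ∀ {y : {f // f ∈ (E \ S) ∪ ({o} : Finset (Finset A))}}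
    (P₁ P₂ : (G' S o G v₀).Walk (vo E S o) y), P₁.IsPath → P₂.IsPath → P₁ = P₂ := by
  intro y P₁ P₂ h₁ h₂
  have hv₀ : ¬ Dmem S o v₀ := fun h => h.1 hv₀S
  by_cases hy : y = vo E S o
  · subst hy
    rw [path_self_nil P₁ h₁, path_self_nil P₂ h₂]
  · obtain ⟨x₁, ha₁, P₁', rfl, hatt₁, hP₁', hvo₁⟩ := destruct P₁ h₁ hy
    obtain ⟨x₂, ha₂, P₂', rfl, hatt₂, hP₂', hvo₂⟩ := destruct P₂ h₂ hy
    have hav₁ := avoid_of_not_mem hvo₁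
    have hav₂ := avoid_of_not_mem hvo₂
    have hc₁ := comp_eq P₁' hav₁
    have hc₂ := comp_eq P₂' hav₂
    have hx12 : x₁ = x₂ := by
      apply psi_inj v₀ hatt₁.1 hatt₂.1
      rw [← hatt₁.2, ← hatt₂.2, hc₁, hc₂]
    subst hx12
    obtain ⟨W₁, hW₁⟩ := transfer P₁' hav₁
    obtain ⟨W₂, hW₂⟩ := transfer P₂' hav₂
    obtain ⟨Wg₁, hs₁, hp₁⟩ := toGpath W₁ (by rw [hW₁]; exact psi_support_nodup hP₁' hav₁)
    obtain ⟨Wg₂, hs₂, hp₂⟩ := toGpath W₂ (by rw [hW₂]; exact psi_support_nodup hP₂' hav₂)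
    have : (⟨Wg₁, hp₁⟩ : G.Path _ _) = ⟨Wg₂, hp₂⟩ := hT.IsAcyclic.path_unique _ _
    have hWg : Wg₁ = Wg₂ := congrArg Subtype.val this
    have hsup : P₁'.support = P₂'.support := by
      have : P₁'.support.map (psi v₀) = P₂'.support.map (psi v₀) := by
        rw [← hW₁, ← hW₂, ← hs₁, ← hs₂, hWg]
      calc P₁'.support = (P₁'.support.map (psi v₀)).map (phi S o) := (map_back _ hav₁).symm
        _ = (P₂'.support.map (psi v₀)).map (phi S o) := by rw [this]
        _ = P₂'.support := map_back _ hav₂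
    rw [walk_eq_of_support_eq P₁' P₂' hsup]

omit hT hJ hone in
include hv₀S in
lemma comp_ne {p q : {f // f ∈ (E \ S) ∪ ({o} : Finset (Finset A))}}
    (W : (G' S o G v₀).Walk p q) (hW : W.IsPath) (hp : p ≠ vo E S o)
    (hq : q ≠ vo E S o) (hvo : vo E S o ∈ W.support) :
    (GD S o G).connectedComponentMk (psi v₀ p) ≠ (GD S o G).connectedComponentMk (psi v₀ q) := by
  set A := W.takeUntil _ hvo with hA
  set B := W.dropUntil _ hvo with hB
  have hApath : A.IsPath := hW.takeUntil hvo
  have hBpath : B.IsPath := hW.dropUntil hvo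
  obtain ⟨x₁, ha₁, A', hAr, hatt₁, hA'path, hvoA'⟩ := destruct A.reverse hApath.reverse hp
  obtain ⟨y₁, ha₂, B', hBr, hatt₂, hB'path, hvoB'⟩ := destruct B hBpath hq
  have hcx : (GD S o G).connectedComponentMk (psi v₀ x₁)
      = (GD S o G).connectedComponentMk (psi v₀ p) := comp_eq A' (avoid_of_not_mem hvoA')
  have hcy : (GD S o G).connectedComponentMk (psi v₀ y₁)
      = (GD S o G).connectedComponentMk (psi v₀ q) := comp_eq B' (avoid_of_not_mem hvoB')
  -- x₁ and y₁ are distinct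
  have hx₁A : x₁ ∈ A.support := by
    have : x₁ ∈ A.reverse.support := by
      rw [hAr, Walk.support_cons]
      exact List.mem_cons_of_mem _ (Walk.start_mem_support _)
    rwa [Walk.support_reverse, List.mem_reverse] at this
  have hy₁B : y₁ ∈ B.support.tail := by
    rw [hBr, Walk.support_cons, List.tail_cons]
    exact Walk.start_mem_support _
  have hnd : (A.support ++ B.support.tail).Nodup := by
    have := (Walk.isPath_def W).1 hW
    rwa [← W.take_spec hvo, Walk.support_append] at this
  have hne_xy : x₁ ≠ y₁ := fun h =>
    (List.nodup_append.1 hnd).2.2 x₁ hx₁A y₁ hy₁B h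
  intro h
  apply hne_xy
  apply psi_inj v₀ hatt₁.1 hatt₂.1
  rw [← hatt₁.2, ← hatt₂.2, hcx, hcy, h]

omit hone in
include hT hJ hv₀S in
lemma inter_sub_o (hSE : S ⊆ E)
    (hint : ∀ e ∈ S, ∀ f ∈ E, f ≠ e → e ∩ f ⊆ o)
    {p q : {f // f ∈ (E \ S) ∪ ({o} : Finset (Finset A))}}
    (W : (G' S o G v₀).Walk p q) (hW : W.IsPath) (hp : p ≠ vo E S o)
    (hq : q ≠ vo E S o) (hvo : vo E S o ∈ W.support) :
    p.1 ∩ q.1 ⊆ o := by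
  have hpo : p.1 ≠ o := val_ne_o hp
  have hqo : q.1 ≠ o := val_ne_o hq
  have hne := comp_ne hv₀S W hW hp hq hvo
  have hreach : G.Reachable (psi v₀ p) (psi v₀ q) :=
    hT.isConnected.preconnected _ _
  set P₀ := hreach.some.toPath with hP₀
  have hwex : ∃ w ∈ P₀.1.support, ¬ Dmem S o w := by
    by_contra hcon
    push_neg at hcon
    exact hne (ConnectedComponent.sound (allD_reach P₀.1 hcon))
  obtain ⟨w, hwmem, hw⟩ := hwex
  have hJw := hJ _ _ P₀.1 P₀.2 w hwmem
  rw [psi_val v₀ p hpo, psi_val v₀ q hqo] at hJw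
  rw [Dmem, not_and_or, not_not, not_ne_iff] at hw
  rcases hw with hw | hw
  · refine subset_trans (Finset.subset_inter hJw Finset.inter_subset_left) ?_
    exact hint w.1 hw p.1 (mem_E_of_ne p hpo).1 (fun h => (mem_E_of_ne p hpo).2 (h ▸ hw))
  · rw [hw] at hJw
    exact hJw

include hT hJ hone hv₀S in
lemma pathUnique : ∀ {x y : {f // f ∈ (E \ S) ∪ ({o} : Finset (Finset A))}}
    (P₁ P₂ : (G' S o G v₀).Path x y), P₁ = P₂ := by
  intro x y P₁ P₂
  by_cases hx : x = vo E S o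
  · subst hx
    exact Subtype.ext (uniq_from_vo hT hJ hone hv₀S P₁.1 P₂.1 P₁.2 P₂.2)
  by_cases hy : y = vo E S o
  · subst hy
    apply Subtype.ext
    apply reverse_inj
    exact uniq_from_vo hT hJ hone hv₀S _ _ P₁.2.reverse P₂.2.reverse
  by_cases h1 : vo E S o ∈ P₁.1.support
  · by_cases h2 : vo E S o ∈ P₂.1.support
    · -- both pass through vo
      have hBeq : P₁.1.dropUntil _ h1 = P₂.1.dropUntil _ h2 :=
        uniq_from_vo hT hJ hone hv₀S _ _ (P₁.2.dropUntil h1) (P₂.2.dropUntil h2)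
      have hAeq : P₁.1.takeUntil _ h1 = P₂.1.takeUntil _ h2 := by
        apply reverse_inj
        exact uniq_from_vo hT hJ hone hv₀S _ _
          (P₁.2.takeUntil h1).reverse (P₂.2.takeUntil h2).reverse
      apply Subtype.ext
      rw [← P₁.1.take_spec h1, ← P₂.1.take_spec h2, hAeq, hBeq]
    · exact absurd (comp_eq P₂.1 (avoid_of_not_mem h2))
        (comp_ne hv₀S P₁.1 P₁.2 hx hy h1)
  · by_cases h2 : vo E S o ∈ P₂.1.support
    · exact absurd (comp_eq P₁.1 (avoid_of_not_mem h1))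
        (comp_ne hv₀S P₂.1 P₂.2 hx hy h2)
    · -- neither passes through vo
      have hav₁ := avoid_of_not_mem h1
      have hav₂ := avoid_of_not_mem h2
      obtain ⟨W₁, hW₁⟩ := transfer P₁.1 hav₁
      obtain ⟨W₂, hW₂⟩ := transfer P₂.1 hav₂
      obtain ⟨Wg₁, hs₁, hp₁⟩ := toGpath W₁ (by rw [hW₁]; exact psi_support_nodup P₁.2 hav₁)
      obtain ⟨Wg₂, hs₂, hp₂⟩ := toGpath W₂ (by rw [hW₂]; exact psi_support_nodup P₂.2 hav₂)
      have : (⟨Wg₁, hp₁⟩ : G.Path _ _) = ⟨Wg₂, hp₂⟩ := hT.IsAcyclic.path_unique _ _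
      have hWg : Wg₁ = Wg₂ := congrArg Subtype.val this
      apply Subtype.ext
      apply walk_eq_of_support_eq
      have hmap : P₁.1.support.map (psi v₀) = P₂.1.support.map (psi v₀) := by
        rw [← hW₁, ← hW₂, ← hs₁, ← hs₂, hWg]
      calc P₁.1.support = (P₁.1.support.map (psi v₀)).map (phi S o) := (map_back _ hav₁).symm
        _ = (P₂.1.support.map (psi v₀)).map (phi S o) := by rw [hmap]
        _ = P₂.1.support := map_back _ hav₂

end WithTree

end Main
end Stmt7

open Stmt7 SimpleGraph in
/-- If `S = {e₁, ..., e_n}` (`n ≥ 2`) is a set of distinct ears of an acyclic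
hypergraph `H` all having the same overlap `o`, then the hypergraph with
hyperedge set `(E(H) \ S) ∪ {o}` is acyclic. -/
theorem stmt_7 (E : Finset (Finset A)) (hE : HGAcyclic E)
    (S : Finset (Finset A)) (hS : S ⊆ E) (hcard : 2 ≤ S.card)
    (o : Finset A) (hear : ∀ e ∈ S, IsEar E e) (hov : ∀ e ∈ S, overlap E e = o) :
    HGAcyclic ((E \ S) ∪ {o}) := by
  classical
  obtain ⟨G, hT, hJ⟩ := hE
  have hSne : S.Nonempty := Finset.card_pos.1 (lt_of_lt_of_le (by norm_num) hcard)
  obtain ⟨s₀, hs₀⟩ := hSne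
  set v₀ : {f // f ∈ E} := ⟨s₀, hS hs₀⟩ with hv₀
  have hv₀S : v₀.1 ∈ S := hs₀
  have hone : ∀ e ∈ S, o ⊆ e := fun e he => by
    rw [← hov e he]; exact Finset.inter_subset_left
  have hint : ∀ e ∈ S, ∀ f ∈ E, f ≠ e → e ∩ f ⊆ o := fun e he f hf hne => by
    rw [← hov e he, overlap]
    exact Finset.inter_subset_inter (Finset.Subset.refl e)
      (Finset.le_sup (f := id) (Finset.mem_erase.2 ⟨hne, hf⟩))
  refine ⟨G' S o G v₀, ⟨G'_connected hT.isConnected (fun h => h.1 hv₀S),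
    isAcyclic_of_path_unique (fun v w p q => pathUnique hT hJ hone hv₀S p q)⟩, ?_⟩
  intro p q W hW s hs
  by_cases hvoW : vo E S o ∈ W.support
  · by_cases hp : p = vo E S o
    · subst hp
      exact subL hT hJ hone hv₀S W hW s hs
    · by_cases hq : q = vo E S o
      · subst hq
        have := subL hT hJ hone hv₀S W.reverse hW.reverse s
          (by rw [Walk.support_reverse, List.mem_reverse]; exact hs)
        rw [Finset.inter_comm]
        exact this
      · have hpq := inter_sub_o hT hJ hv₀S hS hint W hW hp hq hvoW
        rw [← W.take_spec hvoW, Walk.support_append, List.mem_append] at hs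
        rcases hs with hsa | hsb
        · have := subL hT hJ hone hv₀S (W.takeUntil _ hvoW).reverse
            (hW.takeUntil hvoW).reverse s
            (by rw [Walk.support_reverse, List.mem_reverse]; exact hsa)
          exact subset_trans (Finset.subset_inter hpq Finset.inter_subset_left) this
        · have := subL hT hJ hone hv₀S (W.dropUntil _ hvoW) (hW.dropUntil hvoW) s
            (List.mem_of_mem_tail hsb)
          exact subset_trans (Finset.subset_inter hpq Finset.inter_subset_right) this
  · have hav := avoid_of_not_mem hvoW
    obtain ⟨W₂, hW₂⟩ := transfer W hav
    obtain ⟨Wg, hsup, hpath⟩ := toGpath W₂ (by rw [hW₂]; exact psi_support_nodup hW hav)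
    have hpo : p.1 ≠ o := hav p (Walk.start_mem_support _)
    have hqo : q.1 ≠ o := hav q (Walk.end_mem_support _)
    have hres := hJ _ _ Wg hpath (psi v₀ s)
      (by rw [hsup, hW₂]; exact List.mem_map_of_mem hs)
    rw [psi_val v₀ p hpo, psi_val v₀ q hqo, psi_val v₀ s (hav s hs)] at hres
    exact hres
end

section
/- Let T_1 and T_2 be two join trees rooted at q_1 and q_2 respectively, with disjoint vertex sets, such that for all vertices q_1' of T_1 and q_2' of T_2, χ(q_1') ∩ χ(q_2') ⊆ χ(q_1) and χ(q_1') ∩ χ(q_2') ⊆ χ(q_2). Then the tree T' obtained by adding an edge between q_1 and q_2 (making q_2 a child of q_1) satisfies the connectedness condition. -/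
/-- The connectedness condition for a labeled tree. -/
def connCond {V A : Type*} (G : SimpleGraph V) (χ : V → Set A) : Prop :=
  ∀ (p q : V) (W : G.Walk p q), W.IsPath → ∀ s ∈ W.support, χ p ∩ χ q ⊆ χ s

section Aux

variable {V₁ V₂ : Type*} {G₁ : SimpleGraph V₁} {G₂ : SimpleGraph V₂} {q₁ : V₁} {q₂ : V₂}

private def glue (G₁ : SimpleGraph V₁) (G₂ : SimpleGraph V₂) (q₁ : V₁) (q₂ : V₂) :
    SimpleGraph (V₁ ⊕ V₂) :=
  SimpleGraph.fromRel (fun x y : V₁ ⊕ V₂ =>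
    (∃ a b, x = Sum.inl a ∧ y = Sum.inl b ∧ G₁.Adj a b) ∨
    (∃ a b, x = Sum.inr a ∧ y = Sum.inr b ∧ G₂.Adj a b) ∨
    (x = Sum.inl q₁ ∧ y = Sum.inr q₂))

private lemma glue_adj {x y : V₁ ⊕ V₂} (h : (glue G₁ G₂ q₁ q₂).Adj x y) :
    (∃ a b, x = Sum.inl a ∧ y = Sum.inl b ∧ G₁.Adj a b) ∨
    (∃ a b, x = Sum.inr a ∧ y = Sum.inr b ∧ G₂.Adj a b) ∨
    (x = Sum.inl q₁ ∧ y = Sum.inr q₂) ∨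
    (x = Sum.inr q₂ ∧ y = Sum.inl q₁) := by
  obtain ⟨hne, h | h⟩ := h
  · rcases h with ⟨a, b, rfl, rfl, hab⟩ | ⟨a, b, rfl, rfl, hab⟩ | ⟨rfl, rfl⟩
    · exact Or.inl ⟨a, b, rfl, rfl, hab⟩
    · exact Or.inr (Or.inl ⟨a, b, rfl, rfl, hab⟩)
    · exact Or.inr (Or.inr (Or.inl ⟨rfl, rfl⟩))
  · rcases h with ⟨a, b, rfl, rfl, hab⟩ | ⟨a, b, rfl, rfl, hab⟩ | ⟨rfl, rfl⟩
    · exact Or.inl ⟨b, a, rfl, rfl, hab.symm⟩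
    · exact Or.inr (Or.inl ⟨b, a, rfl, rfl, hab.symm⟩)
    · exact Or.inr (Or.inr (Or.inr ⟨rfl, rfl⟩))

private lemma glue_key {x y : V₁ ⊕ V₂} (W : (glue G₁ G₂ q₁ q₂).Walk x y)
    (hW : W.support.Nodup) :
    (∀ a b, x = Sum.inl a → y = Sum.inl b →
      ∃ W₁ : G₁.Walk a b, W.support = W₁.support.map Sum.inl) ∧
    (∀ a b, x = Sum.inr a → y = Sum.inr b →
      ∃ W₂ : G₂.Walk a b, W.support = W₂.support.map Sum.inr) ∧
    (∀ a b, x = Sum.inl a → y = Sum.inr b →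
      ∃ (W₁ : G₁.Walk a q₁) (W₂ : G₂.Walk q₂ b),
        W.support = W₁.support.map Sum.inl ++ W₂.support.map Sum.inr) ∧
    (∀ a b, x = Sum.inr a → y = Sum.inl b →
      ∃ (W₂ : G₂.Walk a q₂) (W₁ : G₁.Walk q₁ b),
        W.support = W₂.support.map Sum.inr ++ W₁.support.map Sum.inl) := by
  induction W with
  | nil =>
    refine ⟨?_, ?_, ?_, ?_⟩
    · rintro a b rfl h
      cases Sum.inl_injective h
      exact ⟨SimpleGraph.Walk.nil, rfl⟩
    · rintro a b rfl h
      cases Sum.inr_injective h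
      exact ⟨SimpleGraph.Walk.nil, rfl⟩
    · rintro a b rfl h; exact absurd h (by simp)
    · rintro a b rfl h; exact absurd h (by simp)
  | cons h W ih =>
    rename_i u v w
    rw [SimpleGraph.Walk.support_cons, List.nodup_cons] at hW
    obtain ⟨hnotmem, hnd⟩ := hW
    have IH := ih hnd
    rcases glue_adj h with ⟨a, b, rfl, rfl, hab⟩ | ⟨a, b, rfl, rfl, hab⟩ |
      ⟨rfl, rfl⟩ | ⟨rfl, rfl⟩
    · -- edge inside G₁
      refine ⟨?_, ?_, ?_, ?_⟩
      · rintro a' c heq hw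
        cases Sum.inl_injective heq
        obtain ⟨W₁, hs⟩ := IH.1 b c rfl hw
        exact ⟨SimpleGraph.Walk.cons hab W₁, by simp [hs]⟩
      · rintro a' c h'; exact absurd h' (by simp)
      · rintro a' c heq hw
        cases Sum.inl_injective heq
        obtain ⟨W₁, W₂, hs⟩ := IH.2.2.1 b c rfl hw
        exact ⟨SimpleGraph.Walk.cons hab W₁, W₂, by simp [hs]⟩
      · rintro a' c h'; exact absurd h' (by simp)
    · -- edge inside G₂
      refine ⟨?_, ?_, ?_, ?_⟩
      · rintro a' c h'; exact absurd h' (by simp)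
      · rintro a' c heq hw
        cases Sum.inr_injective heq
        obtain ⟨W₂, hs⟩ := IH.2.1 b c rfl hw
        exact ⟨SimpleGraph.Walk.cons hab W₂, by simp [hs]⟩
      · rintro a' c h'; exact absurd h' (by simp)
      · rintro a' c heq hw
        cases Sum.inr_injective heq
        obtain ⟨W₂, W₁, hs⟩ := IH.2.2.2 b c rfl hw
        exact ⟨SimpleGraph.Walk.cons hab W₂, W₁, by simp [hs]⟩
    · -- crossing edge inl q₁ → inr q₂
      refine ⟨?_, ?_, ?_, ?_⟩
      · rintro a' c heq hw
        cases Sum.inl_injective heq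
        obtain ⟨W₂, W₁, hs⟩ := IH.2.2.2 q₂ c rfl hw
        exfalso
        apply hnotmem
        rw [hs]
        refine List.mem_append_right _ ?_
        exact List.mem_map_of_mem W₁.start_mem_support
      · rintro a' c h'; exact absurd h' (by simp)
      · rintro a' c heq hw
        cases Sum.inl_injective heq
        obtain ⟨W₂, hs⟩ := IH.2.1 q₂ c rfl hw
        exact ⟨SimpleGraph.Walk.nil, W₂, by simp [hs]⟩
      · rintro a' c h'; exact absurd h' (by simp)
    · -- crossing edge inr q₂ → inl q₁
      refine ⟨?_, ?_, ?_, ?_⟩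
      · rintro a' c h'; exact absurd h' (by simp)
      · rintro a' c heq hw
        cases Sum.inr_injective heq
        obtain ⟨W₁, W₂, hs⟩ := IH.2.2.1 q₁ c rfl hw
        exfalso
        apply hnotmem
        rw [hs]
        refine List.mem_append_right _ ?_
        exact List.mem_map_of_mem W₂.start_mem_support
      · rintro a' c h'; exact absurd h' (by simp)
      · rintro a' c heq hw
        cases Sum.inr_injective heq
        obtain ⟨W₁, hs⟩ := IH.1 q₁ c rfl hw
        exact ⟨SimpleGraph.Walk.nil, W₁, by simp [hs]⟩

end Aux

/-- Let `T₁` and `T₂` be two join trees rooted at `q₁` and `q₂` respectively,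
with disjoint vertex sets (realized as a sum type), each satisfying the
connectedness condition, and such that for all vertices `q₁'` of `T₁` and
`q₂'` of `T₂`, `χ(q₁') ∩ χ(q₂') ⊆ χ(q₁)` and `χ(q₁') ∩ χ(q₂') ⊆ χ(q₂)`.
Then the tree obtained by adding an edge between `q₁` and `q₂` satisfies the
connectedness condition. -/
theorem stmt_14 {V₁ V₂ A : Type*} (G₁ : SimpleGraph V₁) (G₂ : SimpleGraph V₂)
    (h₁ : G₁.IsTree) (h₂ : G₂.IsTree) (q₁ : V₁) (q₂ : V₂)
    (χ₁ : V₁ → Set A) (χ₂ : V₂ → Set A)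
    (hc₁ : connCond G₁ χ₁) (hc₂ : connCond G₂ χ₂)
    (hcap : ∀ (p₁ : V₁) (p₂ : V₂),
      χ₁ p₁ ∩ χ₂ p₂ ⊆ χ₁ q₁ ∧ χ₁ p₁ ∩ χ₂ p₂ ⊆ χ₂ q₂) :
    connCond
      (SimpleGraph.fromRel (fun x y : V₁ ⊕ V₂ =>
        (∃ a b, x = Sum.inl a ∧ y = Sum.inl b ∧ G₁.Adj a b) ∨
        (∃ a b, x = Sum.inr a ∧ y = Sum.inr b ∧ G₂.Adj a b) ∨
        (x = Sum.inl q₁ ∧ y = Sum.inr q₂)))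
      (Sum.elim χ₁ χ₂) := by
  intro p q W hWp s hs
  have hnd : W.support.Nodup := hWp.support_nodup
  have key := glue_key (G₁ := G₁) (G₂ := G₂) (q₁ := q₁) (q₂ := q₂) W hnd
  match p, q with
  | Sum.inl a, Sum.inl b =>
    obtain ⟨W₁, hsupp⟩ := key.1 a b rfl rfl
    erw [hsupp] at hs hnd
    obtain ⟨s₁, hs₁, rfl⟩ := List.mem_map.mp hs
    have hW₁ : W₁.IsPath :=
      (SimpleGraph.Walk.isPath_def _).mpr (hnd.of_map)
    exact hc₁ a b W₁ hW₁ s₁ hs₁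
  | Sum.inr a, Sum.inr b =>
    obtain ⟨W₂, hsupp⟩ := key.2.1 a b rfl rfl
    erw [hsupp] at hs hnd
    obtain ⟨s₂, hs₂, rfl⟩ := List.mem_map.mp hs
    have hW₂ : W₂.IsPath :=
      (SimpleGraph.Walk.isPath_def _).mpr (hnd.of_map)
    exact hc₂ a b W₂ hW₂ s₂ hs₂
  | Sum.inl a, Sum.inr b =>
    obtain ⟨W₁, W₂, hsupp⟩ := key.2.2.1 a b rfl rfl
    erw [hsupp] at hs hnd
    have hnd₁ : W₁.IsPath :=
      (SimpleGraph.Walk.isPath_def _).mpr ((hnd.of_append_left).of_map)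
    have hnd₂ : W₂.IsPath :=
      (SimpleGraph.Walk.isPath_def _).mpr ((hnd.of_append_right).of_map)
    rcases List.mem_append.mp hs with hmem | hmem
    · obtain ⟨s₁, hs₁, rfl⟩ := List.mem_map.mp hmem
      have h1 : χ₁ a ∩ χ₂ b ⊆ χ₁ a ∩ χ₁ q₁ := fun z hz =>
        ⟨hz.1, (hcap a b).1 hz⟩
      exact fun z hz => hc₁ a q₁ W₁ hnd₁ s₁ hs₁ (h1 hz)
    · obtain ⟨s₂, hs₂, rfl⟩ := List.mem_map.mp hmem
      have h2 : χ₁ a ∩ χ₂ b ⊆ χ₂ q₂ ∩ χ₂ b := fun z hz =>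
        ⟨(hcap a b).2 hz, hz.2⟩
      exact fun z hz => hc₂ q₂ b W₂ hnd₂ s₂ hs₂ (h2 hz)
  | Sum.inr a, Sum.inl b =>
    obtain ⟨W₂, W₁, hsupp⟩ := key.2.2.2 a b rfl rfl
    erw [hsupp] at hs hnd
    have hnd₂ : W₂.IsPath :=
      (SimpleGraph.Walk.isPath_def _).mpr ((hnd.of_append_left).of_map)
    have hnd₁ : W₁.IsPath :=
      (SimpleGraph.Walk.isPath_def _).mpr ((hnd.of_append_right).of_map)
    rcases List.mem_append.mp hs with hmem | hmem
    · obtain ⟨s₂, hs₂, rfl⟩ := List.mem_map.mp hmem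
      have h2 : χ₂ a ∩ χ₁ b ⊆ χ₂ a ∩ χ₂ q₂ := fun z hz =>
        ⟨hz.1, (hcap b a).2 ⟨hz.2, hz.1⟩⟩
      exact fun z hz => hc₂ a q₂ W₂ hnd₂ s₂ hs₂ (h2 hz)
    · obtain ⟨s₁, hs₁, rfl⟩ := List.mem_map.mp hmem
      have h1 : χ₂ a ∩ χ₁ b ⊆ χ₁ q₁ ∩ χ₁ b := fun z hz =>
        ⟨(hcap b a).1 ⟨hz.2, hz.1⟩, hz.2⟩
      exact fun z hz => hc₁ q₁ b W₁ hnd₁ s₁ hs₁ (h1 hz)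
end

section
/- Every Prüfer sequence of length n−2 over the alphabet {1,...,n} decodes to a unique labeled tree on n vertices, and distinct sequences decode to distinct trees; hence there are exactly n^(n−2) labeled trees on n vertices (Cayley's formula). -/
namespace CayleyAux
open scoped Classical

open Function SimpleGraph

variable {V : Type*}

section Basic

variable (f : V → V) (r : V)

noncomputable def ht (hf : ∀ v, ∃ k, f^[k] v = r) (v : V) : ℕ := Nat.find (hf v)

variable {f r}

lemma ht_spec (hf : ∀ v, ∃ k, f^[k] v = r) (v : V) : f^[ht f r hf v] v = r :=
  Nat.find_spec (hf v)

lemma ht_le (hf : ∀ v, ∃ k, f^[k] v = r) {v : V} {k : ℕ} (h : f^[k] v = r) :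
    ht f r hf v ≤ k := Nat.find_le h

@[simp] lemma ht_root (hf : ∀ v, ∃ k, f^[k] v = r) : ht f r hf r = 0 :=
  Nat.le_zero.mp (ht_le hf (by simp))

lemma ht_eq_zero_iff (hf : ∀ v, ∃ k, f^[k] v = r) {v : V} :
    ht f r hf v = 0 ↔ v = r := by
  constructor
  · intro h
    have := ht_spec hf v
    rwa [h, Function.iterate_zero_apply] at this
  · rintro rfl; simp

lemma ht_fv (hf : ∀ v, ∃ k, f^[k] v = r) {v : V} (hv : v ≠ r) :
    ht f r hf v = ht f r hf (f v) + 1 := by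
  have h1 : ht f r hf v ≤ ht f r hf (f v) + 1 := by
    apply ht_le
    rw [Function.iterate_succ_apply]
    exact ht_spec hf (f v)
  have h0 : ht f r hf v ≠ 0 := fun h => hv ((ht_eq_zero_iff hf).mp h)
  have h2 : ht f r hf (f v) ≤ ht f r hf v - 1 := by
    apply ht_le
    have := ht_spec hf v
    rwa [show ht f r hf v = (ht f r hf v - 1) + 1 by omega,
      Function.iterate_succ_apply] at this
  omega

lemma iterate_periodic {v : V} {p : ℕ} (h : f^[p] v = v) (t : ℕ) : f^[p * t] v = v := by
  rw [Function.iterate_mul]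
  exact Function.iterate_fixed h t

lemma not_periodic (hr : f r = r) (hf : ∀ v, ∃ k, f^[k] v = r) {v : V} (hv : v ≠ r)
    {p : ℕ} (hp : 0 < p) : f^[p] v ≠ v := by
  intro h
  obtain ⟨m, hm⟩ := hf v
  have h1 : f^[p * m] v = v := iterate_periodic h m
  have h2 : f^[p * m] v = r := by
    have : p * m = (p * m - m) + m := by
      have : m ≤ p * m := Nat.le_mul_of_pos_left m hp
      omega
    rw [this, Function.iterate_add_apply, hm]
    exact Function.iterate_fixed hr _
  exact hv (h1 ▸ h2 ▸ rfl)

end Basic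

section Graph

variable (f : V → V) (r : V)

def toGraph : SimpleGraph V where
  Adj u v := u ≠ v ∧ ((u ≠ r ∧ f u = v) ∨ (v ≠ r ∧ f v = u))
  symm := by
    constructor
    rintro u v ⟨hne, h | h⟩
    · exact ⟨hne.symm, Or.inr h⟩
    · exact ⟨hne.symm, Or.inl h⟩
  loopless := by constructor; rintro u ⟨hne, -⟩; exact hne rfl

variable {f r}

lemma toGraph_adj {u v : V} :
    (toGraph f r).Adj u v ↔ u ≠ v ∧ ((u ≠ r ∧ f u = v) ∨ (v ≠ r ∧ f v = u)) := Iff.rfl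

lemma adj_self (hf : ∀ v, ∃ k, f^[k] v = r) {v : V} (hv : v ≠ r) :
    (toGraph f r).Adj v (f v) := by
  refine ⟨fun h => ?_, Or.inl ⟨hv, rfl⟩⟩
  have := ht_fv hf hv
  rw [← h] at this
  omega

lemma reachable_root (hf : ∀ v, ∃ k, f^[k] v = r) (v : V) :
    (toGraph f r).Reachable v r := by
  suffices H : ∀ (k) (v : V), ht f r hf v ≤ k → (toGraph f r).Reachable v r from
    H _ v le_rfl
  intro k
  induction k with
  | zero =>
    intro v hv
    have : v = r := (ht_eq_zero_iff hf).mp (Nat.le_zero.mp hv)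
    exact this ▸ Reachable.refl _
  | succ k ih =>
    intro v hv
    by_cases h : v = r
    · exact h ▸ Reachable.refl _
    · have := ht_fv hf h
      exact ((adj_self hf h).reachable).trans (ih (f v) (by omega))

lemma ht_le_walk_length (hf : ∀ v, ∃ k, f^[k] v = r) {G : SimpleGraph V}
    (hG : G = toGraph f r) {v w : V} (p : G.Walk v w) :
    ht f r hf v ≤ ht f r hf w + p.length := by
  subst hG
  induction p with
  | nil => simp
  | @cons u x w h q ih =>
    rcases h.2 with ⟨hu, hfu⟩ | ⟨hx, hfx⟩
    · rw [ht_fv hf hu, hfu]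
      simp only [Walk.length_cons]
      omega
    · have := ht_fv hf hx
      rw [hfx] at this
      simp only [Walk.length_cons]
      omega

lemma exists_walk_ht (hf : ∀ v, ∃ k, f^[k] v = r) :
    ∀ (k) (v : V), ht f r hf v = k → ∃ p : (toGraph f r).Walk v r, p.length = k := by
  intro k
  induction k with
  | zero =>
    intro v hv
    obtain rfl := (ht_eq_zero_iff hf).mp hv
    exact ⟨Walk.nil, rfl⟩
  | succ k ih =>
    intro v hv
    have hvr : v ≠ r := by
      intro h; rw [h, ht_root] at hv; omega
    have hfv : ht f r hf (f v) = k := by have := ht_fv hf hvr; omega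
    obtain ⟨p, hp⟩ := ih (f v) hfv
    exact ⟨Walk.cons (adj_self hf hvr) p, by simp [hp]⟩

lemma toGraph_isBridge (hr : f r = r) (hf : ∀ v, ∃ k, f^[k] v = r) {v : V} (hv : v ≠ r) :
    (toGraph f r).IsBridge s(v, f v) := by
  rw [isBridge_iff]
  intro hreach
  -- the set of vertices whose f-orbit passes through v
  set S : V → Prop := fun w => ∃ k, f^[k] w = v with hS
  have hSv : S v := ⟨0, rfl⟩
  have hSfv : ¬ S (f v) := by
    rintro ⟨k, hk⟩
    have : f^[k + 1] v = v := by rw [Function.iterate_succ_apply, hk]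
    exact not_periodic hr hf hv (Nat.succ_pos k) this
  -- edges other than s(v, f v) preserve S
  have step : ∀ a b : V, S a → (toGraph f r).Adj a b → s(a, b) ≠ s(v, f v) → S b := by
    rintro a b ⟨k, hk⟩ hab hne
    rcases hab.2 with ⟨ha, hfa⟩ | ⟨hb, hfb⟩
    · rcases Nat.eq_zero_or_pos k with rfl | hkpos
      · simp only [Function.iterate_zero_apply] at hk
        subst hk
        exact absurd (by rw [hfa]) hne
      · obtain ⟨j, rfl⟩ : ∃ j, k = j + 1 := ⟨k - 1, by omega⟩
        refine ⟨j, ?_⟩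
        rw [← hfa, ← Function.iterate_succ_apply]
        exact hk
    · exact ⟨k + 1, by rw [Function.iterate_succ_apply, hfb, hk]⟩
  obtain ⟨p⟩ := hreach
  have key : ∀ (a w : V) (q : ((toGraph f r) \ fromEdgeSet {s(v, f v)}).Walk a w), S a → S w := by
    intro a w q
    induction q with
    | nil => exact id
    | @cons x y z h q ih =>
      intro hx
      have hGadj : (toGraph f r).Adj x y := h.1
      have hne : s(x, y) ≠ s(v, f v) := by
        intro hxy
        exact h.2 ⟨hxy, hGadj.ne⟩
      exact ih (step x y hx hGadj hne)
  exact hSfv (key v (f v) p hSv)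

theorem toGraph_isTree [Nonempty V] (hr : f r = r) (hf : ∀ v, ∃ k, f^[k] v = r) :
    (toGraph f r).IsTree := by
  constructor
  · refine ⟨fun u w => ?_⟩
    exact (reachable_root hf u).trans (reachable_root hf w).symm
  · rw [isAcyclic_iff_forall_adj_isBridge]
    intro u w h
    rcases h.2 with ⟨hu, hfu⟩ | ⟨hw, hfw⟩
    · exact hfu ▸ toGraph_isBridge hr hf hu
    · rw [Sym2.eq_swap]
      exact hfw ▸ toGraph_isBridge hr hf hw

theorem toGraph_injective {g : V → V}
    (hrf : f r = r) (hf : ∀ v, ∃ k, f^[k] v = r)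
    (hrg : g r = r) (hg : ∀ v, ∃ k, g^[k] v = r)
    (h : toGraph f r = toGraph g r) : f = g := by
  have hteq : ∀ v, ht f r hf v = ht g r hg v := by
    intro v
    apply le_antisymm
    · obtain ⟨p, hp⟩ := exists_walk_ht hg (ht g r hg v) v rfl
      have := ht_le_walk_length hf h.symm p
      simp only [ht_root] at this
      omega
    · obtain ⟨p, hp⟩ := exists_walk_ht hf (ht f r hf v) v rfl
      have := ht_le_walk_length hg h p
      simp only [ht_root] at this
      omega
  funext v
  by_cases hv : v = r
  · rw [hv, hrf, hrg]
  · have hadj : (toGraph g r).Adj v (f v) := h ▸ adj_self hf hv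
    rcases hadj.2 with ⟨-, hgv⟩ | ⟨hfvr, hgfv⟩
    · exact hgv.symm
    · exfalso
      have h1 : ht g r hg (f v) = ht g r hg v + 1 := by
        rw [ht_fv hg hfvr, hgfv]
      have h2 : ht f r hf v = ht f r hf (f v) + 1 := ht_fv hf hv
      rw [hteq, hteq] at h2
      omega

end Graph
section Surj

variable [Fintype V] [DecidableEq V]

theorem toGraph_surjective (G : SimpleGraph V) (hG : G.IsTree) (r : V) :
    ∃ f : V → V, f r = r ∧ (∀ v, ∃ k, f^[k] v = r) ∧ toGraph f r = G := by
  classical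
  have hu := hG.existsUnique_path
  set pth : ∀ v : V, G.Walk v r := fun v => (hu v r).exists.choose with hpth
  have hpath : ∀ v, (pth v).IsPath := fun v => (hu v r).exists.choose_spec
  have huniq : ∀ (v) (q : G.Walk v r), q.IsPath → q = pth v := fun v q hq =>
    (hu v r).unique hq (hpath v)
  set f : V → V := fun v => if v = r then r else (pth v).getVert 1 with hf
  have hfr : f r = r := by simp [hf]
  have hnotnil : ∀ v : V, v ≠ r → ¬(pth v).Nil := fun v hv => Walk.not_nil_of_ne hv
  have hlenpos : ∀ v : V, v ≠ r → 0 < (pth v).length := by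
    intro v hv
    rw [← Walk.not_nil_iff_lt_length]
    exact hnotnil v hv
  have hadj : ∀ v : V, v ≠ r → G.Adj v (f v) := by
    intro v hv
    have := Walk.adj_getVert_succ (pth v) (hlenpos v hv)
    simpa [hf, hv, Walk.getVert_zero] using this
  have hlen : ∀ v : V, v ≠ r → (pth (f v)).length + 1 = (pth v).length := by
    intro v hv
    have hfv : f v = (pth v).getVert 1 := by simp [hf, hv]
    have hq : ((pth v).tail.copy hfv.symm rfl).IsPath := by
      rw [Walk.isPath_copy]
      exact (hpath v).tail
    have := huniq (f v) _ hq
    rw [← this, Walk.length_copy]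
    exact Walk.length_tail_add_one (hnotnil v hv)
  have hreach : ∀ v : V, ∃ k, f^[k] v = r := by
    suffices H : ∀ (n) (v : V), (pth v).length ≤ n → ∃ k, f^[k] v = r by
      intro v; exact H (pth v).length v le_rfl
    intro n
    induction n with
    | zero =>
      intro v hv
      have : v = r := by
        by_contra hvr
        have := hlenpos v hvr
        omega
      exact ⟨0, this⟩
    | succ n ih =>
      intro v hv
      by_cases hvr : v = r
      · exact ⟨0, hvr⟩
      · have := hlen v hvr
        obtain ⟨k, hk⟩ := ih (f v) (by omega)
        exact ⟨k + 1, by rw [Function.iterate_succ_apply, hk]⟩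
  refine ⟨f, hfr, hreach, ?_⟩
  have hle : toGraph f r ≤ G := by
    intro u w h
    rcases h.2 with ⟨hu', hfu⟩ | ⟨hw', hfw⟩
    · exact hfu ▸ hadj u hu'
    · exact (hfw ▸ hadj w hw').symm
  have htree : (toGraph f r).IsTree := by
    have : Nonempty V := ⟨r⟩
    exact toGraph_isTree hfr hreach
  have hcard1 := htree.card_edgeFinset
  have hcard2 := hG.card_edgeFinset
  have hsub : (toGraph f r).edgeFinset ⊆ G.edgeFinset := by
    rw [SimpleGraph.edgeFinset_subset_edgeFinset]
    exact hle
  have : (toGraph f r).edgeFinset = G.edgeFinset :=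
    Finset.eq_of_subset_of_card_le hsub (by omega)
  rwa [SimpleGraph.edgeFinset_inj] at this

noncomputable def rootedEquivTree (r : V) :
    {f : V → V // f r = r ∧ ∀ v, ∃ k, f^[k] v = r} ≃ {G : SimpleGraph V // G.IsTree} := by
  have : Nonempty V := ⟨r⟩
  refine Equiv.ofBijective
    (fun f => ⟨toGraph f.1 r, toGraph_isTree f.2.1 f.2.2⟩) ⟨?_, ?_⟩
  · rintro ⟨f, hf⟩ ⟨g, hg⟩ h
    simp only [Subtype.mk.injEq] at h ⊢
    exact toGraph_injective hf.1 hf.2 hg.1 hg.2 h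
  · rintro ⟨G, hG⟩
    obtain ⟨f, h1, h2, h3⟩ := toGraph_surjective G hG r
    exact ⟨⟨f, h1, h2⟩, Subtype.ext h3⟩

end Surj
section Periodic

variable [Fintype V] [DecidableEq V]

/-- The finset of periodic points of `f`. -/
noncomputable def pF (f : V → V) : Finset V :=
  (Set.toFinite {v : V | ∃ k, 0 < k ∧ f^[k] v = v}).toFinset

variable {f : V → V}

lemma mem_pF {v : V} : v ∈ pF f ↔ ∃ k, 0 < k ∧ f^[k] v = v := by
  simp [pF, Set.Finite.mem_toFinset]

lemma pF_map {v : V} (hv : v ∈ pF f) : f v ∈ pF f := by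
  rw [mem_pF] at hv ⊢
  obtain ⟨k, hk, hfk⟩ := hv
  exact ⟨k, hk, by rw [← Function.iterate_succ_apply, Function.iterate_succ_apply', hfk]⟩

lemma pF_injOn : Set.InjOn f (pF f) := by
  intro a ha b hb hab
  rw [Finset.mem_coe, mem_pF] at ha hb
  obtain ⟨p, hp, hpa⟩ := ha
  obtain ⟨q, hq, hqb⟩ := hb
  have h1 : f^[p * q] a = a := iterate_periodic hpa q
  have h2 : f^[q * p] b = b := iterate_periodic hqb p
  have hpq : 0 < p * q := Nat.mul_pos hp hq
  obtain ⟨N, hN⟩ : ∃ N, p * q = N + 1 := ⟨p * q - 1, by omega⟩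
  calc a = f^[p * q] a := h1.symm
    _ = f^[N] (f a) := by rw [hN, Function.iterate_succ_apply]
    _ = f^[N] (f b) := by rw [hab]
    _ = f^[q * p] b := by rw [Nat.mul_comm q p, hN, Function.iterate_succ_apply]
    _ = b := h2

lemma pF_image : (pF f).image f = pF f := by
  apply Finset.eq_of_subset_of_card_le
  · intro x hx
    simp only [Finset.mem_image] at hx
    obtain ⟨a, ha, rfl⟩ := hx
    exact pF_map ha
  · rw [Finset.card_image_of_injOn pF_injOn]

lemma reach_pF [Nonempty V] (v : V) : ∃ m, f^[m] v ∈ pF f := by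
  have : ¬ Function.Injective (fun i : Fin (Fintype.card V + 1) => f^[i.1] v) := by
    intro hinj
    have := Fintype.card_le_of_injective _ hinj
    simp at this
  rw [Function.not_injective_iff] at this
  obtain ⟨i, j, hij, hne⟩ := this
  rcases Nat.lt_or_ge i.1 j.1 with h | h
  · refine ⟨i.1, mem_pF.mpr ⟨j.1 - i.1, by omega, ?_⟩⟩
    rw [← Function.iterate_add_apply, show j.1 - i.1 + i.1 = j.1 by omega]
    exact hij.symm
  · have h' : i.1 ≠ j.1 := fun h => hne (Fin.ext h)
    refine ⟨j.1, mem_pF.mpr ⟨i.1 - j.1, by omega, ?_⟩⟩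
    rw [← Function.iterate_add_apply, show i.1 - j.1 + j.1 = i.1 by omega]
    exact hij

/-- every element of a finite f-closed set on which f is injective is periodic -/
lemma mem_pF_of_closed {S : Finset V} (hmap : ∀ x ∈ S, f x ∈ S)
    (hinj : Set.InjOn f S) {v : V} (hv : v ∈ S) : v ∈ pF f := by
  have hiter : ∀ i, f^[i] v ∈ S := by
    intro i
    induction i with
    | zero => simpa
    | succ i ih => rw [Function.iterate_succ_apply']; exact hmap _ ih
  have hni : ¬ Function.Injective
      (fun i : Fin (S.card + 1) => (⟨f^[i.1] v, hiter i.1⟩ : {x // x ∈ S})) := by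
    intro hinj'
    have := Fintype.card_le_of_injective _ hinj'
    simp [Fintype.card_coe] at this
  rw [Function.not_injective_iff] at hni
  obtain ⟨i, j, hij, hne⟩ := hni
  simp only [Subtype.mk.injEq] at hij
  have main : ∀ (a b : ℕ), a < b → f^[a] v = f^[b] v → v ∈ pF f := by
    intro a b hab hfab
    have key : ∀ c : ℕ, f^[c] v = f^[c + (b - a)] v → v = f^[b - a] v := by
      intro c
      induction c with
      | zero => intro h; simpa using h
      | succ c ih =>
        intro h
        apply ih
        apply hinj (hiter c) (hiter _)
        have h2 : f^[c + 1] v = f (f^[c] v) := Function.iterate_succ_apply' f c v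
        have h3 : f^[c + 1 + (b - a)] v = f (f^[c + (b - a)] v) := by
          rw [show c + 1 + (b - a) = (c + (b - a)) + 1 by omega]
          exact Function.iterate_succ_apply' f _ v
        rw [← h2, ← h3]
        exact h
    have := key a (by rw [show a + (b - a) = b by omega]; exact hfab)
    exact mem_pF.mpr ⟨b - a, by omega, this.symm⟩
  rcases Nat.lt_or_ge i.1 j.1 with h | h
  · exact main i.1 j.1 h hij
  · have h' : j.1 < i.1 := by
      rcases Nat.lt_or_ge j.1 i.1 with h2 | h2
      · exact h2
      · exact absurd (Fin.ext (le_antisymm h h2)) hne.symm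
    exact main j.1 i.1 h' hij.symm

end Periodic
section Joyal

variable [LinearOrder V] [Fintype V] [Nonempty V]

variable (f : V → V)

/-- number of periodic points -/
noncomputable def kk : ℕ := (pF f).card

lemma kk_pos : 0 < kk f := by
  obtain ⟨m, hm⟩ := reach_pF (f := f) (Classical.arbitrary V)
  exact Finset.card_pos.mpr ⟨_, hm⟩

/-- periodic points sorted -/
noncomputable def sig : Fin (kk f) ≃o {x // x ∈ pF f} := (pF f).orderIsoOfFin rfl

/-- the spine: image of sorted periodic points under f -/
noncomputable def dd (i : Fin (kk f)) : V := f ((sig f i : {x // x ∈ pF f}) : V)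

lemma dd_mem (i : Fin (kk f)) : dd f i ∈ pF f := pF_map (sig f i).2

lemma dd_inj : Function.Injective (dd f) := by
  intro i j h
  have h2 := pF_injOn (Finset.mem_coe.mpr (sig f i).2) (Finset.mem_coe.mpr (sig f j).2) h
  exact (sig f).injective (Subtype.ext h2)

noncomputable def ddEquiv : Fin (kk f) ≃ {x // x ∈ pF f} :=
  Equiv.ofBijective (fun i => ⟨dd f i, dd_mem f i⟩)
    ((Fintype.bijective_iff_injective_and_card _).mpr
      ⟨fun i j h => dd_inj f (congrArg Subtype.val h), by simp [Fintype.card_coe, kk]; exact Fintype.card_fin _⟩)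

noncomputable def idx (v : V) (hv : v ∈ pF f) : Fin (kk f) := (ddEquiv f).symm ⟨v, hv⟩

lemma dd_idx (v : V) (hv : v ∈ pF f) : dd f (idx f v hv) = v :=
  congrArg Subtype.val ((ddEquiv f).apply_symm_apply ⟨v, hv⟩)

lemma idx_dd (i : Fin (kk f)) (h : dd f i ∈ pF f) : idx f (dd f i) h = i := by
  have : (⟨dd f i, h⟩ : {x // x ∈ pF f}) = ddEquiv f i := rfl
  rw [idx, this, Equiv.symm_apply_apply]

lemma idx_lt (v : V) (hv : v ∈ pF f) : (idx f v hv).1 < kk f := (idx f v hv).2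

/-- the new parent function -/
noncomputable def gg : V → V := fun v =>
  if hv : v ∈ pF f then
    if (idx f v hv).1 = kk f - 1 then v
    else dd f ⟨((idx f v hv).1 + 1) % kk f, Nat.mod_lt _ (kk_pos f)⟩
  else f v

noncomputable def bb : V := dd f ⟨kk f - 1, by have := kk_pos f; omega⟩
noncomputable def aa : V := dd f ⟨0, kk_pos f⟩

lemma gg_of_not_mem {v : V} (hv : v ∉ pF f) : gg f v = f v := dif_neg hv

lemma gg_dd {i : Fin (kk f)} (h : i.1 < kk f - 1) :
    gg f (dd f i) = dd f ⟨i.1 + 1, by omega⟩ := by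
  simp only [gg]
  rw [dif_pos (dd_mem f i)]; simp only [idx_dd]; rw [if_neg (by omega)]
  congr 1
  exact Fin.ext (Nat.mod_eq_of_lt (by omega))

lemma gg_dd_last : gg f (bb f) = bb f := by
  rw [gg, dif_pos (show bb f ∈ pF f from dd_mem f _)]
  simp only [bb, idx_dd]; simp

lemma gg_iterate_dd (i : Fin (kk f)) : (gg f)^[kk f - 1 - i.1] (dd f i) = bb f := by
  have hk := kk_pos f
  suffices H : ∀ (n : ℕ) (i : Fin (kk f)), kk f - 1 - i.1 = n → (gg f)^[n] (dd f i) = bb f from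
    H _ i rfl
  intro n
  induction n with
  | zero =>
    intro i hi
    have : i.1 = kk f - 1 := by have := i.2; omega
    rw [Function.iterate_zero_apply, bb]
    congr 1
    exact Fin.ext this
  | succ n ih =>
    intro i hi
    have hlt : i.1 < kk f - 1 := by have := i.2; omega
    rw [Function.iterate_succ_apply, gg_dd f hlt]
    exact ih _ (by simp; omega)

lemma gg_reach_of_mem {v : V} (hv : v ∈ pF f) : ∃ m, (gg f)^[m] v = bb f := by
  obtain ⟨i, rfl⟩ : ∃ i, dd f i = v := ⟨idx f v hv, dd_idx f v hv⟩
  exact ⟨kk f - 1 - i.1, gg_iterate_dd f i⟩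

lemma gg_reach (v : V) : ∃ m, (gg f)^[m] v = bb f := by
  suffices H : ∀ (t : ℕ) (v : V), f^[t] v ∈ pF f → ∃ m, (gg f)^[m] v = bb f by
    obtain ⟨t, ht⟩ := reach_pF (f := f) v
    exact H t v ht
  intro t
  induction t with
  | zero =>
    intro v ht
    exact gg_reach_of_mem f (by simpa using ht)
  | succ t ih =>
    intro v ht
    by_cases hv : v ∈ pF f
    · exact gg_reach_of_mem f hv
    · have : f^[t] (f v) ∈ pF f := by
        rwa [← Function.iterate_succ_apply f t v]
      obtain ⟨m, hm⟩ := ih (f v) this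
      exact ⟨m + 1, by rwa [Function.iterate_succ_apply, gg_of_not_mem f hv]⟩

end Joyal
section Backward

variable [LinearOrder V] [Fintype V]

variable (g : V → V) (b a : V)

/-- length of the spine -/
noncomputable def mm (hg : ∀ v, ∃ k, g^[k] v = b) : ℕ := ht g b hg a

/-- spine sequence -/
def ee (i : ℕ) : V := g^[i] a

variable {g b a}

lemma ht_ee (hgb : g b = b) (hg : ∀ v, ∃ k, g^[k] v = b) {i : ℕ} (hi : i ≤ mm g b a hg) :
    ht g b hg (ee g a i) = mm g b a hg - i := by
  induction i with
  | zero =>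
    simp only [Nat.sub_zero]
    rfl
  | succ i ih =>
    have h1 : i ≤ mm g b a hg := by omega
    have h2 := ih h1
    have h3 : ee g a i ≠ b := by
      intro h
      rw [h, ht_root] at h2
      omega
    have h4 := ht_fv hg h3
    have h5 : ee g a (i + 1) = g (ee g a i) := Function.iterate_succ_apply' g i a
    rw [h5] at *
    omega

lemma ee_mm (hg : ∀ v, ∃ k, g^[k] v = b) : ee g a (mm g b a hg) = b := ht_spec hg a

lemma ee_zero : ee g a 0 = a := rfl

lemma ee_injOn (hgb : g b = b) (hg : ∀ v, ∃ k, g^[k] v = b) {i j : ℕ}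
    (hi : i ≤ mm g b a hg) (hj : j ≤ mm g b a hg) (h : ee g a i = ee g a j) : i = j := by
  have h1 := ht_ee hgb hg hi
  have h2 := ht_ee hgb hg hj
  rw [h] at h1
  omega

variable (g b a)

noncomputable def SSf (hg : ∀ v, ∃ k, g^[k] v = b) : Finset V :=
  (Finset.range (mm g b a hg + 1)).image (ee g a)

lemma card_SSf (hgb : g b = b) (hg : ∀ v, ∃ k, g^[k] v = b) :
    (SSf g b a hg).card = mm g b a hg + 1 := by
  rw [SSf, Finset.card_image_of_injOn, Finset.card_range]
  intro i hi j hj h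
  simp only [Finset.coe_range, Set.mem_Iio] at hi hj
  exact ee_injOn hgb hg (by omega) (by omega) h

lemma ee_mem_SSf (hg : ∀ v, ∃ k, g^[k] v = b) {i : ℕ} (hi : i ≤ mm g b a hg) :
    ee g a i ∈ SSf g b a hg := by
  rw [SSf]
  exact Finset.mem_image.mpr ⟨i, Finset.mem_range.mpr (by omega), rfl⟩

lemma b_mem_SSf (hg : ∀ v, ∃ k, g^[k] v = b) : b ∈ SSf g b a hg := by
  have h := ee_mem_SSf g b a hg (le_refl (mm g b a hg))
  rwa [ee_mm hg] at h

noncomputable def tauf (hgb : g b = b) (hg : ∀ v, ∃ k, g^[k] v = b) :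
    Fin (mm g b a hg + 1) ≃o {x // x ∈ SSf g b a hg} :=
  (SSf g b a hg).orderIsoOfFin (card_SSf g b a hgb hg)

noncomputable def ffn (hgb : g b = b) (hg : ∀ v, ∃ k, g^[k] v = b) : V → V := fun v =>
  if hv : v ∈ SSf g b a hg then ee g a ((tauf g b a hgb hg).symm ⟨v, hv⟩).1 else g v

lemma ffn_off (hgb : g b = b) (hg : ∀ v, ∃ k, g^[k] v = b) {v : V}
    (hv : v ∉ SSf g b a hg) : ffn g b a hgb hg v = g v := dif_neg hv

lemma ffn_tau (hgb : g b = b) (hg : ∀ v, ∃ k, g^[k] v = b) (j : Fin (mm g b a hg + 1)) :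
    ffn g b a hgb hg ((tauf g b a hgb hg j : {x // x ∈ SSf g b a hg}) : V) = ee g a j.1 := by
  have h := (tauf g b a hgb hg j).2
  simp only [ffn]
  rw [dif_pos h]
  congr 2
  have heq : (⟨((tauf g b a hgb hg j : {x // x ∈ SSf g b a hg}) : V), h⟩ :
      {x // x ∈ SSf g b a hg}) = tauf g b a hgb hg j := Subtype.ext rfl
  rw [heq, OrderIso.symm_apply_apply]

lemma ffn_mem (hgb : g b = b) (hg : ∀ v, ∃ k, g^[k] v = b) {v : V}
    (hv : v ∈ SSf g b a hg) : ffn g b a hgb hg v ∈ SSf g b a hg := by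
  obtain ⟨j, rfl⟩ : ∃ j, ((tauf g b a hgb hg j : {x // x ∈ SSf g b a hg}) : V) = v := by
    refine ⟨(tauf g b a hgb hg).symm ⟨v, hv⟩, ?_⟩
    rw [OrderIso.apply_symm_apply]
  rw [ffn_tau]
  exact ee_mem_SSf g b a hg (by have := ((tauf g b a hgb hg) j).1; omega)

lemma ffn_injOn (hgb : g b = b) (hg : ∀ v, ∃ k, g^[k] v = b) :
    Set.InjOn (ffn g b a hgb hg) (SSf g b a hg) := by
  intro u hu w hw h
  rw [Finset.mem_coe] at hu hw
  obtain ⟨i, rfl⟩ : ∃ i, ((tauf g b a hgb hg i : {x // x ∈ SSf g b a hg}) : V) = u :=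
    ⟨(tauf g b a hgb hg).symm ⟨u, hu⟩, by rw [OrderIso.apply_symm_apply]⟩
  obtain ⟨j, rfl⟩ : ∃ j, ((tauf g b a hgb hg j : {x // x ∈ SSf g b a hg}) : V) = w :=
    ⟨(tauf g b a hgb hg).symm ⟨w, hw⟩, by rw [OrderIso.apply_symm_apply]⟩
  rw [ffn_tau, ffn_tau] at h
  have : i = j := Fin.ext (ee_injOn hgb hg (by omega) (by omega) h)
  rw [this]

end Backward
lemma orderIsoOfFin_congr [LinearOrder V] {S₁ S₂ : Finset V} (h : S₁ = S₂) {k₁ k₂ : ℕ}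
    (h1 : S₁.card = k₁) (h2 : S₂.card = k₂) {i₁ : Fin k₁} {i₂ : Fin k₂} (hi : i₁.1 = i₂.1) :
    ((S₁.orderIsoOfFin h1 i₁ : {x // x ∈ S₁}) : V) = ((S₂.orderIsoOfFin h2 i₂ : {x // x ∈ S₂}) : V) := by
  subst h
  have hk : k₁ = k₂ := h1.symm.trans h2
  subst hk
  have : i₁ = i₂ := Fin.ext hi
  subst this
  rfl

/-- The type of doubly-marked rooted maps. -/
def TT (V : Type*) : Type _ :=
  {x : V × V × (V → V) // x.2.2 x.1 = x.1 ∧ ∀ v, ∃ m, (x.2.2)^[m] v = x.1}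

section RoundTrips

variable [LinearOrder V] [Fintype V] [Nonempty V]

noncomputable def joyalFwd (f : V → V) : TT V :=
  ⟨(bb f, aa f, gg f), gg_dd_last f, gg_reach f⟩

noncomputable def joyalBwd (x : TT V) : V → V :=
  ffn x.1.2.2 x.1.1 x.1.2.1 x.2.1 x.2.2

/-- the spine of the forward map, from below -/
lemma gg_iterate_aa (f : V → V) : ∀ (i : ℕ) (hi : i ≤ kk f - 1),
    (gg f)^[i] (aa f) = dd f ⟨i, by have := kk_pos f; omega⟩ := by
  intro i
  induction i with
  | zero =>
    intro hi
    rw [Function.iterate_zero_apply, aa]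
  | succ i ih =>
    intro hi
    rw [Function.iterate_succ_apply', ih (by omega), gg_dd f (i := ⟨i, by have := kk_pos f; omega⟩) (show i < kk f - 1 by omega)]

lemma mm_joyal (f : V → V) :
    mm (gg f) (bb f) (aa f) (gg_reach f) = kk f - 1 := by
  apply le_antisymm
  · apply ht_le
    have := gg_iterate_dd f ⟨0, kk_pos f⟩
    simpa [aa] using this
  · by_contra hlt
    push_neg at hlt
    have hspec : (gg f)^[mm (gg f) (bb f) (aa f) (gg_reach f)] (aa f) = bb f :=
      ht_spec (gg_reach f) (aa f)
    rw [gg_iterate_aa f (mm (gg f) (bb f) (aa f) (gg_reach f)) (Nat.le_of_lt hlt)] at hspec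
    unfold bb at hspec
    have h3 : mm (gg f) (bb f) (aa f) (gg_reach f) = kk f - 1 :=
      congrArg Fin.val (dd_inj f hspec)
    omega

lemma SSf_joyal (f : V → V) :
    SSf (gg f) (bb f) (aa f) (gg_reach f) = pF f := by
  ext x
  rw [SSf, Finset.mem_image]
  constructor
  · rintro ⟨i, hi, rfl⟩
    rw [Finset.mem_range, mm_joyal] at hi
    rw [ee, gg_iterate_aa f i (by omega)]
    exact dd_mem f _
  · intro hx
    refine ⟨(idx f x hx).1, ?_, ?_⟩
    · rw [Finset.mem_range, mm_joyal]
      have := (idx f x hx).2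
      have := kk_pos f
      omega
    · rw [ee, gg_iterate_aa f (idx f x hx).1 (by have := (idx f x hx).2; omega)]
      have : (⟨(idx f x hx).1, _⟩ : Fin (kk f)) = idx f x hx := Fin.ext rfl
      rw [this, dd_idx]

theorem joyal_left_inv (f : V → V) : joyalBwd (joyalFwd f) = f := by
  funext v
  show ffn (gg f) (bb f) (aa f) (gg_dd_last f) (gg_reach f) v = f v
  by_cases hv : v ∈ SSf (gg f) (bb f) (aa f) (gg_reach f)
  · set τ := tauf (gg f) (bb f) (aa f) (gg_dd_last f) (gg_reach f) with hτ
    obtain ⟨j, rfl⟩ : ∃ j, ((τ j : {x // x ∈ SSf (gg f) (bb f) (aa f) (gg_reach f)}) : V) = v :=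
      ⟨τ.symm ⟨v, hv⟩, by rw [OrderIso.apply_symm_apply]⟩
    rw [ffn_tau]
    have hj : j.1 ≤ kk f - 1 := by
      have h1 := j.2
      have h2 := mm_joyal f
      omega
    rw [ee, gg_iterate_aa f _ hj]
    have hτσ : ((τ j : {x // x ∈ SSf (gg f) (bb f) (aa f) (gg_reach f)}) : V) =
        ((sig f ⟨j.1, by have := kk_pos f; omega⟩ : {x // x ∈ pF f}) : V) := by
      apply orderIsoOfFin_congr (SSf_joyal f)
      rfl
    rw [hτσ, dd]
  · rw [ffn_off _ _ _ _ _ hv, gg_of_not_mem f (by rwa [SSf_joyal f] at hv)]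

end RoundTrips
section RT2

variable [LinearOrder V] [Fintype V] [Nonempty V]
variable (g : V → V) (b a : V) (hgb : g b = b) (hg : ∀ v, ∃ k, g^[k] v = b)

lemma pF_ffn : pF (ffn g b a hgb hg) = SSf g b a hg := by
  set f := ffn g b a hgb hg with hf
  apply Finset.Subset.antisymm
  · intro v hv
    by_contra hvS
    have hexists : ∃ t, f^[t] v ∈ SSf g b a hg := by
      obtain ⟨s, hs⟩ := hg v
      have A : ∀ (s : ℕ) (w : V), g^[s] w = b → ∃ t, f^[t] w ∈ SSf g b a hg := by
        intro s
        induction s with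
        | zero =>
          intro w hw
          have hwb : w = b := by simpa using hw
          refine ⟨0, ?_⟩
          simp only [Function.iterate_zero_apply]
          rw [hwb]
          exact b_mem_SSf g b a hg
        | succ s ih =>
          intro w hw
          by_cases hwS : w ∈ SSf g b a hg
          · exact ⟨0, by simpa using hwS⟩
          · have hgw : g^[s] (g w) = b := by rwa [← Function.iterate_succ_apply g s w]
            obtain ⟨t, ht'⟩ := ih (g w) hgw
            refine ⟨t + 1, ?_⟩
            rwa [Function.iterate_succ_apply, hf, ffn_off g b a hgb hg hwS]
      exact A s v hs
    have hspec : f^[Nat.find hexists] v ∈ SSf g b a hg := Nat.find_spec hexists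
    have ht0pos : 0 < Nat.find hexists := by
      rcases Nat.eq_zero_or_pos (Nat.find hexists) with h | h
      · rw [h] at hspec
        simp only [Function.iterate_zero_apply] at hspec
        exact absurd hspec hvS
      · exact h
    have closure : ∀ (s : ℕ) (u : V), u ∈ SSf g b a hg → f^[s] u ∈ SSf g b a hg := by
      intro s
      induction s with
      | zero => intro u hu; simpa using hu
      | succ s ih =>
        intro u hu
        rw [Function.iterate_succ_apply]
        exact ih _ (ffn_mem g b a hgb hg hu)
    obtain ⟨p, hp, hpv⟩ := mem_pF.mp hv
    have hN : f^[p * Nat.find hexists] v = v := iterate_periodic hpv _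
    have hmem : f^[p * Nat.find hexists] v ∈ SSf g b a hg := by
      rw [show p * Nat.find hexists = (p * Nat.find hexists - Nat.find hexists) +
        Nat.find hexists by
          have : Nat.find hexists ≤ p * Nat.find hexists := Nat.le_mul_of_pos_left _ hp
          omega, Function.iterate_add_apply]
      exact closure _ _ hspec
    rw [hN] at hmem
    exact hvS hmem
  · intro v hv
    exact mem_pF_of_closed (fun x hx => ffn_mem g b a hgb hg hx) (ffn_injOn g b a hgb hg) hv

lemma kk_ffn : kk (ffn g b a hgb hg) = mm g b a hg + 1 := by
  rw [kk, pF_ffn, card_SSf g b a hgb hg]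

lemma dd_ffn (i : Fin (kk (ffn g b a hgb hg))) :
    dd (ffn g b a hgb hg) i = ee g a i.1 := by
  have hi : i.1 < mm g b a hg + 1 := by
    have := i.2
    have h2 := kk_ffn g b a hgb hg
    omega
  have hτσ : ((sig (ffn g b a hgb hg) i : {x // x ∈ pF (ffn g b a hgb hg)}) : V) =
      ((tauf g b a hgb hg ⟨i.1, hi⟩ : {x // x ∈ SSf g b a hg}) : V) :=
    orderIsoOfFin_congr (pF_ffn g b a hgb hg) _ _ rfl
  rw [dd, hτσ, ffn_tau g b a hgb hg]

lemma bb_ffn : bb (ffn g b a hgb hg) = b := by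
  rw [bb, dd_ffn g b a hgb hg]
  show ee g a (kk (ffn g b a hgb hg) - 1) = b
  have h2 := kk_ffn g b a hgb hg
  rw [show kk (ffn g b a hgb hg) - 1 = mm g b a hg by omega]
  exact ee_mm hg

lemma aa_ffn : aa (ffn g b a hgb hg) = a := by
  rw [aa, dd_ffn g b a hgb hg]
  rfl

lemma gg_ffn : gg (ffn g b a hgb hg) = g := by
  funext v
  by_cases hv : v ∈ pF (ffn g b a hgb hg)
  · have hdd : dd (ffn g b a hgb hg) (idx (ffn g b a hgb hg) v hv) = v :=
      dd_idx (ffn g b a hgb hg) v hv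
    by_cases hlast : (idx (ffn g b a hgb hg) v hv).1 = kk (ffn g b a hgb hg) - 1
    · have hvb : v = b := by
        rw [← hdd, dd_ffn g b a hgb hg, hlast,
          show kk (ffn g b a hgb hg) - 1 = mm g b a hg from by
            have := kk_ffn g b a hgb hg; omega]
        exact ee_mm hg
      have h1 : v = bb (ffn g b a hgb hg) := by rw [bb_ffn g b a hgb hg, hvb]
      rw [h1, gg_dd_last, bb_ffn g b a hgb hg]
      exact hgb.symm
    · have hlt : (idx (ffn g b a hgb hg) v hv).1 < kk (ffn g b a hgb hg) - 1 := by
        have := (idx (ffn g b a hgb hg) v hv).2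
        omega
      rw [← hdd, gg_dd (ffn g b a hgb hg) hlt, dd_ffn g b a hgb hg, dd_ffn g b a hgb hg]
      show ee g a ((idx (ffn g b a hgb hg) v hv).1 + 1) = g (ee g a (idx (ffn g b a hgb hg) v hv).1)
      exact Function.iterate_succ_apply' g _ a
  · have hvS : v ∉ SSf g b a hg := by rwa [← pF_ffn g b a hgb hg]
    rw [gg_of_not_mem _ hv, ffn_off g b a hgb hg hvS]

theorem joyal_right_inv (x : TT V) : joyalFwd (joyalBwd x) = x := by
  obtain ⟨⟨b, a, g⟩, hgb, hg⟩ := x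
  show joyalFwd (ffn g b a hgb hg) = ⟨(b, a, g), hgb, hg⟩
  refine Subtype.ext ?_
  show (bb (ffn g b a hgb hg), aa (ffn g b a hgb hg), gg (ffn g b a hgb hg)) = (b, a, g)
  rw [bb_ffn g b a hgb hg, aa_ffn g b a hgb hg, gg_ffn g b a hgb hg]

noncomputable def joyalEquiv : (V → V) ≃ TT V :=
  ⟨joyalFwd, joyalBwd, joyal_left_inv, joyal_right_inv⟩

end RT2
section Count

variable [DecidableEq V]

lemma conj_iterate (g : V → V) (π : Equiv.Perm V) (hπ : ∀ x, π (π x) = x) :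
    ∀ (k : ℕ) (v : V), (⇑π ∘ g ∘ ⇑π)^[k] (π v) = π (g^[k] v) := by
  intro k
  induction k with
  | zero => intro v; simp
  | succ k ih =>
    intro v
    rw [Function.iterate_succ_apply, Function.iterate_succ_apply]
    have : (⇑π ∘ g ∘ ⇑π) (π v) = π (g v) := by simp [hπ]
    rw [this, ih]

lemma rooted_conj {g : V → V} {x : V} (y : V) (hgx : g x = x)
    (hg : ∀ v, ∃ k, g^[k] v = x) :
    (⇑(Equiv.swap x y) ∘ g ∘ ⇑(Equiv.swap x y)) y = y ∧
      ∀ v, ∃ k, (⇑(Equiv.swap x y) ∘ g ∘ ⇑(Equiv.swap x y))^[k] v = y := by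
  have hπ : ∀ z, Equiv.swap x y (Equiv.swap x y z) = z := fun z => Equiv.swap_apply_self x y z
  constructor
  · show Equiv.swap x y (g (Equiv.swap x y y)) = y
    rw [Equiv.swap_apply_right, hgx, Equiv.swap_apply_left]
  · intro v
    obtain ⟨k, hk⟩ := hg (Equiv.swap x y v)
    refine ⟨k, ?_⟩
    have h1 := conj_iterate g (Equiv.swap x y) hπ k (Equiv.swap x y v)
    rw [hπ] at h1
    rw [h1, hk, Equiv.swap_apply_left]

/-- Relabelling equivalence: doubly marked rooted maps vs pairs and maps rooted at `r₀`. -/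
noncomputable def ttEquiv (r₀ : V) :
    TT V ≃ V × V × {f : V → V // f r₀ = r₀ ∧ ∀ v, ∃ k, f^[k] v = r₀} where
  toFun x := ⟨x.1.1, Equiv.swap x.1.1 r₀ x.1.2.1,
    ⟨⇑(Equiv.swap x.1.1 r₀) ∘ x.1.2.2 ∘ ⇑(Equiv.swap x.1.1 r₀),
      rooted_conj r₀ x.2.1 x.2.2⟩⟩
  invFun y := ⟨(y.1, Equiv.swap y.1 r₀ y.2.1,
      ⇑(Equiv.swap y.1 r₀) ∘ y.2.2.1 ∘ ⇑(Equiv.swap y.1 r₀)), by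
    have h := rooted_conj (x := r₀) (y := y.1) y.2.2.2.1 y.2.2.2.2
    rw [Equiv.swap_comm r₀ y.1] at h
    exact h⟩
  left_inv := by
    rintro ⟨⟨b, a, g⟩, hgb, hg⟩
    refine Subtype.ext ?_
    show (b, Equiv.swap b r₀ (Equiv.swap b r₀ a), _) = (b, a, g)
    refine Prod.ext rfl (Prod.ext (Equiv.swap_apply_self b r₀ a) ?_)
    show ⇑(Equiv.swap b r₀) ∘ (⇑(Equiv.swap b r₀) ∘ g ∘ ⇑(Equiv.swap b r₀)) ∘
      ⇑(Equiv.swap b r₀) = g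
    funext v
    simp [Equiv.swap_apply_self]
  right_inv := by
    rintro ⟨b, a, g, hgr, hg⟩
    show (b, Equiv.swap b r₀ (Equiv.swap b r₀ a),
      (⟨⇑(Equiv.swap b r₀) ∘ (⇑(Equiv.swap b r₀) ∘ g ∘ ⇑(Equiv.swap b r₀)) ∘
        ⇑(Equiv.swap b r₀), _⟩ : {f : V → V // f r₀ = r₀ ∧ ∀ v, ∃ k, f^[k] v = r₀})) = (b, a, ⟨g, hgr, hg⟩)
    refine Prod.ext rfl (Prod.ext (Equiv.swap_apply_self b r₀ a) (Subtype.ext ?_))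
    funext v
    simp [Equiv.swap_apply_self]

end Count
end CayleyAux
lemma pow_helper (n : ℕ) (hn : 2 ≤ n) : n ^ n = n * (n * n ^ (n - 2)) := by
  obtain ⟨m, rfl⟩ : ∃ m, n = m + 2 := ⟨n - 2, by omega⟩
  simp only [Nat.add_sub_cancel]
  rw [pow_add]
  ring

/-- Every Prüfer sequence of length `n - 2` over the alphabet `{1, ..., n}`
decodes to a unique labeled tree on `n` vertices, distinct sequences decode to
distinct trees, and every labeled tree arises this way; hence there are exactly
`n ^ (n - 2)` labeled trees on `n` vertices (Cayley's formula). -/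
theorem stmt_19 (n : ℕ) (hn : 2 ≤ n) :
    ∃ decode : (Fin (n - 2) → Fin n) → {G : SimpleGraph (Fin n) // G.IsTree},
      Function.Bijective decode ∧
        Nat.card {G : SimpleGraph (Fin n) // G.IsTree} = n ^ (n - 2) := by
  classical
  have hpos : 0 < n := by omega
  set r₀ : Fin n := ⟨0, hpos⟩ with hr₀
  haveI : Nonempty (Fin n) := ⟨r₀⟩
  have e1 : {f : Fin n → Fin n // f r₀ = r₀ ∧ ∀ v, ∃ k, f^[k] v = r₀} ≃
      {G : SimpleGraph (Fin n) // G.IsTree} := CayleyAux.rootedEquivTree r₀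
  have e2 : (Fin n → Fin n) ≃ CayleyAux.TT (Fin n) := CayleyAux.joyalEquiv
  have e3 := CayleyAux.ttEquiv (V := Fin n) r₀
  have c1 : Nat.card (Fin n → Fin n) = n ^ n := by
    rw [Nat.card_fun]
    simp
  have c2 : Nat.card (CayleyAux.TT (Fin n)) = n ^ n := by
    rw [← Nat.card_congr e2, c1]
  have c3 : Nat.card (CayleyAux.TT (Fin n)) =
      n * (n * Nat.card {f : Fin n → Fin n // f r₀ = r₀ ∧ ∀ v, ∃ k, f^[k] v = r₀}) := by
    rw [Nat.card_congr e3, Nat.card_prod, Nat.card_prod]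
    simp
  have hR : Nat.card {f : Fin n → Fin n // f r₀ = r₀ ∧ ∀ v, ∃ k, f^[k] v = r₀} =
      n ^ (n - 2) := by
    have h : n * (n * Nat.card {f : Fin n → Fin n // f r₀ = r₀ ∧ ∀ v, ∃ k, f^[k] v = r₀}) =
        n * (n * n ^ (n - 2)) := by
      rw [← c3, c2]
      exact pow_helper n hn
    have h3 := Nat.eq_of_mul_eq_mul_left hpos h
    exact Nat.eq_of_mul_eq_mul_left hpos h3
  have hT : Nat.card {G : SimpleGraph (Fin n) // G.IsTree} = n ^ (n - 2) := by
    rw [← Nat.card_congr e1, hR]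
  have hcard : Nat.card (Fin (n - 2) → Fin n) =
      Nat.card {G : SimpleGraph (Fin n) // G.IsTree} := by
    rw [hT, Nat.card_fun]
    simp
  obtain ⟨e⟩ := Finite.card_eq.mp hcard
  exact ⟨e, e.bijective, hT⟩
end
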